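/- arXiv:2206.12135 — 5 statements merged into one kernel-verified Lean document; each statement's English description precedes it below -/
import Mathlib

section
/- There exists a first-order sentence φ over the vocabulary consisting of a single quaternary (arity-4) relation symbol such that the sequence Sp_φ(n) is not MC-finite. -/
open FirstOrder Language

/-- A purely relational language with relation symbols `Rel k` of arity `k`. -/
def relLang (Rel : ℕ → Type) : Language :=
  ⟨fun _ => Empty, Rel⟩

/-- A language with constant symbols indexed by `Fin ℓ`, relation symbols `Rel k`
of arity `k`, and no other non-logical symbols. -/
def cLang (ℓ : ℕ) (Rel : ℕ → Type) : Language :=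
  ⟨fun k => match k with | 0 => Fin ℓ | _ + 1 => Empty, Rel⟩

/-- The `relLang Rel`-structure on `M` determined by an interpretation `S`
of the relation symbols. -/
def relLang.mkStructure {Rel : ℕ → Type} {M : Type}
    (S : ∀ k, Rel k → (Fin k → M) → Prop) : (relLang Rel).Structure M where
  funMap := fun f _ => f.elim
  RelMap := fun {k} r v => S k r v

/-- The `cLang ℓ Rel`-structure on `M` determined by an interpretation `c` of the
constant symbols and an interpretation `S` of the relation symbols. -/
def cLang.mkStructure {ℓ : ℕ} {Rel : ℕ → Type} {M : Type}
    (c : Fin ℓ → M) (S : ∀ k, Rel k → (Fin k → M) → Prop) :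
    (cLang ℓ Rel).Structure M where
  funMap := fun {k} f _ =>
    match k, f with
    | 0, i => c i
  RelMap := fun {k} r v => S k r v

/-- `Sp_φ(n)`: the number of interpretations of the relation symbols on `[n]`
satisfying the sentence `φ` of a relational language. -/
noncomputable def spCount {Rel : ℕ → Type} (φ : (relLang Rel).Sentence) (n : ℕ) : ℕ :=
  Nat.card { S : ∀ k, Rel k → (Fin k → Fin n) → Prop //
    letI := relLang.mkStructure S
    Fin n ⊨ φ }

/-- `f_φ(n)`: the number of interpretations of the relation symbols on `[n + ℓ]`
satisfying `φ`, where the `i`-th (hard-wired) constant is interpreted as `n + i`. -/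
noncomputable def fCount (ℓ : ℕ) {Rel : ℕ → Type} (φ : (cLang ℓ Rel).Sentence) (n : ℕ) : ℕ :=
  Nat.card { S : ∀ k, Rel k → (Fin k → Fin (n + ℓ)) → Prop //
    letI := cLang.mkStructure (fun i => Fin.natAdd n i) S
    Fin (n + ℓ) ⊨ φ }

/-- Relation symbols: `z` nullary, `u` unary, `b` binary, none of higher arity. -/
def rels012 (z u b : ℕ) : ℕ → Type := fun k =>
  match k with
  | 0 => Fin z
  | 1 => Fin u
  | 2 => Fin b
  | _ => Empty

/-- A sequence is MC-finite iff for every m ≥ 2 it is ultimately periodic modulo m. -/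
def MCFinite (s : ℕ → ℕ) : Prop :=
  ∀ m : ℕ, 2 ≤ m → ∃ r p : ℕ, 1 ≤ p ∧ ∀ n : ℕ, r ≤ n → s (n + p) ≡ s n [MOD m]

/-- The vocabulary with a single quaternary relation symbol (and nothing else). -/
def rels4 : ℕ → Type := fun k =>
  match k with
  | 4 => Fin 1
  | _ => Empty

set_option linter.unusedSectionVars false
set_option linter.unnecessarySeqFocus false

namespace Fischer
open Classical Finset



lemma even_card_closed {α : Type} [DecidableEq α] (f : α → α) (hf : Function.Involutive f) :
    ∀ s : Finset α, (∀ x ∈ s, f x ∈ s ∧ f x ≠ x) → Even s.card := by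
  intro s
  induction s using Finset.strongInduction with
  | _ s ih =>
    intro hs
    rcases s.eq_empty_or_nonempty with rfl | ⟨a, ha⟩
    · simp
    · have hfa := hs a ha
      have hsub : s \ {a, f a} ⊂ s := by
        apply Finset.sdiff_ssubset _ (by simp)
        intro x hx
        simp only [Finset.mem_insert, Finset.mem_singleton] at hx
        rcases hx with rfl | rfl
        · exact ha
        · exact hfa.1
      have hcl : ∀ x ∈ s \ {a, f a}, f x ∈ s \ {a, f a} ∧ f x ≠ x := by
        intro x hx
        simp only [Finset.mem_sdiff, Finset.mem_insert, Finset.mem_singleton] at hx ⊢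
        obtain ⟨hxs, hx2⟩ := hx
        push_neg at hx2
        refine ⟨⟨(hs x hxs).1, ?_⟩, (hs x hxs).2⟩
        rintro (h | h)
        · exact hx2.2 (by rw [← h, hf x])
        · exact hx2.1 (hf.injective h)
      have hcard : s.card = (s \ {a, f a}).card + 2 := by
        have h2 : ({a, f a} : Finset α) ⊆ s := by
          intro x hx; simp only [Finset.mem_insert, Finset.mem_singleton] at hx
          rcases hx with rfl | rfl; exacts [ha, hfa.1]
        rw [Finset.card_sdiff_of_subset h2, Finset.card_pair (Ne.symm hfa.2)]
        have := Finset.card_le_card h2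
        rw [Finset.card_pair (Ne.symm hfa.2)] at this
        omega
      obtain ⟨k, hk⟩ := ih _ hsub hcl
      exact ⟨k + 1, by omega⟩

lemma card_modEq_fixed {α : Type} [Finite α] (f : α → α) (hf : Function.Involutive f) :
    Nat.card α ≡ Nat.card {x : α // f x = x} [MOD 2] := by
  classical
  cases nonempty_fintype α
  rw [Nat.card_eq_fintype_card, Nat.card_eq_fintype_card, Fintype.card_subtype]
  have hsplit : (Finset.univ : Finset α).card =
      (Finset.univ.filter fun x => f x = x).card + (Finset.univ.filter fun x => f x ≠ x).card := by
    rw [Finset.card_filter_add_card_filter_not]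
  have heven : Even (Finset.univ.filter fun x => f x ≠ x).card := by
    apply even_card_closed f hf
    intro x hx
    simp only [Finset.mem_filter, Finset.mem_univ, true_and] at hx ⊢
    exact ⟨fun h => hx (hf.injective (by rw [h])), hx⟩
  obtain ⟨k, hk⟩ := heven
  rw [Fintype.card, hsplit, hk]
  unfold Nat.ModEq
  omega


/-- The semantic content of our sentence: `D x y z w` is meant to say
"the merge-level of `x,y` is at most the merge-level of `z,w`" in a balanced
binary hierarchy. -/
structure Ax {α : Type} (D : α → α → α → α → Prop) : Prop where
  refl : ∀ x y, D x y x y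
  total : ∀ x y z w, D x y z w ∨ D z w x y
  trans : ∀ x y z w u v, D x y z w → D z w u v → D x y u v
  swapL : ∀ x y z w, D x y z w → D y x z w
  diag : ∀ x z w, D x x z w
  diagMin : ∀ x z w, D z w x x → z = w
  etrans : ∀ u v x y z, D x y u v → D y z u v → D x z u v
  split2 : ∀ u v x y z, u ≠ v → D x y u v → D x z u v →
      ¬ D u v x y ∨ ¬ D u v x z ∨ (D y z u v ∧ ¬ D u v y z)
  split8 : ∀ u v x, u ≠ v → ∃ y, D x y u v ∧ D u v x y

variable {α : Type} {D : α → α → α → α → Prop}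

/-- `x` and `y` are distinct and merge at the lowest nontrivial level. -/
def Sib (D : α → α → α → α → Prop) (x y : α) : Prop :=
  x ≠ y ∧ ∀ z w : α, z ≠ w → D x y z w

lemma sib_min_exists [Finite α] (h : Ax D) (hx : ∃ u v : α, u ≠ v) :
    ∃ u v, Sib D u v := by
  classical
  cases nonempty_fintype α
  set rank : α × α → ℕ := fun p =>
    (Finset.univ.filter fun r : α × α => D r.1 r.2 p.1 p.2).card with hrank
  have key : ∀ p q : α × α, ¬ D p.1 p.2 q.1 q.2 → rank q < rank p := by
    intro p q hpq
    apply Finset.card_lt_card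
    constructor
    · intro r hr
      simp only [Finset.mem_filter, Finset.mem_univ, true_and] at hr ⊢
      have hqp : D q.1 q.2 p.1 p.2 := (h.total _ _ _ _).resolve_left hpq
      exact h.trans _ _ _ _ _ _ hr hqp
    · intro hsub
      have hp : p ∈ Finset.univ.filter fun r : α × α => D r.1 r.2 p.1 p.2 := by
        simp [h.refl]
      have := hsub hp
      simp only [Finset.mem_filter, Finset.mem_univ, true_and] at this
      exact hpq this
  obtain ⟨u, v, huv⟩ := hx
  have hne : (Finset.univ.filter fun p : α × α => p.1 ≠ p.2).Nonempty :=
    ⟨(u, v), by simpa using huv⟩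
  obtain ⟨q, hq, hqmin⟩ := Finset.exists_min_image _ rank hne
  simp only [Finset.mem_filter, Finset.mem_univ, true_and] at hq
  refine ⟨q.1, q.2, hq, fun z w hzw => ?_⟩
  by_contra hD
  have h1 := key q (z, w) hD
  have h2 := hqmin (z, w) (by simpa using hzw)
  omega

lemma sib_exists [Finite α] (h : Ax D) (hx : ∃ u v : α, u ≠ v) (x : α) :
    ∃ y, Sib D x y := by
  obtain ⟨u, v, hs⟩ := sib_min_exists h hx
  obtain ⟨y, hy1, hy2⟩ := h.split8 u v x hs.1
  refine ⟨y, ?_, fun z w hzw => h.trans _ _ _ _ _ _ hy1 (hs.2 z w hzw)⟩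
  intro hxy
  subst hxy
  exact hs.1 (h.diagMin _ _ _ hy2)

lemma sib_symm (h : Ax D) {x y : α} (hs : Sib D x y) : Sib D y x :=
  ⟨hs.1.symm, fun z w hzw => h.swapL _ _ _ _ (hs.2 z w hzw)⟩

lemma sib_unique (h : Ax D) {x y z : α} (hy : Sib D x y) (hz : Sib D x z) : y = z := by
  by_contra hyz
  rcases h.split2 x y x y z hy.1 (h.refl x y) (hz.2 x y hy.1) with h1 | h1 | h1
  · exact h1 (h.refl x y)
  · exact h1 (hy.2 x z hz.1)
  · exact h1.2 (hy.2 y z hyz)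

/-- The partner (sibling) of `x`. -/
noncomputable def sibFn [Finite α] (h : Ax D) (hx : ∃ u v : α, u ≠ v) (x : α) : α :=
  Classical.choose (sib_exists h hx x)

lemma sibFn_spec [Finite α] (h : Ax D) (hx : ∃ u v : α, u ≠ v) (x : α) :
    Sib D x (sibFn h hx x) := Classical.choose_spec (sib_exists h hx x)

lemma sibFn_invol [Finite α] (h : Ax D) (hx : ∃ u v : α, u ≠ v) :
    Function.Involutive (sibFn h hx) := by
  intro x
  exact sib_unique h (sibFn_spec h hx (sibFn h hx x)) (sib_symm h (sibFn_spec h hx x))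

/-- A type carrying a model must have even cardinality (provided it has ≥ 2 points). -/
lemma card_even_of_ax [Finite α] (h : Ax D) (hx : ∃ u v : α, u ≠ v) :
    Nat.card α % 2 = 0 := by
  have hmod := card_modEq_fixed (sibFn h hx) (sibFn_invol h hx)
  haveI : IsEmpty {x : α // sibFn h hx x = x} :=
    ⟨fun ⟨x, hfix⟩ => (sibFn_spec h hx x).1 hfix.symm⟩
  rw [Nat.card_of_isEmpty (α := {x : α // sibFn h hx x = x})] at hmod
  simpa [Nat.ModEq] using hmod


/-! ### Blocks in `Fin (2*m)` -/

def ee (m : ℕ) (i : Fin m) : Fin (2*m) := ⟨2*i.1, by omega⟩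
def blk {m : ℕ} (x : Fin (2*m)) : Fin m := ⟨x.1/2, by omega⟩
def flp {m : ℕ} (x : Fin (2*m)) : Fin (2*m) := ⟨2*(x.1/2) + (1 - x.1 % 2), by omega⟩
def tt {m : ℕ} (i : Fin m) (x : Fin (2*m)) : Fin (2*m) := if blk x = i then flp x else x

variable {m : ℕ}

lemma blk_ee (i : Fin m) : blk (ee m i) = i := by
  apply Fin.ext; simp only [blk, ee]; omega

lemma ee_inj {i j : Fin m} (h : ee m i = ee m j) : i = j := by
  apply Fin.ext; have := Fin.val_eq_of_eq h; simp only [ee] at this; omega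

lemma blk_flp (x : Fin (2*m)) : blk (flp x) = blk x := by
  apply Fin.ext; simp only [blk, flp]; omega

lemma flp_flp (x : Fin (2*m)) : flp (flp x) = x := by
  apply Fin.ext; simp only [flp]; omega

lemma flp_ne (x : Fin (2*m)) : flp x ≠ x := by
  intro h; have := Fin.val_eq_of_eq h; simp only [flp] at this; omega

lemma blk_eq_iff {x y : Fin (2*m)} (hne : x ≠ y) : blk x = blk y ↔ y = flp x := by
  constructor
  · intro h
    have h1 := Fin.val_eq_of_eq h
    have h2 : x.1 ≠ y.1 := fun hc => hne (Fin.ext hc)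
    apply Fin.ext; simp only [blk] at h1; simp only [flp]; omega
  · intro h; rw [h, blk_flp]

lemma blk_tt (i : Fin m) (x : Fin (2*m)) : blk (tt i x) = blk x := by
  unfold tt; split_ifs with h
  · exact blk_flp x
  · rfl

lemma tt_apply_eq {i : Fin m} {x : Fin (2*m)} (h : blk x = i) : tt i x = flp x := by
  unfold tt; rw [if_pos h]

lemma tt_apply_ne {i : Fin m} {x : Fin (2*m)} (h : blk x ≠ i) : tt i x = x := by
  unfold tt; rw [if_neg h]

lemma tt_invol (i : Fin m) : Function.Involutive (tt i) := by
  intro x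
  by_cases h : blk x = i
  · rw [tt_apply_eq h, tt_apply_eq (by rw [blk_flp]; exact h), flp_flp]
  · rw [tt_apply_ne h, tt_apply_ne h]

lemma tt_eq_iff (i : Fin m) {x y : Fin (2*m)} : tt i x = tt i y ↔ x = y := by
  constructor
  · intro h; have := congrArg (tt i) h; rwa [tt_invol, tt_invol] at this
  · intro h; rw [h]

lemma tt_comm {i j : Fin m} (hij : i ≠ j) (x : Fin (2*m)) :
    tt i (tt j x) = tt j (tt i x) := by
  by_cases h1 : blk x = i <;> by_cases h2 : blk x = j
  · exact absurd (h1 ▸ h2) hij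
  · rw [tt_apply_ne h2, tt_apply_eq h1, tt_apply_ne (by rw [blk_flp]; exact h2)]
  · rw [tt_apply_eq h2, tt_apply_ne h1, tt_apply_eq h2, tt_apply_ne (by rw [blk_flp]; exact h1)]
  · rw [tt_apply_ne h2, tt_apply_ne h1, tt_apply_ne h2]

/-- `x` is an `ee`-representative or the flip of one. -/
lemma exx_cases (x : Fin (2*m)) : ee m (blk x) = x ∨ ee m (blk x) = flp x := by
  by_cases h : x.1 % 2 = 0
  · left; apply Fin.ext; simp only [ee, blk]; omega
  · right; apply Fin.ext; simp only [ee, blk, flp]; omega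



/-- Conjugation of an interpretation by a map. -/
def cj {α : Type} (f : α → α) (D : α → α → α → α → Prop) : α → α → α → α → Prop :=
  fun x y z w => D (f x) (f y) (f z) (f w)

lemma ax_cj {α : Type} {D : α → α → α → α → Prop} (h : Ax D) {f : α → α}
    (hf : Function.Involutive f) : Ax (cj f D) where
  refl x y := h.refl _ _
  total x y z w := h.total _ _ _ _
  trans x y z w u v h1 h2 := h.trans _ _ _ _ _ _ h1 h2
  swapL x y z w h1 := h.swapL _ _ _ _ h1
  diag x z w := h.diag _ _ _
  diagMin x z w h1 := hf.injective (h.diagMin _ _ _ h1)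
  etrans u v x y z h1 h2 := h.etrans _ _ _ _ _ h1 h2
  split2 u v x y z huv h1 h2 :=
    h.split2 _ _ _ _ _ (fun hc => huv (hf.injective hc)) h1 h2
  split8 u v x huv := by
    obtain ⟨y, hy1, hy2⟩ := h.split8 (f u) (f v) (f x)
      (fun hc => huv (hf.injective hc))
    exact ⟨f y, by simpa [cj, hf y] using hy1, by simpa [cj, hf y] using hy2⟩



def DT (n : ℕ) : Type := Fin n → Fin n → Fin n → Fin n → Prop

instance (n : ℕ) : Finite (DT n) := by unfold DT; infer_instance

def InvUpTo (m j : ℕ) (D : DT (2*m)) : Prop :=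
  ∀ i : Fin m, (i : ℕ) < j → ∀ x y z w, D x y z w ↔ D (tt i x) (tt i y) (tt i z) (tt i w)

def Yt (m j : ℕ) : Type := {D : DT (2*m) // Ax D ∧ InvUpTo m j D}

instance (m j : ℕ) : Finite (Yt m j) := by unfold Yt; infer_instance

def MD (n : ℕ) : Type := {D : DT n // Ax D}

instance (n : ℕ) : Finite (MD n) := by unfold MD DT; infer_instance

lemma chain_step (m : ℕ) {j : ℕ} (hj : j < m) :
    Nat.card (Yt m j) ≡ Nat.card (Yt m (j+1)) [MOD 2] := by
  set jf : Fin m := ⟨j, hj⟩ with hjf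
  have gprop : ∀ Dp : Yt m j, Ax (cj (tt jf) Dp.1) ∧ InvUpTo m j (cj (tt jf) Dp.1) := by
    rintro ⟨D, hAx, hInv⟩
    refine ⟨ax_cj hAx (tt_invol jf), ?_⟩
    intro i hi x y z w
    have hij : i ≠ jf := by
      intro hc; rw [hc] at hi; simp [hjf] at hi
    show D (tt jf x) _ _ _ ↔ D (tt jf (tt i x)) _ _ _
    rw [tt_comm hij.symm x, tt_comm hij.symm y, tt_comm hij.symm z, tt_comm hij.symm w]
    exact hInv i hi (tt jf x) (tt jf y) (tt jf z) (tt jf w)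
  set g : Yt m j → Yt m j := fun Dp => ⟨cj (tt jf) Dp.1, gprop Dp⟩ with hg
  have ginvol : Function.Involutive g := by
    rintro ⟨D, hD⟩
    apply Subtype.ext
    show cj (tt jf) (cj (tt jf) D) = D
    funext x y z w
    show D (tt jf (tt jf x)) (tt jf (tt jf y)) (tt jf (tt jf z)) (tt jf (tt jf w)) = _
    rw [tt_invol jf x, tt_invol jf y, tt_invol jf z, tt_invol jf w]
  have hmod := card_modEq_fixed g ginvol
  have hcard : Nat.card {Dp : Yt m j // g Dp = Dp} = Nat.card (Yt m (j+1)) := by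
    apply Nat.card_congr
    refine ⟨fun Dp => ⟨Dp.1.1, Dp.1.2.1, ?_⟩, fun Dq => ⟨⟨Dq.1, Dq.2.1, fun i hi => Dq.2.2 i (by omega)⟩, ?_⟩, ?_, ?_⟩
    · -- fixed gives invariance up to j+1
      intro i hi x y z w
      rcases Nat.lt_or_ge (i : ℕ) j with hlt | hge
      · exact Dp.1.2.2 i hlt x y z w
      · have hi' : i = jf := by apply Fin.ext; simp [hjf]; omega
        have heq : cj (tt jf) Dp.1.1 = Dp.1.1 := congrArg Subtype.val Dp.2
        have := congrFun (congrFun (congrFun (congrFun heq x) y) z) w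
        rw [hi']
        exact (iff_of_eq this).symm
    · -- invariant is fixed
      apply Subtype.ext
      show cj (tt jf) Dq.1 = Dq.1
      funext x y z w
      exact propext ((Dq.2.2 jf (by simp [hjf]) x y z w).symm)
    · intro Dp; apply Subtype.ext; apply Subtype.ext; rfl
    · intro Dq; apply Subtype.ext; rfl
  exact hmod.trans (by rw [hcard])

lemma chain_all (m : ℕ) : Nat.card (Yt m 0) ≡ Nat.card (Yt m m) [MOD 2] := by
  suffices h : ∀ j, j ≤ m → Nat.card (Yt m 0) ≡ Nat.card (Yt m j) [MOD 2] from h m le_rfl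
  intro j
  induction j with
  | zero => intro _; rfl
  | succ k ih => intro hk; exact (ih (by omega)).trans (chain_step m (by omega))

lemma yt_zero_card (m : ℕ) : Nat.card (Yt m 0) = Nat.card (MD (2*m)) := by
  apply Nat.card_congr
  exact Equiv.subtypeEquivRight fun D =>
    ⟨fun h => h.1, fun h => ⟨h, fun i hi => absurd hi (by omega)⟩⟩


variable {m : ℕ} {D : DT (2*m)}

def InvFull (D : DT (2*m)) : Prop := InvUpTo m m D

lemma pair_exists (hm : 0 < m) : ∃ u v : Fin (2*m), u ≠ v :=
  ⟨⟨0, by omega⟩, ⟨1, by omega⟩, by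
    intro h; have := Fin.val_eq_of_eq h; simp at this⟩

section InvModel
variable (hD : Ax D) (hI : InvFull D) (hm : 0 < m)
include hD hI hm

lemma sib_flp (x : Fin (2*m)) : Sib D x (flp x) := by
  obtain ⟨y, hy⟩ := sib_exists hD (pair_exists hm) x
  by_cases hb : blk y = blk x
  · rwa [(blk_eq_iff hy.1).mp hb.symm] at hy
  · exfalso
    have hs2 : Sib D (tt (blk x) x) (tt (blk x) y) := by
      refine ⟨fun hc => hy.1 ((tt_eq_iff (blk x)).mp hc), fun z w hzw => ?_⟩
      have h1 : D x y (tt (blk x) z) (tt (blk x) w) :=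
        hy.2 _ _ (fun hc => hzw (by
          have := congrArg (tt (blk x)) hc
          rwa [tt_invol, tt_invol] at this))
      have h2 := (hI (blk x) (blk x).isLt x y (tt (blk x) z) (tt (blk x) w)).mp h1
      rwa [tt_invol, tt_invol] at h2
    rw [tt_apply_eq rfl, tt_apply_ne hb] at hs2
    have := sib_unique hD (sib_symm hD hy) (sib_symm hD hs2)
    exact flp_ne x this.symm

lemma sib_iff_blk {x y : Fin (2*m)} (hne : x ≠ y) :
    Sib D x y ↔ blk x = blk y := by
  constructor
  · intro hs
    have := sib_unique hD hs (sib_flp hD hI hm x)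
    rw [this, blk_flp]
  · intro hb
    rw [(blk_eq_iff hne).mp hb]
    exact sib_flp hD hI hm x

/-- the canonical even representative of the block of `x` -/
def exr (x : Fin (2*m)) : Fin (2*m) := ee m (blk x)

omit hm

lemma lvl_congr {x y x' y' : Fin (2*m)} (h1 : D x y x' y') (h2 : D x' y' x y) :
    (∀ z w, D x y z w ↔ D x' y' z w) ∧ (∀ z w, D z w x y ↔ D z w x' y') := by
  constructor
  · exact fun z w => ⟨fun h => hD.trans _ _ _ _ _ _ h2 h, fun h => hD.trans _ _ _ _ _ _ h1 h⟩
  · exact fun z w => ⟨fun h => hD.trans _ _ _ _ _ _ h h1, fun h => hD.trans _ _ _ _ _ _ h h2⟩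

lemma stepL {x y : Fin (2*m)} (hbl : blk x ≠ blk y) :
    D x y (flp x) y ∧ D (flp x) y x y := by
  have hiff := hI (blk x) (blk x).isLt x y (flp x) y
  rw [tt_apply_eq rfl, tt_apply_ne (fun hc => hbl hc.symm),
    tt_apply_eq (blk_flp x), flp_flp] at hiff
  rcases hD.total x y (flp x) y with h | h
  · exact ⟨h, hiff.mp h⟩
  · exact ⟨hiff.mpr h, h⟩

lemma stepR {x y : Fin (2*m)} (hbl : blk x ≠ blk y) :
    D x y x (flp y) ∧ D x (flp y) x y := by
  have hiff := hI (blk y) (blk y).isLt x y x (flp y)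
  rw [tt_apply_ne hbl, tt_apply_eq rfl, tt_apply_eq (blk_flp y), flp_flp] at hiff
  rcases hD.total x y x (flp y) with h | h
  · exact ⟨h, hiff.mp h⟩
  · exact ⟨hiff.mpr h, h⟩

lemma move {x y : Fin (2*m)} (hbl : blk x ≠ blk y) :
    D x y (exr x) (exr y) ∧ D (exr x) (exr y) x y := by
  have hxa : D x y (exr x) y ∧ D (exr x) y x y := by
    unfold exr
    rcases exx_cases x with h | h
    · rw [h]; exact ⟨hD.refl x y, hD.refl x y⟩
    · rw [h]; exact stepL hD hI hbl
  have hxy : blk (exr x) ≠ blk y := by unfold exr; rw [blk_ee]; exact hbl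
  have hyb : D (exr x) y (exr x) (exr y) ∧ D (exr x) (exr y) (exr x) y := by
    have : exr y = ee m (blk y) := rfl
    unfold exr
    rcases exx_cases y with h | h
    · rw [h]; exact ⟨hD.refl _ _, hD.refl _ _⟩
    · rw [h]
      have := stepR hD hI hxy
      exact this
  exact ⟨hD.trans _ _ _ _ _ _ hxa.1 hyb.1, hD.trans _ _ _ _ _ _ hyb.2 hxa.2⟩

lemma moveL {x y : Fin (2*m)} (hbl : blk x ≠ blk y) (z w : Fin (2*m)) :
    D x y z w ↔ D (exr x) (exr y) z w :=
  (lvl_congr hD hI (move hD hI hbl).1 (move hD hI hbl).2).1 z w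

lemma moveR {x y : Fin (2*m)} (hbl : blk x ≠ blk y) (z w : Fin (2*m)) :
    D z w x y ↔ D z w (exr x) (exr y) :=
  (lvl_congr hD hI (move hD hI hbl).1 (move hD hI hbl).2).2 z w

end InvModel

def up {m : ℕ} (D' : DT m) : DT (2*m) := fun x y z w =>
  if x = y then True
  else if z = w then False
  else if blk x = blk y then True
  else if blk z = blk w then False
  else D' (blk x) (blk y) (blk z) (blk w)

def down {m : ℕ} (D : DT (2*m)) : DT m := fun i j k l =>
  D (ee m i) (ee m j) (ee m k) (ee m l)

variable {m : ℕ}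

lemma up_iff (D' : DT m) (x y z w : Fin (2*m)) :
    up D' x y z w ↔
      (x = y ∨ (z ≠ w ∧ (blk x = blk y ∨
        (blk z ≠ blk w ∧ D' (blk x) (blk y) (blk z) (blk w))))) := by
  unfold up
  split_ifs with h1 h2 h3 h4 <;> simp_all

lemma blk_pair {x y z : Fin (2*m)} (hy : blk y = blk x) (hz : blk z = blk x)
    (hyx : y ≠ x) (hzx : z ≠ x) : y = z := by
  rw [(blk_eq_iff hyx.symm).mp hy.symm] at *
  rw [(blk_eq_iff hzx.symm).mp hz.symm]

lemma blk_ne_of_ne {u v : Fin (2*m)} (h : blk u ≠ blk v) : u ≠ v :=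
  fun hc => h (by rw [hc])


section UpCompute
variable {D' : DT m} {u v x y z w : Fin (2*m)}

lemma upC1 (huv : u ≠ v) (hxy : x = y) : ¬ up D' u v x y := by
  simp [up, huv, hxy]

lemma upC2 (huv : u ≠ v) (hbuv : blk u = blk v) (hxy : x ≠ y) : up D' u v x y := by
  simp [up, huv, hxy, hbuv]

lemma upC3 (huv : u ≠ v) (hbuv : ¬ blk u = blk v) (hxy : x ≠ y)
    (hbxy : blk x = blk y) : ¬ up D' u v x y := by
  simp [up, huv, hxy, hbuv, hbxy]

lemma upC4 (huv : u ≠ v) (hbuv : ¬ blk u = blk v) (hxy : x ≠ y)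
    (hbxy : ¬ blk x = blk y) :
    up D' u v x y ↔ D' (blk u) (blk v) (blk x) (blk y) := by
  simp [up, huv, hxy, hbuv, hbxy]

lemma upC5 (hxy : x = y) : up D' x y z w := by simp [up, hxy]

lemma upC7 (hxy : x ≠ y) (hzw : z ≠ w) (hbxy : blk x = blk y) : up D' x y z w := by
  simp [up, hxy, hzw, hbxy]

end UpCompute

section UpAx
variable {D' : DT m} (h' : Ax D')
include h'

lemma ax_up : Ax (up D') := by
  constructor
  case refl =>
    intro x y
    by_cases hxy : x = y <;> by_cases hb : blk x = blk y <;>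
      simp [up_iff, hxy, hb, h'.refl]
  case total =>
    intro x y z w
    simp only [up_iff]
    by_cases hxy : x = y <;> by_cases hzw : z = w <;>
      by_cases h1 : blk x = blk y <;> by_cases h2 : blk z = blk w <;>
      simp [*] <;>
      rcases h'.total (blk x) (blk y) (blk z) (blk w) with h | h <;> tauto
  case trans =>
    intro x y z w u v h1 h2
    rw [up_iff] at h1 h2 ⊢
    rcases h1 with rfl | ⟨hzw, h1⟩
    · left; rfl
    rcases h2 with rfl | ⟨huv, h2⟩
    · exact absurd rfl hzw
    right
    refine ⟨huv, ?_⟩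
    rcases h1 with hbxy | ⟨hbzw, hD1⟩
    · left; exact hbxy
    rcases h2 with hbzw' | ⟨hbuv, hD2⟩
    · exact absurd hbzw' hbzw
    · right; exact ⟨hbuv, h'.trans _ _ _ _ _ _ hD1 hD2⟩
  case swapL =>
    intro x y z w h1
    rw [up_iff] at h1 ⊢
    rcases h1 with rfl | ⟨hzw, h1⟩
    · left; rfl
    right
    refine ⟨hzw, ?_⟩
    rcases h1 with hb | ⟨hbzw, hD1⟩
    · left; exact hb.symm
    · right; exact ⟨hbzw, h'.swapL _ _ _ _ hD1⟩
  case diag =>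
    intro x z w; rw [up_iff]; left; rfl
  case diagMin =>
    intro x z w h1
    rw [up_iff] at h1
    rcases h1 with rfl | ⟨hxx, _⟩
    · rfl
    · exact absurd rfl hxx
  case etrans =>
    intro u v x y z h1 h2
    rw [up_iff] at h1 h2 ⊢
    rcases h1 with rfl | ⟨huv, h1⟩
    · rcases h2 with rfl | h2
      · left; rfl
      · right; exact h2
    rcases h2 with rfl | ⟨_, h2⟩
    · right; exact ⟨huv, h1⟩
    by_cases hbuv : blk u = blk v
    · -- sibling level: h1, h2 give block equalities
      have hb1 : blk x = blk y := by
        rcases h1 with hb | ⟨hc, _⟩; exacts [hb, absurd hbuv hc]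
      have hb2 : blk y = blk z := by
        rcases h2 with hb | ⟨hc, _⟩; exacts [hb, absurd hbuv hc]
      right; exact ⟨huv, Or.inl (hb1.trans hb2)⟩
    · have hD1 : D' (blk x) (blk y) (blk u) (blk v) := by
        rcases h1 with hb | ⟨_, hD⟩
        · rw [hb]; exact h'.diag _ _ _
        · exact hD
      have hD2 : D' (blk y) (blk z) (blk u) (blk v) := by
        rcases h2 with hb | ⟨_, hD⟩
        · rw [hb]; exact h'.diag _ _ _
        · exact hD
      right
      exact ⟨huv, Or.inr ⟨hbuv, h'.etrans _ _ _ _ _ hD1 hD2⟩⟩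
  case split2 =>
    intro u v x y z huv h1 h2
    by_cases hbuv : blk u = blk v
    · by_cases hxy : x = y
      · exact Or.inl (upC1 huv hxy)
      by_cases hxz : x = z
      · exact Or.inr (Or.inl (upC1 huv hxz))
      by_cases hyz : y = z
      · exact Or.inr (Or.inr ⟨upC5 hyz, upC1 huv hyz⟩)
      · exfalso
        have hb1 : blk x = blk y := by
          rcases (up_iff _ x y u v).mp h1 with hc | ⟨_, hb | ⟨hc, _⟩⟩
          exacts [absurd hc hxy, hb, absurd hbuv hc]
        have hb2 : blk x = blk z := by
          rcases (up_iff _ x z u v).mp h2 with hc | ⟨_, hb | ⟨hc, _⟩⟩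
          exacts [absurd hc hxz, hb, absurd hbuv hc]
        exact hyz (blk_pair hb1.symm hb2.symm (Ne.symm hxy) (Ne.symm hxz))
    · by_cases hxy : x = y
      · exact Or.inl (upC1 huv hxy)
      by_cases hbxy : blk x = blk y
      · exact Or.inl (upC3 huv hbuv hxy hbxy)
      by_cases hxz : x = z
      · exact Or.inr (Or.inl (upC1 huv hxz))
      by_cases hbxz : blk x = blk z
      · exact Or.inr (Or.inl (upC3 huv hbuv hxz hbxz))
      by_cases hyz : y = z
      · exact Or.inr (Or.inr ⟨upC5 hyz, upC1 huv hyz⟩)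
      by_cases hbyz : blk y = blk z
      · exact Or.inr (Or.inr ⟨upC7 hyz (blk_ne_of_ne hbuv) hbyz, upC3 huv hbuv hyz hbyz⟩)
      · have hD1 : D' (blk x) (blk y) (blk u) (blk v) := by
          rcases (up_iff _ x y u v).mp h1 with hc | ⟨_, hb | ⟨_, hD⟩⟩
          exacts [absurd hc hxy, absurd hb hbxy, hD]
        have hD2 : D' (blk x) (blk z) (blk u) (blk v) := by
          rcases (up_iff _ x z u v).mp h2 with hc | ⟨_, hb | ⟨_, hD⟩⟩
          exacts [absurd hc hxz, absurd hb hbxz, hD]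
        rcases h'.split2 (blk u) (blk v) (blk x) (blk y) (blk z) hbuv hD1 hD2 with
          hc | hc | hc
        · exact Or.inl fun hcon => hc ((upC4 huv hbuv hxy hbxy).mp hcon)
        · exact Or.inr (Or.inl fun hcon => hc ((upC4 huv hbuv hxz hbxz).mp hcon))
        · refine Or.inr (Or.inr ⟨?_, fun hcon => hc.2 ((upC4 huv hbuv hyz hbyz).mp hcon)⟩)
          exact (up_iff _ _ _ _ _).mpr (Or.inr ⟨blk_ne_of_ne hbuv, Or.inr ⟨hbuv, hc.1⟩⟩)
  case split8 =>
    intro u v x huv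
    by_cases hbuv : blk u = blk v
    · exact ⟨flp x, upC7 (Ne.symm (flp_ne x)) huv (blk_flp x).symm,
        upC2 huv hbuv (Ne.symm (flp_ne x))⟩
    · obtain ⟨y', hy1, hy2⟩ := h'.split8 (blk u) (blk v) (blk x) hbuv
      have hy'ne : y' ≠ blk x := by
        rintro rfl
        exact hbuv (h'.diagMin _ _ _ hy2)
      have hbne : blk x ≠ blk (ee m y') := by
        rw [blk_ee]; exact fun hc => hy'ne hc.symm
      have hne : x ≠ ee m y' := blk_ne_of_ne hbne
      refine ⟨ee m y', ?_, ?_⟩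
      · refine (up_iff _ _ _ _ _).mpr (Or.inr ⟨huv, Or.inr ⟨hbuv, ?_⟩⟩)
        rw [blk_ee]; exact hy1
      · exact (upC4 huv hbuv hne hbne).mpr (by rw [blk_ee]; exact hy2)
end UpAx

lemma inv_up {D' : DT m} : InvUpTo m m (up D') := by
  intro i _ x y z w
  simp only [up, blk_tt, tt_eq_iff]

lemma down_up {D' : DT m} (h' : Ax D') : down (up D') = D' := by
  funext i j k l
  apply propext
  unfold down
  by_cases hij : i = j
  · subst hij
    simp only [up, if_pos rfl]
    exact ⟨fun _ => h'.diag _ _ _, fun _ => trivial⟩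
  · have he : ee m i ≠ ee m j := fun hc => hij (ee_inj hc)
    by_cases hkl : k = l
    · subst hkl
      unfold up
      rw [if_neg he, if_pos rfl]
      exact ⟨False.elim, fun hd => absurd (h'.diagMin _ _ _ hd) hij⟩
    · have he2 : ee m k ≠ ee m l := fun hc => hkl (ee_inj hc)
      unfold up
      rw [if_neg he, if_neg he2, if_neg (by rw [blk_ee, blk_ee]; exact hij),
        if_neg (by rw [blk_ee, blk_ee]; exact hkl), blk_ee, blk_ee, blk_ee, blk_ee]

section DownAx
variable {D : DT (2*m)} (hD : Ax D) (hI : InvFull D) (hm : 0 < m)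
include hD hI hm

lemma ax_down : Ax (down D) := by
  constructor
  case refl => exact fun i j => hD.refl _ _
  case total => exact fun i j k l => hD.total _ _ _ _
  case trans => exact fun a b c d e f h1 h2 => hD.trans _ _ _ _ _ _ h1 h2
  case swapL => exact fun a b c d h1 => hD.swapL _ _ _ _ h1
  case diag => exact fun a c d => hD.diag _ _ _
  case diagMin => exact fun a c d h1 => ee_inj (hD.diagMin _ _ _ h1)
  case etrans => exact fun a b c d e h1 h2 => hD.etrans _ _ _ _ _ h1 h2
  case split2 =>
    exact fun a b c d e hab h1 h2 =>
      hD.split2 _ _ _ _ _ (fun hc => hab (ee_inj hc)) h1 h2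
  case split8 =>
    intro u v x huv
    have huv' : ee m u ≠ ee m v := fun hc => huv (ee_inj hc)
    obtain ⟨y, hy1, hy2⟩ := hD.split8 (ee m u) (ee m v) (ee m x) huv'
    by_cases hby : blk y = blk (ee m x)
    · exfalso
      by_cases hyx : y = ee m x
      · subst hyx
        exact huv' (hD.diagMin _ _ _ hy2)
      · have hsxy : Sib D (ee m x) y :=
          (sib_iff_blk hD hI hm (Ne.symm hyx)).mpr hby.symm
        have hsuv : Sib D (ee m u) (ee m v) :=
          ⟨huv', fun a b hab => hD.trans _ _ _ _ _ _ hy2 (hsxy.2 a b hab)⟩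
        have hbb := (sib_iff_blk hD hI hm huv').mp hsuv
        rw [blk_ee, blk_ee] at hbb
        exact huv hbb
    · have hb : blk (ee m x) ≠ blk y := fun hc => hby hc.symm
      have hex : exr (ee m x) = ee m x := by unfold exr; rw [blk_ee]
      refine ⟨blk y, ?_, ?_⟩
      · have h1 := (moveL hD hI hb (ee m u) (ee m v)).mp hy1
        rw [hex] at h1
        exact h1
      · have h2 := (moveR hD hI hb (ee m u) (ee m v)).mp hy2
        rw [hex] at h2
        exact h2

lemma up_down_eq : up (down D) = D := by
  funext x y z w
  apply propext
  by_cases h1 : x = y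
  · subst h1
    simp only [up, if_pos rfl]
    exact ⟨fun _ => hD.diag _ _ _, fun _ => trivial⟩
  by_cases h2 : z = w
  · subst h2
    simp only [up, if_neg h1, if_pos rfl]
    exact ⟨False.elim, fun hc => absurd (hD.diagMin _ _ _ hc) h1⟩
  by_cases h3 : blk x = blk y
  · simp only [up, if_neg h1, if_neg h2, if_pos h3]
    exact ⟨fun _ => ((sib_iff_blk hD hI hm h1).mpr h3).2 z w h2, fun _ => trivial⟩
  by_cases h4 : blk z = blk w
  · simp only [up, if_neg h1, if_neg h2, if_neg h3, if_pos h4]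
    refine ⟨False.elim, fun hc => h3 ?_⟩
    have hsib : Sib D x y :=
      ⟨h1, fun a b hab =>
        hD.trans _ _ _ _ _ _ hc (((sib_iff_blk hD hI hm h2).mpr h4).2 a b hab)⟩
    exact (sib_iff_blk hD hI hm h1).mp hsib
  · simp only [up, if_neg h1, if_neg h2, if_neg h3, if_neg h4]
    show down D (blk x) (blk y) (blk z) (blk w) ↔ D x y z w
    unfold down
    exact ((moveL hD hI h3 z w).trans (moveR hD hI h4 (exr x) (exr y))).symm

end DownAx

noncomputable def recEquiv (hm : 0 < m) : Yt m m ≃ MD m where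
  toFun Dp := ⟨down Dp.1, ax_down Dp.2.1 Dp.2.2 hm⟩
  invFun Dq := ⟨up Dq.1, ax_up Dq.2, inv_up⟩
  left_inv Dp := Subtype.ext (up_down_eq Dp.2.1 Dp.2.2 hm)
  right_inv Dq := Subtype.ext (down_up Dq.2)

lemma halving (hm : 0 < m) :
    Nat.card (MD (2*m)) ≡ Nat.card (MD m) [MOD 2] := by
  have h1 := chain_all m
  rw [yt_zero_card m] at h1
  have h2 : Nat.card (Yt m m) = Nat.card (MD m) := Nat.card_congr (recEquiv hm)
  rw [h2] at h1
  exact h1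

abbrev L4 := relLang rels4
def R4 : L4.Relations 4 := (0 : Fin 1)

def rr {k : ℕ} (a b c d : Fin k) : L4.BoundedFormula Empty k :=
  Relations.boundedFormula R4
    ![Term.var (Sum.inr a), Term.var (Sum.inr b), Term.var (Sum.inr c), Term.var (Sum.inr d)]

def veq {k : ℕ} (a b : Fin k) : L4.BoundedFormula Empty k :=
  Term.bdEqual (Term.var (Sum.inr a)) (Term.var (Sum.inr b))

def s1 : L4.Sentence := ((rr 0 1 0 1 : L4.BoundedFormula Empty 2)).alls
def s2 : L4.Sentence := ((rr 0 1 2 3 ⊔ rr 2 3 0 1 : L4.BoundedFormula Empty 4)).alls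
def s3 : L4.Sentence :=
  ((rr 0 1 2 3 ⟹ (rr 2 3 4 5 ⟹ rr 0 1 4 5) : L4.BoundedFormula Empty 6)).alls
def s4 : L4.Sentence := ((rr 0 1 2 3 ⟹ rr 1 0 2 3 : L4.BoundedFormula Empty 4)).alls
def s5 : L4.Sentence := ((rr 0 0 1 2 : L4.BoundedFormula Empty 3)).alls
def s6 : L4.Sentence := ((rr 1 2 0 0 ⟹ veq 1 2 : L4.BoundedFormula Empty 3)).alls
def s7 : L4.Sentence :=
  ((rr 2 3 0 1 ⟹ (rr 3 4 0 1 ⟹ rr 2 4 0 1) : L4.BoundedFormula Empty 5)).alls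
def s8 : L4.Sentence :=
  ((∼(veq 0 1) ⟹ (rr 2 3 0 1 ⟹ (rr 2 4 0 1 ⟹
    (∼(rr 0 1 2 3) ⊔ (∼(rr 0 1 2 4) ⊔ (rr 3 4 0 1 ⊓ ∼(rr 0 1 3 4)))))) :
      L4.BoundedFormula Empty 5)).alls
def s9 : L4.Sentence :=
  ((∼(veq 0 1) ⟹ BoundedFormula.ex (rr 2 3 0 1 ⊓ rr 0 1 2 3) :
      L4.BoundedFormula Empty 3)).alls

def phi : L4.Sentence := s1 ⊓ (s2 ⊓ (s3 ⊓ (s4 ⊓ (s5 ⊓ (s6 ⊓ (s7 ⊓ (s8 ⊓ s9)))))))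

/-- The quaternary relation extracted from an interpretation. -/
def DS {n : ℕ} (S : ∀ k, rels4 k → (Fin k → Fin n) → Prop) :
    Fin n → Fin n → Fin n → Fin n → Prop :=
  fun x y z w => S 4 R4 ![x, y, z, w]

lemma realize_phi_iff (n : ℕ) (S : ∀ k, rels4 k → (Fin k → Fin n) → Prop) :
    (letI := relLang.mkStructure S; Fin n ⊨ phi) ↔ Ax (DS S) := by
  letI := relLang.mkStructure S
  have hrr : ∀ (k : ℕ) (a b c d : Fin k) (v : Empty → Fin n) (xs : Fin k → Fin n),
      ((rr a b c d).Realize v xs) ↔ DS S (xs a) (xs b) (xs c) (xs d) := by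
    intro k a b c d v xs
    rw [rr, BoundedFormula.realize_rel]
    have h : (fun i => Term.realize (Sum.elim v xs)
        ((![Term.var (Sum.inr a), Term.var (Sum.inr b), Term.var (Sum.inr c),
          Term.var (Sum.inr d)] : Fin 4 → L4.Term (Empty ⊕ Fin k)) i)) =
        ![xs a, xs b, xs c, xs d] := by
      funext i
      fin_cases i <;> rfl
    rw [h]
    exact Iff.rfl
  have hveq : ∀ (k : ℕ) (a b : Fin k) (v : Empty → Fin n) (xs : Fin k → Fin n),
      ((veq a b).Realize v xs) ↔ xs a = xs b := by
    intro k a b v xs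
    rw [veq, BoundedFormula.realize_bdEqual]
    exact Iff.rfl
  show Fin n ⊨ phi ↔ _
  have hsplit : (Fin n ⊨ phi) ↔ ((Fin n ⊨ s1) ∧ (Fin n ⊨ s2) ∧ (Fin n ⊨ s3) ∧
      (Fin n ⊨ s4) ∧ (Fin n ⊨ s5) ∧ (Fin n ⊨ s6) ∧ (Fin n ⊨ s7) ∧
      (Fin n ⊨ s8) ∧ (Fin n ⊨ s9)) := by
    rw [phi]
    simp only [Sentence.Realize, Formula.realize_inf]
  rw [hsplit]
  have h1 : (Fin n ⊨ s1) ↔ ∀ x y : Fin n, DS S x y x y := by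
    rw [s1]
    simp only [Sentence.Realize, BoundedFormula.realize_alls, hrr]
    constructor
    · intro h x y; simpa using h ![x, y]
    · intro h xs; simpa using h (xs 0) (xs 1)
  have h2 : (Fin n ⊨ s2) ↔ ∀ x y z w : Fin n, DS S x y z w ∨ DS S z w x y := by
    rw [s2]
    simp only [Sentence.Realize, BoundedFormula.realize_alls,
      BoundedFormula.realize_sup, hrr]
    constructor
    · intro h x y z w; simpa using h ![x, y, z, w]
    · intro h xs; simpa using h (xs 0) (xs 1) (xs 2) (xs 3)
  have h3 : (Fin n ⊨ s3) ↔ ∀ x y z w u v : Fin n,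
      DS S x y z w → DS S z w u v → DS S x y u v := by
    rw [s3]
    simp only [Sentence.Realize, BoundedFormula.realize_alls,
      BoundedFormula.realize_imp, hrr]
    constructor
    · intro h x y z w u v; simpa using h ![x, y, z, w, u, v]
    · intro h xs; simpa using h (xs 0) (xs 1) (xs 2) (xs 3) (xs 4) (xs 5)
  have h4 : (Fin n ⊨ s4) ↔ ∀ x y z w : Fin n, DS S x y z w → DS S y x z w := by
    rw [s4]
    simp only [Sentence.Realize, BoundedFormula.realize_alls,
      BoundedFormula.realize_imp, hrr]
    constructor
    · intro h x y z w; simpa using h ![x, y, z, w]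
    · intro h xs; simpa using h (xs 0) (xs 1) (xs 2) (xs 3)
  have h5 : (Fin n ⊨ s5) ↔ ∀ x z w : Fin n, DS S x x z w := by
    rw [s5]
    simp only [Sentence.Realize, BoundedFormula.realize_alls, hrr]
    constructor
    · intro h x z w; simpa using h ![x, z, w]
    · intro h xs; simpa using h (xs 0) (xs 1) (xs 2)
  have h6 : (Fin n ⊨ s6) ↔ ∀ x z w : Fin n, DS S z w x x → z = w := by
    rw [s6]
    simp only [Sentence.Realize, BoundedFormula.realize_alls,
      BoundedFormula.realize_imp, hrr, hveq]
    constructor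
    · intro h x z w; simpa using h ![x, z, w]
    · intro h xs; simpa using h (xs 0) (xs 1) (xs 2)
  have h7 : (Fin n ⊨ s7) ↔ ∀ u v x y z : Fin n,
      DS S x y u v → DS S y z u v → DS S x z u v := by
    rw [s7]
    simp only [Sentence.Realize, BoundedFormula.realize_alls,
      BoundedFormula.realize_imp, hrr]
    constructor
    · intro h u v x y z; simpa using h ![u, v, x, y, z]
    · intro h xs; simpa using h (xs 0) (xs 1) (xs 2) (xs 3) (xs 4)
  have h8 : (Fin n ⊨ s8) ↔ ∀ u v x y z : Fin n, u ≠ v →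
      DS S x y u v → DS S x z u v →
      ¬ DS S u v x y ∨ ¬ DS S u v x z ∨ (DS S y z u v ∧ ¬ DS S u v y z) := by
    rw [s8]
    simp only [Sentence.Realize, BoundedFormula.realize_alls,
      BoundedFormula.realize_imp, BoundedFormula.realize_sup,
      BoundedFormula.realize_inf, BoundedFormula.realize_not, hrr, hveq]
    constructor
    · intro h u v x y z; simpa using h ![u, v, x, y, z]
    · intro h xs; simpa using h (xs 0) (xs 1) (xs 2) (xs 3) (xs 4)
  have h9 : (Fin n ⊨ s9) ↔ ∀ u v x : Fin n, u ≠ v →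
      ∃ y, DS S x y u v ∧ DS S u v x y := by
    rw [s9]
    simp only [Sentence.Realize, BoundedFormula.realize_alls,
      BoundedFormula.realize_imp, BoundedFormula.realize_not,
      BoundedFormula.realize_ex, BoundedFormula.realize_inf, hrr, hveq]
    constructor
    · intro h u v x huv
      obtain ⟨a, ha1, ha2⟩ := h ![u, v, x] (by simpa using huv)
      refine ⟨a, ?_, ?_⟩ <;> simpa [Fin.snoc] using ‹_›
    · intro h xs hne
      obtain ⟨a, ha1, ha2⟩ := h (xs 0) (xs 1) (xs 2) hne
      exact ⟨a, by simp [Fin.snoc]; exact ha1, by simp [Fin.snoc]; exact ha2⟩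
  rw [h1, h2, h3, h4, h5, h6, h7, h8, h9]
  constructor
  · rintro ⟨a1, a2, a3, a4, a5, a6, a7, a8, a9⟩
    exact ⟨a1, a2, a3, a4, a5, a6, a7, a8, a9⟩
  · intro h
    exact ⟨h.refl, h.total, h.trans, h.swapL, h.diag, h.diagMin, h.etrans,
      h.split2, h.split8⟩

def SofD {n : ℕ} (D : DT n) : ∀ k, rels4 k → (Fin k → Fin n) → Prop :=
  fun k => match k with
  | 0 => fun r _ => Empty.elim r
  | 1 => fun r _ => Empty.elim r
  | 2 => fun r _ => Empty.elim r
  | 3 => fun r _ => Empty.elim r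
  | 4 => fun _ v => D (v 0) (v 1) (v 2) (v 3)
  | (_ + 5) => fun r _ => Empty.elim r

lemma DS_SofD {n : ℕ} (D : DT n) : DS (SofD D) = D := by
  funext x y z w
  rfl

lemma SofD_DS {n : ℕ} (S : ∀ k, rels4 k → (Fin k → Fin n) → Prop) :
    SofD (DS S) = S := by
  funext k r v
  match k with
  | 0 => exact Empty.elim r
  | 1 => exact Empty.elim r
  | 2 => exact Empty.elim r
  | 3 => exact Empty.elim r
  | 4 =>
    show DS S (v 0) (v 1) (v 2) (v 3) = S 4 r v
    have hr : r = R4 := Subsingleton.elim (α := Fin 1) r R4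
    rw [DS, hr]
    congr 1
    funext i
    fin_cases i <;> rfl
  | (_ + 5) => exact Empty.elim r

lemma spCount_eq (n : ℕ) : spCount phi n = Nat.card (MD n) := by
  apply Nat.card_congr
  refine ⟨fun Sp => ⟨DS Sp.1, (realize_phi_iff n Sp.1).mp Sp.2⟩,
    fun Dp => ⟨SofD Dp.1, (realize_phi_iff n (SofD Dp.1)).mpr ?_⟩, ?_, ?_⟩
  · rw [DS_SofD]; exact Dp.2
  · intro Sp; exact Subtype.ext (SofD_DS Sp.1)
  · intro Dp; exact Subtype.ext (DS_SofD Dp.1)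

/-- On a one-element universe there is exactly one model. -/
lemma md_one : Nat.card (MD 1) = 1 := by
  have htop : Ax (fun _ _ _ _ => True : DT 1) :=
    ⟨fun _ _ => trivial, fun _ _ _ _ => Or.inl trivial, fun _ _ _ _ _ _ _ _ => trivial,
      fun _ _ _ _ _ => trivial, fun _ _ _ => trivial, fun _ _ _ _ => Subsingleton.elim _ _,
      fun _ _ _ _ _ _ _ => trivial, fun u v _ _ _ huv _ _ => absurd (Subsingleton.elim u v) huv,
      fun u v _ huv => absurd (Subsingleton.elim u v) huv⟩
  haveI : Unique (MD 1) := by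
    refine ⟨⟨⟨fun _ _ _ _ => True, htop⟩⟩, ?_⟩
    rintro ⟨D, hD⟩
    apply Subtype.ext
    funext x y z w
    apply propext
    constructor
    · intro _; trivial
    · intro _
      have hxy : x = y := Subsingleton.elim x y
      subst hxy
      exact hD.diag x z w
  exact Nat.card_unique

lemma md_odd_empty {n : ℕ} (h3 : 3 ≤ n) (hodd : n % 2 = 1) : Nat.card (MD n) = 0 := by
  rw [Nat.card_eq_zero]
  left
  constructor
  rintro ⟨D, hD⟩
  have hpair : ∃ u v : Fin n, u ≠ v :=
    ⟨⟨0, by omega⟩, ⟨1, by omega⟩, by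
      intro hc; have := Fin.val_eq_of_eq hc; simp at this⟩
  have := card_even_of_ax hD hpair
  rw [Nat.card_eq_fintype_card, Fintype.card_fin] at this
  omega

lemma spCount_pow2 (d : ℕ) : spCount phi (2 ^ d) % 2 = 1 := by
  induction d with
  | zero => rw [pow_zero, spCount_eq, md_one]
  | succ k ih =>
    have h2 : (2 : ℕ) ^ (k + 1) = 2 * 2 ^ k := by ring
    have hh := halving (m := 2 ^ k) (by positivity)
    rw [spCount_eq, h2]
    have := Nat.ModEq.trans hh (by rw [← spCount_eq] : Nat.card (MD (2 ^ k)) ≡ spCount phi (2 ^ k) [MOD 2])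
    unfold Nat.ModEq at this
    omega

lemma spCount_not_pow2 {n : ℕ} (hn : 0 < n) (h : ∀ d : ℕ, n ≠ 2 ^ d) :
    spCount phi n % 2 = 0 := by
  induction n using Nat.strong_induction_on with
  | _ n ih =>
    rcases Nat.even_or_odd n with ⟨m, hm⟩ | hodd
    · -- n = 2 * m
      have hm' : n = 2 * m := by omega
      have hmpos : 0 < m := by omega
      have hmnot : ∀ d : ℕ, m ≠ 2 ^ d := by
        intro d hc
        exact h (d + 1) (by rw [hm', hc]; ring)
      have hrec := ih m (by omega) hmpos hmnot
      have hh := halving (m := m) hmpos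
      rw [spCount_eq, hm']
      rw [spCount_eq] at hrec
      unfold Nat.ModEq at hh
      omega
    · -- odd
      have h1 : n ≠ 1 := fun hc => h 0 (by rw [hc]; rfl)
      have h3 : 3 ≤ n ∧ n % 2 = 1 := by
        rcases hodd with ⟨k, hk⟩
        omega
      rw [spCount_eq, md_odd_empty h3.1 h3.2]


end Fischer


/-- **Fischer's quaternary counterexample (2002).**
There is a first-order sentence φ over the vocabulary consisting of a single quaternary
relation symbol such that the sequence Sp_φ(n) is not MC-finite. -/
theorem single_quaternary_relation_not_mcfinite :
    ∃ φ : (relLang rels4).Sentence, ¬ MCFinite (spCount φ) := by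
  refine ⟨Fischer.phi, ?_⟩
  intro hMC
  obtain ⟨r, p, hp, hper⟩ := hMC 2 le_rfl
  set d := r + p with hd
  have hrle : r ≤ 2 ^ d :=
    le_trans (Nat.le_of_lt (Nat.lt_two_pow_self (n := r)))
      (Nat.pow_le_pow_right (by norm_num) (by omega))
  have hplt : p < 2 ^ d :=
    lt_of_lt_of_le (Nat.lt_two_pow_self (n := p)) (Nat.pow_le_pow_right (by norm_num) (by omega))
  have hper' := hper (2 ^ d) hrle
  have h1 : spCount Fischer.phi (2 ^ d) % 2 = 1 := Fischer.spCount_pow2 d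
  have h0 : spCount Fischer.phi (2 ^ d + p) % 2 = 0 := by
    apply Fischer.spCount_not_pow2 (by positivity)
    intro e hc
    have hlt : 2 ^ d < 2 ^ e := by omega
    have hde : d < e := (Nat.pow_lt_pow_iff_right (by norm_num)).mp hlt
    have hle : 2 ^ (d + 1) ≤ 2 ^ e := Nat.pow_le_pow_right (by norm_num) (by omega)
    have heq : 2 ^ (d + 1) = 2 * 2 ^ d := by ring
    omega
  have := hper'
  unfold Nat.ModEq at this
  omega
end

section
/- Let f_M(n) denote the number of full iterated matching sequences over the vertex set [n] = {1,…,n}. Then f_M(n) = 0 for every n that is not a power of 2, and f_M(n) ≡ 1 (mod 2) whenever n = 2^m for some m ∈ ℕ. -/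
/-- The union E₁ ⊔ ⋯ ⊔ Eᵢ of the first `i` graphs of the list `E`. -/
def unionUpTo {V : Type} (E : List (SimpleGraph V)) (i : ℕ) : SimpleGraph V :=
  (E.take i).foldr (· ⊔ ·) ⊥

/-- `E = E₁,…,E_ℓ` is an iterated matching sequence: for each `i`, writing `U` for
`E₁ ∪ ⋯ ∪ E_{i-1}`, the connected components of `Eᵢ` are vertex-disjoint complete
bipartite graphs whose two vertex classes are two (distinct) connected components of
`U`, and every connected component of `U` is a vertex class of some such bipartite
graph. -/
def IsIteratedMatchingSeq {V : Type} (E : List (SimpleGraph V)) : Prop :=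
  ∀ i, i < E.length →
    ((∀ u v, (E.getD i ⊥).Adj u v →
        (unionUpTo E i).connectedComponentMk u ≠ (unionUpTo E i).connectedComponentMk v) ∧
     (∀ u v u' v', (E.getD i ⊥).Adj u v →
        (unionUpTo E i).connectedComponentMk u' = (unionUpTo E i).connectedComponentMk u →
        (unionUpTo E i).connectedComponentMk v' = (unionUpTo E i).connectedComponentMk v →
        (E.getD i ⊥).Adj u' v') ∧
     (∀ u v w, (E.getD i ⊥).Adj u v → (E.getD i ⊥).Adj v w →
        (unionUpTo E i).connectedComponentMk u = (unionUpTo E i).connectedComponentMk w) ∧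
     (∀ u, ∃ v, (E.getD i ⊥).Adj u v))

/-- A sequence of graphs is full if every pair of distinct vertices is an edge of one
of its members. -/
def IsFullSeq {V : Type} (E : List (SimpleGraph V)) : Prop :=
  ∀ u v : V, u ≠ v → ∃ i, i < E.length ∧ (E.getD i ⊥).Adj u v

/-- `f_M(n)`: the number of full iterated matching sequences over the vertex set [n]. -/
noncomputable def fM (n : ℕ) : ℕ :=
  Nat.card { E : List (SimpleGraph (Fin n)) // IsIteratedMatchingSeq E ∧ IsFullSeq E }



section Basic
variable {V : Type} (E : List (SimpleGraph V))

private lemma foldr_sup_init (l : List (SimpleGraph V)) (b : SimpleGraph V) :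
    l.foldr (· ⊔ ·) b = l.foldr (· ⊔ ·) ⊥ ⊔ b := by
  induction l with
  | nil => simp
  | cons a l ih => simp [List.foldr_cons, ih, sup_assoc]

lemma uut_succ (i : ℕ) :
    unionUpTo E (i + 1) = unionUpTo E i ⊔ E.getD i ⊥ := by
  unfold unionUpTo
  rw [List.take_succ]
  rcases lt_or_ge i E.length with h | h
  · rw [List.getElem?_eq_getElem h, List.getD_eq_getElem _ _ h]
    simp only [Option.toList_some, List.foldr_append, List.foldr_cons, List.foldr_nil]
    rw [foldr_sup_init]
    simp
  · rw [List.getElem?_eq_none h, List.getD_eq_default _ _ h]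
    simp

lemma uut_zero : unionUpTo E 0 = ⊥ := rfl

lemma uut_adj (i : ℕ) (u v : V) :
    (unionUpTo E i).Adj u v ↔ ∃ j, j < i ∧ (E.getD j ⊥).Adj u v := by
  induction i with
  | zero => simp [uut_zero]
  | succ i ih =>
    rw [uut_succ]
    constructor
    · rintro (h | h)
      · obtain ⟨j, hj, h⟩ := ih.mp h
        exact ⟨j, by omega, h⟩
      · exact ⟨i, by omega, h⟩
    · rintro ⟨j, hj, h⟩
      rcases Nat.lt_or_ge j i with hj' | hj'
      · exact Or.inl (ih.mpr ⟨j, hj', h⟩)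
      · have : j = i := by omega
        subst this; exact Or.inr h

lemma uut_mono {i j : ℕ} (h : i ≤ j) : unionUpTo E i ≤ unionUpTo E j := by
  induction j with
  | zero => simp_all [uut_zero]
  | succ j ih =>
    rcases Nat.lt_or_ge i (j+1) with h' | h'
    · exact le_trans (ih (by omega)) (by rw [uut_succ]; exact le_sup_left)
    · have : i = j + 1 := by omega
      subst this; exact le_rfl

end Basic

section Xor

lemma xor_lt_pow {a b n : ℕ} (ha : a < 2^n) (hb : b < 2^n) : a ^^^ b < 2^n :=
  Nat.xor_lt_two_pow ha hb

lemma tb_iff {a i : ℕ} (h : a < 2^(i+1)) : a.testBit i = true ↔ 2^i ≤ a := by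
  have hp : 0 < 2^i := Nat.two_pow_pos i
  have h2 : a < 2 * 2^i := by rw [pow_succ] at h; omega
  have hq : a / 2^i < 2 := (Nat.div_lt_iff_lt_mul hp).mpr (by omega)
  have hle : 2^i ≤ a ↔ 1 ≤ a / 2^i := (Nat.one_le_div_iff hp).symm
  rw [Nat.testBit_eq_decide_div_mod_eq]
  rw [Nat.mod_eq_of_lt hq]
  simp only [decide_eq_true_eq]
  omega

lemma tb_true_of_mem {a i : ℕ} (h1 : 2^i ≤ a) (h2 : a < 2^(i+1)) : a.testBit i = true :=
  (tb_iff h2).mpr h1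

lemma mem_of_tb {a i : ℕ} (h2 : a < 2^(i+1)) (h : a.testBit i = true) : 2^i ≤ a :=
  (tb_iff h2).mp h

lemma ge_of_tb {a i : ℕ} (h : a.testBit i = true) : 2^i ≤ a := by
  by_contra hc
  rw [Nat.testBit_lt_two_pow (by omega)] at h
  exact Bool.noConfusion h

lemma xmem {a b i : ℕ} (h1 : 2^i ≤ a) (h2 : a < 2^(i+1)) (hb : b < 2^i) :
    2^i ≤ a ^^^ b ∧ a ^^^ b < 2^(i+1) := by
  have hb' : b < 2^(i+1) := lt_of_lt_of_le hb (Nat.pow_le_pow_right (by norm_num) (by omega))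
  have hlt : a ^^^ b < 2^(i+1) := xor_lt_pow h2 hb'
  refine ⟨mem_of_tb hlt ?_, hlt⟩
  rw [Nat.testBit_xor, tb_true_of_mem h1 h2, Nat.testBit_lt_two_pow hb]
  rfl

lemma xcancel {a b i : ℕ} (h1 : 2^i ≤ a) (h2 : a < 2^(i+1)) (h3 : 2^i ≤ b)
    (h4 : b < 2^(i+1)) : a ^^^ b < 2^i := by
  have hlt : a ^^^ b < 2^(i+1) := xor_lt_pow h2 h4
  by_contra hc
  have := tb_true_of_mem (by omega) hlt
  rw [Nat.testBit_xor, tb_true_of_mem h1 h2, tb_true_of_mem h3 h4] at this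
  exact Bool.noConfusion this

end Xor

section Walk

lemma walk_closed {V : Type} {G : SimpleGraph V} {S : Set V}
    (hS : ∀ x y, x ∈ S → G.Adj x y → y ∈ S) :
    ∀ {u v : V}, G.Walk u v → u ∈ S → v ∈ S := by
  intro u v p
  induction p with
  | nil => exact fun h => h
  | cons h p ih => exact fun hu => ih (hS _ _ hu h)

lemma reach_closed {V : Type} {G : SimpleGraph V} {S : Set V}
    (hS : ∀ x y, x ∈ S → G.Adj x y → y ∈ S) {u v : V}
    (hu : u ∈ S) (h : G.Reachable u v) : v ∈ S := by
  obtain ⟨p⟩ := h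
  exact walk_closed hS p hu

end Walk

section Std

def stdG (m i : ℕ) : SimpleGraph (Fin (2^m)) where
  Adj u v := 2^i ≤ u.val ^^^ v.val ∧ u.val ^^^ v.val < 2^(i+1)
  symm := by
    refine ⟨fun u v ⟨h1, h2⟩ => ?_⟩
    rw [Nat.xor_comm] at h1 h2
    exact ⟨h1, h2⟩
  loopless := by
    refine ⟨fun u ⟨h1, h2⟩ => ?_⟩
    rw [Nat.xor_self] at h1
    have : 0 < 2^i := Nat.two_pow_pos i
    omega

def stdSeq (m : ℕ) : List (SimpleGraph (Fin (2^m))) := (List.range m).map (stdG m)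

lemma stdSeq_length (m : ℕ) : (stdSeq m).length = m := by simp [stdSeq]

lemma stdSeq_getD {m i : ℕ} (hi : i < m) : (stdSeq m).getD i ⊥ = stdG m i := by
  rw [List.getD_eq_getElem _ _ (by simpa [stdSeq] using hi)]
  simp [stdSeq]

lemma std_reach {m i : ℕ} (hi : i ≤ m) (u v : Fin (2^m)) :
    (unionUpTo (stdSeq m) i).Reachable u v ↔ u.val ^^^ v.val < 2^i := by
  constructor
  · intro h
    refine reach_closed (S := {w : Fin (2^m) | u.val ^^^ w.val < 2^i}) ?_ ?_ h
    · intro x y hx hadj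
      obtain ⟨j, hj, hadj⟩ := (uut_adj _ _ _ _).mp hadj
      have hjm : j < m := by omega
      rw [stdSeq_getD hjm] at hadj
      have hxy : x.val ^^^ y.val < 2^i :=
        lt_of_lt_of_le hadj.2 (Nat.pow_le_pow_right (by norm_num) (by omega))
      have : u.val ^^^ y.val = (u.val ^^^ x.val) ^^^ (x.val ^^^ y.val) := by
        rw [Nat.xor_assoc, ← Nat.xor_assoc x.val, Nat.xor_self, Nat.zero_xor]
      rw [Set.mem_setOf_eq, this]
      exact xor_lt_pow hx hxy
    · simp [Nat.xor_self, Nat.two_pow_pos]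
  · intro h
    rcases eq_or_ne u v with rfl | hne
    · exact SimpleGraph.Reachable.refl u
    · have hx0 : u.val ^^^ v.val ≠ 0 := by
        intro hc
        exact hne (Fin.ext (xor_eq_zero_iff.mp hc))
      set a := u.val ^^^ v.val with ha
      have hj : a.log2 < i := (Nat.log2_lt hx0).mpr h
      have hadj : (stdG m a.log2).Adj u v := ⟨Nat.log2_self_le hx0, Nat.lt_log2_self⟩
      have : (unionUpTo (stdSeq m) i).Adj u v := by
        rw [uut_adj]
        exact ⟨a.log2, hj, by rw [stdSeq_getD (by omega)]; exact hadj⟩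
      exact this.reachable

lemma std_mk_eq {m i : ℕ} (hi : i ≤ m) (u v : Fin (2^m)) :
    (unionUpTo (stdSeq m) i).connectedComponentMk u = (unionUpTo (stdSeq m) i).connectedComponentMk v
      ↔ u.val ^^^ v.val < 2^i := by
  rw [SimpleGraph.ConnectedComponent.eq, std_reach hi]

lemma xor_left_comm' (a b c : ℕ) : a ^^^ (b ^^^ c) = b ^^^ (a ^^^ c) := by
  rw [← Nat.xor_assoc, Nat.xor_comm a b, Nat.xor_assoc]

lemma std_isIMS (m : ℕ) : IsIteratedMatchingSeq (stdSeq m) := by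
  intro i hi
  rw [stdSeq_length] at hi
  have him : i ≤ m := le_of_lt hi
  rw [stdSeq_getD hi]
  refine ⟨?_, ?_, ?_, ?_⟩
  · intro u v h hc
    rw [std_mk_eq him] at hc
    have := h.1
    omega
  · intro u v u' v' h hu hv
    rw [std_mk_eq him] at hu hv
    have key : u'.val ^^^ v'.val = ((u.val ^^^ v.val) ^^^ (u'.val ^^^ u.val)) ^^^ (v'.val ^^^ v.val) := by
      apply Nat.eq_of_testBit_eq
      intro k
      simp only [Nat.testBit_xor]
      simp [Bool.xor_assoc, Bool.xor_comm, Bool.xor_left_comm]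
    have h1 := xmem h.1 h.2 hu
    have h2 := xmem h1.1 h1.2 hv
    constructor
    · rw [key]; exact h2.1
    · rw [key]; exact h2.2
  · intro u v w h1 h2
    rw [std_mk_eq him]
    have key : u.val ^^^ w.val = (u.val ^^^ v.val) ^^^ (v.val ^^^ w.val) := by
      rw [Nat.xor_assoc, ← Nat.xor_assoc v.val, Nat.xor_self, Nat.zero_xor]
    rw [key]
    exact xcancel h1.1 h1.2 h2.1 h2.2
  · intro u
    have hpow : (2:ℕ)^i < 2^m := Nat.pow_lt_pow_right one_lt_two hi
    refine ⟨⟨u.val ^^^ 2^i, xor_lt_pow u.isLt hpow⟩, ?_, ?_⟩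
    · show 2^i ≤ u.val ^^^ (u.val ^^^ 2^i)
      rw [← Nat.xor_assoc, Nat.xor_self, Nat.zero_xor]
    · show u.val ^^^ (u.val ^^^ 2^i) < 2^(i+1)
      rw [← Nat.xor_assoc, Nat.xor_self, Nat.zero_xor]
      exact Nat.pow_lt_pow_right one_lt_two (by omega)

lemma std_isFull (m : ℕ) : IsFullSeq (stdSeq m) := by
  intro u v hne
  have hx0 : u.val ^^^ v.val ≠ 0 := fun hc => hne (Fin.ext (xor_eq_zero_iff.mp hc))
  have hlt : u.val ^^^ v.val < 2^m := xor_lt_pow u.isLt v.isLt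
  have hj : (u.val ^^^ v.val).log2 < m := (Nat.log2_lt hx0).mpr hlt
  refine ⟨(u.val ^^^ v.val).log2, by rw [stdSeq_length]; exact hj, ?_⟩
  rw [stdSeq_getD hj]
  exact ⟨Nat.log2_self_le hx0, Nat.lt_log2_self⟩

section PartA

def cset {V : Type} (G : SimpleGraph V) (u : V) : Set V := {v | G.Reachable u v}

lemma ims_comp_ncard {n : ℕ} {E : List (SimpleGraph (Fin n))} (hE : IsIteratedMatchingSeq E) :
    ∀ i, i ≤ E.length → ∀ u, (cset (unionUpTo E i) u).ncard = 2^i := by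
  intro i
  induction i with
  | zero =>
    intro _ u
    have : cset (unionUpTo E 0) u = {u} := by
      ext v
      simp [cset, uut_zero, SimpleGraph.reachable_bot, eq_comm]
    rw [this, Set.ncard_singleton, pow_zero]
  | succ i ih =>
    intro hi u
    have hil : i < E.length := hi
    obtain ⟨c1, c2, c3, c4⟩ := hE i hil
    obtain ⟨v, huv⟩ := c4 u
    set U := unionUpTo E i with hU
    set Ei := E.getD i ⊥ with hEi
    have hU' : unionUpTo E (i+1) = U ⊔ Ei := uut_succ E i
    have hsplit : cset (unionUpTo E (i+1)) u = cset U u ∪ cset U v := by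
      apply Set.eq_of_subset_of_subset
      · intro y hy
        refine reach_closed (S := cset U u ∪ cset U v) ?_ ?_ hy
        · rintro x z hx hadj
          rw [hU', SimpleGraph.sup_adj] at hadj
          rcases hadj with hadj | hadj
          · rcases hx with hx | hx
            · exact Or.inl (hx.trans hadj.reachable)
            · exact Or.inr (hx.trans hadj.reachable)
          · rcases hx with hx | hx
            · -- x reachable from u in U, x ~ z in Ei : z in comp of v
              have hmkx : U.connectedComponentMk x = U.connectedComponentMk u :=
                (SimpleGraph.ConnectedComponent.eq.mpr hx).symm
              have hxv : Ei.Adj x v := c2 u v x v huv hmkx rfl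
              have := c3 v x z hxv.symm hadj
              exact Or.inr (SimpleGraph.ConnectedComponent.eq.mp this)
            · have hmkx : U.connectedComponentMk x = U.connectedComponentMk v :=
                (SimpleGraph.ConnectedComponent.eq.mpr hx).symm
              have hxu : Ei.Adj x u := c2 v u x u huv.symm hmkx rfl
              have := c3 u x z hxu.symm hadj
              exact Or.inl (SimpleGraph.ConnectedComponent.eq.mp this)
        · exact Or.inl (SimpleGraph.Reachable.refl u)
      · have hle : U ≤ unionUpTo E (i+1) := by rw [hU']; exact le_sup_left
        have hEile : Ei ≤ unionUpTo E (i+1) := by rw [hU']; exact le_sup_right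
        intro y hy
        rcases hy with hy | hy
        · exact SimpleGraph.Reachable.mono hle hy
        · exact ((hEile huv).reachable).trans (SimpleGraph.Reachable.mono hle hy)
    have hdisj : Disjoint (cset U u) (cset U v) := by
      rw [Set.disjoint_left]
      intro x hxu hxv
      have hxu' : U.Reachable u x := hxu
      have hxv' : U.Reachable v x := hxv
      exact c1 u v huv (SimpleGraph.ConnectedComponent.eq.mpr (hxu'.trans hxv'.symm))
    rw [hsplit, Set.ncard_union_eq hdisj (Set.toFinite _) (Set.toFinite _),
      ih (by omega) u, ih (by omega) v]
    rw [pow_succ]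
    ring

lemma ims_length {n : ℕ} (hn : 0 < n) {E : List (SimpleGraph (Fin n))}
    (h1 : IsIteratedMatchingSeq E) (h2 : IsFullSeq E) : n = 2^(E.length) := by
  have hu0 : cset (unionUpTo E E.length) (⟨0, hn⟩ : Fin n) = Set.univ := by
    ext v
    simp only [Set.mem_univ, iff_true]
    rcases eq_or_ne (⟨0, hn⟩ : Fin n) v with h | h
    · rw [← h]; exact SimpleGraph.Reachable.refl _
    · obtain ⟨i, hi, hadj⟩ := h2 _ v h
      exact ((uut_adj E E.length _ v).mpr ⟨i, hi, hadj⟩).reachable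
  have := ims_comp_ncard h1 E.length le_rfl ⟨0, hn⟩
  rw [hu0, Set.ncard_univ, Nat.card_eq_fintype_card, Fintype.card_fin] at this
  exact this

end PartA

section PermAct

variable {V : Type}

def permGraph (π : Equiv.Perm V) (g : SimpleGraph V) : SimpleGraph V where
  Adj u v := g.Adj (π.symm u) (π.symm v)
  symm := ⟨fun _ _ h => h.symm⟩
  loopless := ⟨fun _ h => g.irrefl h⟩

@[simp] lemma permGraph_adj (π : Equiv.Perm V) (g : SimpleGraph V) (u v : V) :
    (permGraph π g).Adj u v ↔ g.Adj (π.symm u) (π.symm v) := Iff.rfl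

@[simp] lemma permGraph_one (g : SimpleGraph V) : permGraph 1 g = g := by
  ext u v; exact Iff.rfl

lemma permGraph_mul (π ρ : Equiv.Perm V) (g : SimpleGraph V) :
    permGraph (π * ρ) g = permGraph π (permGraph ρ g) := by
  ext u v; exact Iff.rfl

@[simp] lemma permGraph_bot (π : Equiv.Perm V) : permGraph π (⊥ : SimpleGraph V) = ⊥ := by
  ext u v; simp [permGraph]

@[simp] lemma permGraph_sup (π : Equiv.Perm V) (g h : SimpleGraph V) :
    permGraph π (g ⊔ h) = permGraph π g ⊔ permGraph π h := by
  ext u v; simp [permGraph]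

lemma uut_map_perm (π : Equiv.Perm V) (E : List (SimpleGraph V)) (i : ℕ) :
    unionUpTo (E.map (permGraph π)) i = permGraph π (unionUpTo E i) := by
  unfold unionUpTo
  rw [← List.map_take]
  induction E.take i with
  | nil => simp
  | cons a l ih => simp [ih]

lemma reach_perm (π : Equiv.Perm V) (g : SimpleGraph V) (u v : V) :
    (permGraph π g).Reachable u v ↔ g.Reachable (π.symm u) (π.symm v) := by
  constructor
  · intro h
    exact h.map ⟨π.symm, fun h => h⟩
  · intro h
    have h2 : (permGraph π g).Reachable (π (π.symm u)) (π (π.symm v)) :=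
      h.map ⟨π, fun {a b} hh => by simpa [permGraph] using hh⟩
    simpa using h2

lemma mk_perm (π : Equiv.Perm V) (g : SimpleGraph V) (u v : V) :
    (permGraph π g).connectedComponentMk u = (permGraph π g).connectedComponentMk v ↔
      g.connectedComponentMk (π.symm u) = g.connectedComponentMk (π.symm v) := by
  rw [SimpleGraph.ConnectedComponent.eq, SimpleGraph.ConnectedComponent.eq, reach_perm]

lemma getD_map_perm (π : Equiv.Perm V) (E : List (SimpleGraph V)) (i : ℕ) :
    (E.map (permGraph π)).getD i ⊥ = permGraph π (E.getD i ⊥) := by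
  rcases lt_or_ge i E.length with h | h
  · rw [List.getD_eq_getElem _ _ (by simpa using h), List.getD_eq_getElem _ _ h]
    simp
  · rw [List.getD_eq_default _ _ (by simpa using h), List.getD_eq_default _ _ h]
    simp

lemma mk_uut_map (π : Equiv.Perm V) (E : List (SimpleGraph V)) (i : ℕ) (u v : V) :
    (unionUpTo (E.map (permGraph π)) i).connectedComponentMk u
      = (unionUpTo (E.map (permGraph π)) i).connectedComponentMk v ↔
    (unionUpTo E i).connectedComponentMk (π.symm u)
      = (unionUpTo E i).connectedComponentMk (π.symm v) := by
  rw [SimpleGraph.ConnectedComponent.eq, SimpleGraph.ConnectedComponent.eq,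
    uut_map_perm, reach_perm]

lemma act_IMS (π : Equiv.Perm V) {E : List (SimpleGraph V)} (hE : IsIteratedMatchingSeq E) :
    IsIteratedMatchingSeq (E.map (permGraph π)) := by
  intro i hi
  rw [List.length_map] at hi
  obtain ⟨c1, c2, c3, c4⟩ := hE i hi
  simp only [getD_map_perm, permGraph_adj, mk_uut_map]
  refine ⟨?_, ?_, ?_, ?_⟩
  · intro u v h hc
    exact c1 _ _ h ((mk_uut_map π E i u v).mp hc)
  · intro u v u' v' h hu hv
    exact c2 _ _ _ _ h hu hv
  · intro u v w h1 h2
    exact c3 _ _ _ h1 h2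
  · intro u
    obtain ⟨v, hv⟩ := c4 (π.symm u)
    exact ⟨π v, by simpa using hv⟩

lemma act_Full (π : Equiv.Perm V) {E : List (SimpleGraph V)} (hE : IsFullSeq E) :
    IsFullSeq (E.map (permGraph π)) := by
  intro u v huv
  obtain ⟨i, hi, hadj⟩ := hE (π.symm u) (π.symm v) (fun h => huv (by simpa using congrArg π h))
  refine ⟨i, by simpa using hi, ?_⟩
  rw [getD_map_perm]
  exact hadj

end PermAct

section Group

lemma xor_cancelr (a b : ℕ) : (a ^^^ b) ^^^ b = a := by
  rw [Nat.xor_assoc, Nat.xor_self, Nat.xor_zero]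

lemma xor_sub_cancel (u v c : ℕ) : (u ^^^ c) ^^^ (v ^^^ c) = u ^^^ v := by
  apply Nat.eq_of_testBit_eq
  intro k
  simp only [Nat.testBit_xor]
  simp [Bool.xor_assoc, Bool.xor_comm, Bool.xor_left_comm]

def GP (m : ℕ) (π : Equiv.Perm (Fin (2^m))) : Prop :=
  ∀ i : ℕ, ∀ u v : Fin (2^m), ((π u).val ^^^ (π v).val < 2^i ↔ u.val ^^^ v.val < 2^i)

def Gsub (m : ℕ) : Subgroup (Equiv.Perm (Fin (2^m))) where
  carrier := {π | GP m π}
  one_mem' := by intro i u v; rfl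
  mul_mem' := by
    intro π ρ hπ hρ i u v
    simp only [Equiv.Perm.mul_apply]
    rw [hπ i (ρ u) (ρ v), hρ i u v]
  inv_mem' := by
    intro π hπ i u v
    have := hπ i (π⁻¹ u) (π⁻¹ v)
    simpa using this.symm

lemma GP_pow {m : ℕ} {π : Equiv.Perm (Fin (2^m))} (h : GP m π) (k : ℕ) : GP m (π ^ k) := by
  induction k with
  | zero => intro i u v; simp
  | succ k ih =>
    intro i u v
    rw [pow_succ]
    simp only [Equiv.Perm.mul_apply]
    rw [ih i (π u) (π v), h i u v]

lemma pgroup_block {m : ℕ} {π : Equiv.Perm (Fin (2^m))} (h : GP m π) :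
    ∀ j, ∀ u : Fin (2^m), ((π ^ (2^j)) u).val ^^^ u.val < 2^(m - j) := by
  intro j
  induction j with
  | zero =>
    intro u
    exact xor_lt_pow (Fin.is_lt _) (Fin.is_lt u) |>.trans_le
      (Nat.pow_le_pow_right (by norm_num) (by omega))
  | succ j ih =>
    intro u
    set σ := π ^ (2^j) with hσdef
    have hσ : GP m σ := GP_pow h (2^j)
    have hps : π ^ (2^(j+1)) = σ * σ := by
      rw [pow_succ, pow_mul, sq]
    rw [hps]
    rw [show (σ * σ) u = σ (σ u) from rfl]
    rcases Nat.eq_zero_or_pos (m - j) with hmj | hmj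
    · have h1 : (σ u).val ^^^ u.val = 0 := by have := ih u; rw [hmj] at this; omega
      have h2 : σ u = u := Fin.ext (xor_eq_zero_iff.mp h1)
      rw [h2, h2]
      simp [Nat.xor_self, Nat.two_pow_pos]
    · set t := m - j - 1 with ht
      have htm : m - j = t + 1 := by omega
      have htm' : m - (j+1) = t := by omega
      rw [htm']
      have ha : (σ u).val ^^^ u.val < 2^(t+1) := by rw [← htm]; exact ih u
      have hb : (σ (σ u)).val ^^^ (σ u).val < 2^(t+1) := by rw [← htm]; exact ih (σ u)
      have key : (σ (σ u)).val ^^^ u.val = ((σ (σ u)).val ^^^ (σ u).val) ^^^ ((σ u).val ^^^ u.val) := by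
        rw [Nat.xor_assoc, ← Nat.xor_assoc (σ u).val, Nat.xor_self, Nat.zero_xor]
      rw [key]
      rcases Nat.lt_or_ge ((σ u).val ^^^ u.val) (2^t) with hcase | hcase
      · have : (σ (σ u)).val ^^^ (σ u).val < 2^t := by
          have := hσ t (σ u) u
          rw [this]
          exact hcase
        exact xor_lt_pow this hcase
      · have hbge : 2^t ≤ (σ (σ u)).val ^^^ (σ u).val := by
          by_contra hc
          have := (hσ t (σ u) u).mp (by omega)
          omega
        exact xcancel hbge hb hcase ha

lemma Gsub_pgroup (m : ℕ) : IsPGroup 2 (Gsub m) := by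
  intro g
  refine ⟨m, ?_⟩
  have hval : (g : Equiv.Perm (Fin (2^m))) ^ (2^m) = 1 := by
    apply Equiv.ext
    intro u
    have := pgroup_block g.2 m u
    rw [Nat.sub_self, pow_zero] at this
    have : ((((g : Equiv.Perm (Fin (2^m))) ^ (2^m)) u).val ^^^ u.val) = 0 := by omega
    exact Fin.ext (xor_eq_zero_iff.mp this)
  apply Subtype.ext
  rw [SubmonoidClass.coe_pow]
  simpa using hval

def xorPerm (m : ℕ) (c : Fin (2^m)) : Equiv.Perm (Fin (2^m)) :=
  Function.Involutive.toPerm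
    (fun u => ⟨u.val ^^^ c.val, xor_lt_pow u.isLt c.isLt⟩)
    (fun u => Fin.ext (xor_cancelr u.val c.val))

@[simp] lemma xorPerm_apply (m : ℕ) (c : Fin (2^m)) (u : Fin (2^m)) :
    (xorPerm m c u).val = u.val ^^^ c.val := rfl

@[simp] lemma xorPerm_symm_apply (m : ℕ) (c : Fin (2^m)) (u : Fin (2^m)) :
    ((xorPerm m c).symm u).val = u.val ^^^ c.val := rfl

lemma xorPerm_mem (m : ℕ) (c : Fin (2^m)) : GP m (xorPerm m c) := by
  intro i u v
  rw [show (xorPerm m c u).val ^^^ (xorPerm m c v).val = u.val ^^^ v.val from by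
    rw [xorPerm_apply, xorPerm_apply, xor_sub_cancel]]

def flipPerm (m i j : ℕ) (hi : i < m) (hij : i ≠ j) : Equiv.Perm (Fin (2^m)) :=
  Function.Involutive.toPerm
    (fun u => if u.val.testBit j
      then ⟨u.val ^^^ 2^i, xor_lt_pow u.isLt (Nat.pow_lt_pow_right one_lt_two hi)⟩
      else u)
    (by
      intro u
      by_cases h : u.val.testBit j
      · have htb : (u.val ^^^ 2^i).testBit j = true := by
          rw [Nat.testBit_xor, Nat.testBit_two_pow_of_ne hij, h]
          rfl
        simp only [h, if_true]
        simp only [htb, if_true]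
        exact Fin.ext (xor_cancelr u.val (2^i))
      · simp only [Bool.not_eq_true] at h
        simp [h])

lemma flipPerm_apply_true (m i j : ℕ) (hi : i < m) (hij : i ≠ j) (u : Fin (2^m))
    (h : u.val.testBit j = true) : (flipPerm m i j hi hij u).val = u.val ^^^ 2^i := by
  simp [flipPerm, Function.Involutive.toPerm, h]

lemma flipPerm_apply_false (m i j : ℕ) (hi : i < m) (hij : i ≠ j) (u : Fin (2^m))
    (h : u.val.testBit j = false) : flipPerm m i j hi hij u = u := by
  simp [flipPerm, Function.Involutive.toPerm, h]

lemma flipPerm_symm (m i j : ℕ) (hi : i < m) (hij : i ≠ j) :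
    (flipPerm m i j hi hij).symm = flipPerm m i j hi hij :=
  rfl

lemma flipPerm_mem (m i j : ℕ) (hi : i < m) (hij : i < j) :
    GP m (flipPerm m i j hi (Nat.ne_of_lt hij)) := by
  set f := flipPerm m i j hi (Nat.ne_of_lt hij) with hf
  have key : ∀ u v : Fin (2^m), (f u).val ^^^ (f v).val = u.val ^^^ v.val ∨
      (((f u).val ^^^ (f v).val = (u.val ^^^ v.val) ^^^ 2^i) ∧ (u.val ^^^ v.val).testBit j = true) := by
    intro u v
    by_cases hu : u.val.testBit j <;> by_cases hv : v.val.testBit j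
    · left
      rw [flipPerm_apply_true m i j _ _ u hu, flipPerm_apply_true m i j _ _ v hv,
        xor_sub_cancel]
    · right
      constructor
      · rw [flipPerm_apply_true m i j _ _ u hu, flipPerm_apply_false m i j _ _ v (by simpa using hv)]
        rw [Nat.xor_comm u.val (2^i), Nat.xor_assoc, Nat.xor_comm (2^i)]
      · rw [Nat.testBit_xor, hu, (by simpa using hv : v.val.testBit j = false)]
        rfl
    · right
      constructor
      · rw [flipPerm_apply_false m i j _ _ u (by simpa using hu), flipPerm_apply_true m i j _ _ v hv]
        rw [← Nat.xor_assoc]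
      · rw [Nat.testBit_xor, hv, (by simpa using hu : u.val.testBit j = false)]
        rfl
    · left
      rw [flipPerm_apply_false m i j _ _ u (by simpa using hu),
        flipPerm_apply_false m i j _ _ v (by simpa using hv)]
  intro t u v
  rcases key u v with h | ⟨h, htb⟩
  · rw [h]
  · rw [h]
    have hge : 2^j ≤ u.val ^^^ v.val := ge_of_tb htb
    have htb2 : ((u.val ^^^ v.val) ^^^ 2^i).testBit j = true := by
      rw [Nat.testBit_xor, htb, Nat.testBit_two_pow_of_ne (Nat.ne_of_lt hij)]
      rfl
    have hge2 : 2^j ≤ (u.val ^^^ v.val) ^^^ 2^i := ge_of_tb htb2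
    rcases le_or_gt t j with htj | htj
    · have h1 : ¬ ((u.val ^^^ v.val) ^^^ 2^i < 2^t) := by
        have : (2:ℕ)^t ≤ 2^j := Nat.pow_le_pow_right (by norm_num) htj
        omega
      have h2 : ¬ (u.val ^^^ v.val < 2^t) := by
        have : (2:ℕ)^t ≤ 2^j := Nat.pow_le_pow_right (by norm_num) htj
        omega
      rw [iff_of_false h1 h2]
    · have hpi : (2:ℕ)^i < 2^t := Nat.pow_lt_pow_right one_lt_two (by omega)
      constructor
      · intro h'
        have heq : u.val ^^^ v.val = ((u.val ^^^ v.val) ^^^ 2^i) ^^^ 2^i := (xor_cancelr _ _).symm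
        rw [heq]
        exact xor_lt_pow h' hpi
      · intro h'
        exact xor_lt_pow h' hpi

end Group

section Action

variable (m : ℕ)

abbrev SeqSub := { E : List (SimpleGraph (Fin (2^m))) // IsIteratedMatchingSeq E ∧ IsFullSeq E }

instance : SMul (Gsub m) (SeqSub m) :=
  ⟨fun g E => ⟨E.1.map (permGraph g.1), act_IMS _ E.2.1, act_Full _ E.2.2⟩⟩

lemma smul_def (g : Gsub m) (E : SeqSub m) : (g • E).1 = E.1.map (permGraph g.1) := rfl

instance : MulAction (Gsub m) (SeqSub m) where
  one_smul E := by
    apply Subtype.ext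
    rw [smul_def]
    have h1 : ((1 : Gsub m) : Equiv.Perm (Fin (2^m))) = 1 := rfl
    rw [h1]
    have : permGraph (1 : Equiv.Perm (Fin (2^m))) = id := funext fun g => permGraph_one g
    rw [this, List.map_id]
  mul_smul g h E := by
    apply Subtype.ext
    rw [smul_def, smul_def, smul_def, List.map_map]
    have h1 : ((g * h : Gsub m) : Equiv.Perm (Fin (2^m))) = (g : Equiv.Perm (Fin (2^m))) * (h : Equiv.Perm (Fin (2^m))) := rfl
    rw [h1]
    have : permGraph ((g : Equiv.Perm (Fin (2^m))) * (h : Equiv.Perm (Fin (2^m)))) = permGraph (g : Equiv.Perm (Fin (2^m))) ∘ permGraph (h : Equiv.Perm (Fin (2^m))) :=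
      funext fun x => permGraph_mul _ _ x
    rw [this]

lemma seqsub_length (E : SeqSub m) : E.1.length = m := by
  have h := ims_length (Nat.two_pow_pos m) E.2.1 E.2.2
  exact (Nat.pow_right_injective le_rfl h.symm)

instance : Finite (SeqSub m) := by
  have : Finite (SimpleGraph (Fin (2^m))) := by
    apply Finite.of_injective (fun G => G.Adj)
    intro G H h
    ext u v
    exact iff_of_eq (congrFun (congrFun h u) v)
  apply Finite.of_injective (fun (E : SeqSub m) (k : Fin m) => E.1.getD k ⊥)
  intro E F h
  apply Subtype.ext
  apply List.ext_getElem (by rw [seqsub_length, seqsub_length])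
  intro k h1 h2
  have hk : k < m := by rw [seqsub_length] at h1; exact h1
  have hck := congrFun h ⟨k, hk⟩
  simp only at hck
  rwa [List.getD_eq_getElem _ _ h1, List.getD_eq_getElem _ _ h2] at hck

def stdE : SeqSub m := ⟨stdSeq m, std_isIMS m, std_isFull m⟩

lemma perm_stdG (i : ℕ) (him : i < m) {π : Equiv.Perm (Fin (2^m))} (hπ : π ∈ Gsub m) :
    permGraph π (stdG m i) = stdG m i := by
  have hp : GP m π⁻¹ := (Gsub m).inv_mem hπ
  ext u v
  have e1 := hp (i+1) u v
  have e2 := hp i u v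
  have hsymm : ∀ w : Fin (2^m), π.symm w = π⁻¹ w := fun w => rfl
  show (stdG m i).Adj (π.symm u) (π.symm v) ↔ (stdG m i).Adj u v
  show (2^i ≤ (π.symm u).val ^^^ (π.symm v).val ∧ (π.symm u).val ^^^ (π.symm v).val < 2^(i+1)) ↔ _
  rw [hsymm, hsymm]
  show _ ↔ (2^i ≤ u.val ^^^ v.val ∧ u.val ^^^ v.val < 2^(i+1))
  set A := (π⁻¹ u).val ^^^ (π⁻¹ v).val
  set B := u.val ^^^ v.val
  have p1 : (0:ℕ) < 2^i := Nat.two_pow_pos i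
  set p := (2:ℕ)^i
  set q := (2:ℕ)^(i+1)
  omega

lemma stdE_fixed : stdE m ∈ MulAction.fixedPoints (Gsub m) (SeqSub m) := by
  intro g
  apply Subtype.ext
  rw [smul_def]
  show (stdSeq m).map (permGraph g.1) = stdSeq m
  apply List.ext_getElem (by simp)
  intro k h1 h2
  have hk : k < m := by simpa [stdSeq_length] using h2
  rw [List.getElem_map]
  have : (stdSeq m)[k] = stdG m k := by
    have := stdSeq_getD hk
    rwa [List.getD_eq_getElem _ _ h2] at this
  rw [this, perm_stdG m k hk g.2]

end Action

section Unique

variable {m : ℕ}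

lemma fixed_inv {E : SeqSub m} (hE : E ∈ MulAction.fixedPoints (Gsub m) (SeqSub m))
    {π : Equiv.Perm (Fin (2^m))} (hπ : π ∈ Gsub m) (i : ℕ) (x y : Fin (2^m)) :
    (E.1.getD i ⊥).Adj (π x) (π y) ↔ (E.1.getD i ⊥).Adj x y := by
  have h1 : E.1.map (permGraph π) = E.1 := congrArg Subtype.val (hE ⟨π, hπ⟩)
  have h2 : permGraph π (E.1.getD i ⊥) = E.1.getD i ⊥ := by
    rw [← getD_map_perm π E.1 i, h1]
  have h3 : ∀ a b : Fin (2^m), (E.1.getD i ⊥).Adj a b ↔ (E.1.getD i ⊥).Adj (π.symm a) (π.symm b) := by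
    intro a b
    conv_lhs => rw [← h2]
    exact Iff.rfl
  have h4 := h3 (π x) (π y)
  simpa using h4

lemma fixed_eq_std {E : SeqSub m} (hE : E ∈ MulAction.fixedPoints (Gsub m) (SeqSub m)) :
    E = stdE m := by
  have hlen := seqsub_length m E
  have hpos : (0:ℕ) < 2^m := Nat.two_pow_pos m
  set z0 : Fin (2^m) := ⟨0, hpos⟩ with hz0
  have claim : ∀ i, i < m → (∀ j, j < i → E.1.getD j ⊥ = stdG m j) → E.1.getD i ⊥ = stdG m i := by
    intro i him hpre
    have hU : unionUpTo E.1 i = unionUpTo (stdSeq m) i := by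
      unfold unionUpTo
      congr 1
      apply List.ext_getElem
      · simp [hlen, stdSeq_length]
      · intro k h1 h2
        have hk : k < i := by
          simp only [List.length_take] at h1
          omega
        have hkm : k < m := by omega
        rw [List.getElem_take, List.getElem_take]
        have hk2 : k < (stdSeq m).length := by rw [stdSeq_length]; omega
        have e1 : E.1[k] = E.1.getD k ⊥ := (List.getD_eq_getElem _ _ (by omega)).symm
        have e2 : (stdSeq m)[k]'hk2 = stdG m k := by
          have h := stdSeq_getD hkm
          rwa [List.getD_eq_getElem _ _ hk2] at h
        rw [e1, e2, hpre k hk]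
    have hmk : ∀ u v : Fin (2^m),
        ((unionUpTo E.1 i).connectedComponentMk u = (unionUpTo E.1 i).connectedComponentMk v)
          ↔ u.val ^^^ v.val < 2^i := by
      intro u v
      rw [hU]
      exact std_mk_eq (le_of_lt him) u v
    obtain ⟨c1, c2, c3, c4⟩ := E.2.1 i (by rw [hlen]; exact him)
    have htrans : ∀ (c : Fin (2^m)) (x y : Fin (2^m)),
        (E.1.getD i ⊥).Adj (xorPerm m c x) (xorPerm m c y) ↔ (E.1.getD i ⊥).Adj x y :=
      fun c x y => fixed_inv hE (xorPerm_mem m c) i x y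
    have hbase : ∀ x y : Fin (2^m),
        (E.1.getD i ⊥).Adj x y ↔ (E.1.getD i ⊥).Adj z0 ⟨x.val ^^^ y.val, xor_lt_pow x.isLt y.isLt⟩ := by
      intro x y
      have h := htrans x x y
      have e1 : xorPerm m x x = z0 := Fin.ext (by simp [Nat.xor_self, hz0])
      have e2 : xorPerm m x y = ⟨x.val ^^^ y.val, xor_lt_pow x.isLt y.isLt⟩ :=
        Fin.ext (by simp [Nat.xor_comm])
      rw [e1, e2] at h
      exact h.symm
    have keyA : ∀ (a : ℕ) (ha : a < 2^m), (E.1.getD i ⊥).Adj z0 ⟨a, ha⟩ →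
        2^i ≤ a ∧ a < 2^(i+1) := by
      intro a ha hadj
      have ha0 : 2^i ≤ a := by
        by_contra hc
        apply c1 z0 ⟨a, ha⟩ hadj
        apply (hmk _ _).mpr
        show (0:ℕ) ^^^ a < 2^i
        rw [Nat.zero_xor]
        omega
      have hane : a ≠ 0 := by
        have : (0:ℕ) < 2^i := Nat.two_pow_pos i
        omega
      have hjm : a.log2 < m := (Nat.log2_lt hane).mpr ha
      have hij : i ≤ a.log2 := by
        by_contra hc
        have hcontr : a < 2^i := (Nat.log2_lt (k := i) hane).mp (by omega)
        omega
      rcases eq_or_lt_of_le hij with heq | hlt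
      · refine ⟨ha0, ?_⟩
        have := @Nat.lt_log2_self a
        rw [← heq] at this
        exact this
      · exfalso
        set j := a.log2 with hj
        have hπ : flipPerm m i j him (Nat.ne_of_lt hlt) ∈ Gsub m := flipPerm_mem m i j him hlt
        have hflip := fixed_inv hE hπ i z0 ⟨a, ha⟩
        have e1 : flipPerm m i j him (Nat.ne_of_lt hlt) z0 = z0 :=
          flipPerm_apply_false m i j him (Nat.ne_of_lt hlt) z0 (Nat.zero_testBit j)
        have htb : a.testBit j = true :=
          tb_true_of_mem (Nat.log2_self_le hane) Nat.lt_log2_self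
        have e2 : flipPerm m i j him (Nat.ne_of_lt hlt) ⟨a, ha⟩ =
            ⟨a ^^^ 2^i, xor_lt_pow ha (Nat.pow_lt_pow_right one_lt_two him)⟩ :=
          Fin.ext (flipPerm_apply_true m i j him (Nat.ne_of_lt hlt) ⟨a, ha⟩ htb)
        rw [e1, e2] at hflip
        have hadj2 := hflip.mpr hadj
        have hmkeq := c3 ⟨a, ha⟩ z0 _ hadj.symm hadj2
        have := (hmk _ _).mp hmkeq
        rw [show a ^^^ (a ^^^ 2^i) = 2^i from by
          rw [← Nat.xor_assoc, Nat.xor_self, Nat.zero_xor]] at this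
        omega
    obtain ⟨v0, hv0⟩ := c4 z0
    have hv0' : (E.1.getD i ⊥).Adj z0 ⟨v0.val, v0.isLt⟩ := hv0
    have hv0b := keyA v0.val v0.isLt hv0'
    ext u v
    show (E.1.getD i ⊥).Adj u v ↔ (2^i ≤ u.val ^^^ v.val ∧ u.val ^^^ v.val < 2^(i+1))
    rw [hbase u v]
    constructor
    · intro h
      exact keyA _ _ h
    · rintro ⟨h1, h2⟩
      refine c2 z0 v0 z0 ⟨u.val ^^^ v.val, xor_lt_pow u.isLt v.isLt⟩ hv0 rfl ?_
      apply (hmk _ _).mpr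
      exact xcancel h1 h2 hv0b.1 hv0b.2
  have hall : ∀ i, i < m → E.1.getD i ⊥ = stdG m i := by
    intro i
    induction i using Nat.strong_induction_on with
    | _ i ih =>
      intro him
      exact claim i him (fun j hj => ih j hj (by omega))
  apply Subtype.ext
  show E.1 = stdSeq m
  apply List.ext_getElem (by rw [hlen, stdSeq_length])
  intro k h1 h2
  have hk : k < m := by rwa [hlen] at h1
  have e1 : E.1[k] = E.1.getD k ⊥ := (List.getD_eq_getElem _ _ h1).symm
  have e2 : (stdSeq m)[k]'h2 = stdG m k := by
    have h := stdSeq_getD hk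
    rwa [List.getD_eq_getElem _ _ h2] at h
  rw [e1, e2, hall k hk]

end Unique

/-- **Counting full iterated matching sequences (Specker).**
f_M(n) = 0 whenever n is not a power of 2, and f_M(n) ≡ 1 (mod 2) whenever n = 2^m. -/
theorem fM_eq_zero_or_odd :
    (∀ n : ℕ, (¬ ∃ m : ℕ, n = 2 ^ m) → fM n = 0) ∧
    (∀ m : ℕ, fM (2 ^ m) ≡ 1 [MOD 2]) := by
  constructor
  · intro n hn
    rcases Nat.eq_zero_or_pos n with rfl | hpos
    · have hall : ∀ E : List (SimpleGraph (Fin 0)), IsIteratedMatchingSeq E ∧ IsFullSeq E := by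
        intro E
        refine ⟨?_, fun u => u.elim0⟩
        intro i hi
        exact ⟨fun u => u.elim0, fun u => u.elim0, fun u => u.elim0, fun u => u.elim0⟩
      have hinf : Infinite { E : List (SimpleGraph (Fin 0)) // IsIteratedMatchingSeq E ∧ IsFullSeq E } := by
        apply Infinite.of_injective
          (fun k : ℕ => (⟨List.replicate k ⊥, hall _⟩ :
            { E : List (SimpleGraph (Fin 0)) // IsIteratedMatchingSeq E ∧ IsFullSeq E }))
        intro a b h
        have := congrArg (fun E : { E : List (SimpleGraph (Fin 0)) // IsIteratedMatchingSeq E ∧ IsFullSeq E } => E.1.length) h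
        simpa using this
      exact Nat.card_eq_zero_of_infinite
    · have hemp : IsEmpty { E : List (SimpleGraph (Fin n)) // IsIteratedMatchingSeq E ∧ IsFullSeq E } :=
        ⟨fun E => hn ⟨E.1.length, ims_length hpos E.2.1 E.2.2⟩⟩
      exact Nat.card_of_isEmpty
  · intro m
    haveI : Fact (Nat.Prime 2) := ⟨Nat.prime_two⟩
    have hmod := (Gsub_pgroup m).card_modEq_card_fixedPoints (SeqSub m)
    have hfix : Nat.card (MulAction.fixedPoints (Gsub m) (SeqSub m)) = 1 := by
      rw [Nat.card_eq_one_iff_unique]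
      refine ⟨⟨fun a b => Subtype.ext ((fixed_eq_std a.2).trans (fixed_eq_std b.2).symm)⟩,
        ⟨⟨stdE m, stdE_fixed m⟩⟩⟩
    show Nat.card (SeqSub m) ≡ 1 [MOD 2]
    exact hmod.trans (by rw [hfix])
end Std
end

section
/- Let p be a prime and let f_{M_p}(n) denote the number of full iterated p-matching sequences over the vertex set [n] = {1,…,n}. Then f_{M_p}(n) = 0 for every n that is not a power of p, and f_{M_p}(n) ≡ 1 (mod p) whenever n = p^m for some m ∈ ℕ. -/
/-- `E = E₁,…,E_ℓ` is an iterated p-matching sequence: for each `i`, writing `U` for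
`E₁ ∪ ⋯ ∪ E_{i-1}`, the connected components of `Eᵢ` are vertex-disjoint complete
p-partite graphs whose `p` vertex classes are `p` connected components of `U`, and
every connected component of `U` is a vertex class of some such p-partite graph.
Concretely: edges of `Eᵢ` join distinct components of `U`; adjacency in `Eᵢ` only
depends on the `U`-components of the endpoints; neighbours (in `Eᵢ`) of a common
vertex lying in distinct `U`-components are adjacent; and every vertex has, in `Eᵢ`,
neighbours in exactly `p − 1` distinct `U`-components. -/
def IsIteratedPMatchingSeq {V : Type} (p : ℕ) (E : List (SimpleGraph V)) : Prop :=
  ∀ i, i < E.length →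
    ((∀ u v, (E.getD i ⊥).Adj u v →
        (unionUpTo E i).connectedComponentMk u ≠ (unionUpTo E i).connectedComponentMk v) ∧
     (∀ u v u' v', (E.getD i ⊥).Adj u v →
        (unionUpTo E i).connectedComponentMk u' = (unionUpTo E i).connectedComponentMk u →
        (unionUpTo E i).connectedComponentMk v' = (unionUpTo E i).connectedComponentMk v →
        (E.getD i ⊥).Adj u' v') ∧
     (∀ u v w, (E.getD i ⊥).Adj u v → (E.getD i ⊥).Adj u w →
        (unionUpTo E i).connectedComponentMk v ≠ (unionUpTo E i).connectedComponentMk w →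
        (E.getD i ⊥).Adj v w) ∧
     (∀ u, Nat.card { c : (unionUpTo E i).ConnectedComponent //
        ∃ v, (E.getD i ⊥).Adj u v ∧ (unionUpTo E i).connectedComponentMk v = c } = p - 1))

/-- `f_{M_p}(n)`: the number of full iterated p-matching sequences over [n]. -/
noncomputable def fMp (p n : ℕ) : ℕ :=
  Nat.card { E : List (SimpleGraph (Fin n)) // IsIteratedPMatchingSeq p E ∧ IsFullSeq E }

section Basic
variable {V : Type} {p : ℕ}

lemma unionUpTo_zero (E : List (SimpleGraph V)) : unionUpTo E 0 = ⊥ := rfl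

lemma foldr_sup_append (l : List (SimpleGraph V)) (a : SimpleGraph V) :
    (l ++ [a]).foldr (· ⊔ ·) ⊥ = l.foldr (· ⊔ ·) ⊥ ⊔ a := by
  induction l with
  | nil => simp
  | cons b l ih => simp [ih, sup_assoc]

lemma unionUpTo_succ (E : List (SimpleGraph V)) (i : ℕ) :
    unionUpTo E (i + 1) = unionUpTo E i ⊔ E.getD i ⊥ := by
  by_cases h : i < E.length
  · have ht : E.take (i+1) = E.take i ++ [E[i]] := by
      rw [List.take_succ, List.getElem?_eq_getElem h]; rfl
    unfold unionUpTo
    rw [ht, foldr_sup_append, List.getD_eq_getElem _ _ h]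
  · push_neg at h
    unfold unionUpTo
    rw [List.take_of_length_le h, List.take_of_length_le (le_trans h (Nat.le_succ _)),
      List.getD_eq_default _ _ h]
    simp

lemma getD_le_unionUpTo (E : List (SimpleGraph V)) {j i : ℕ} (h : j < i) :
    E.getD j ⊥ ≤ unionUpTo E i := by
  induction i with
  | zero => omega
  | succ i ih =>
    rw [unionUpTo_succ]
    rcases Nat.lt_succ_iff_lt_or_eq.mp h with h' | h'
    · exact le_trans (ih h') le_sup_left
    · subst h'; exact le_sup_right

end Basic
section Struct
variable {V : Type} {p : ℕ}

open SimpleGraph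

lemma mk_eq_iff (U : SimpleGraph V) (u v : V) :
    U.connectedComponentMk u = U.connectedComponentMk v ↔ U.Reachable u v :=
  ConnectedComponent.eq

lemma reach_succ_iff {E : List (SimpleGraph V)} (h : IsIteratedPMatchingSeq p E)
    (i : ℕ) (u v : V) :
    (unionUpTo E (i + 1)).Reachable u v ↔
      (unionUpTo E i).Reachable u v ∨
        ∃ w, (E.getD i ⊥).Adj u w ∧ (unionUpTo E i).Reachable w v := by
  by_cases hi : i < E.length
  swap
  · push_neg at hi
    rw [unionUpTo_succ, List.getD_eq_default _ _ hi]
    simp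
  obtain ⟨h1, h2, h3, h4⟩ := h i hi
  set U := unionUpTo E i with hU
  set A := E.getD i ⊥ with hA
  constructor
  · intro hr
    rw [unionUpTo_succ, SimpleGraph.reachable_iff_reflTransGen] at hr
    induction hr using Relation.ReflTransGen.head_induction_on with
    | refl => exact Or.inl (Reachable.refl v)
    | @head a b hab ht ih =>
      rcases (by exact hab : (U ⊔ A).Adj a b) with hUab | hAab
      · rcases ih with hP | ⟨w, hAw, hPw⟩
        · exact Or.inl (hUab.reachable.trans hP)
        · refine Or.inr ⟨w, ?_, hPw⟩
          exact h2 b w a w hAw ((mk_eq_iff U a b).mpr hUab.reachable) rfl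
      · rcases ih with hP | ⟨w, hAw, hPw⟩
        · exact Or.inr ⟨b, hAab, hP⟩
        · by_cases hmk : U.connectedComponentMk a = U.connectedComponentMk w
          · exact Or.inl (((mk_eq_iff U a w).mp hmk).trans hPw)
          · exact Or.inr ⟨w, h3 b a w hAab.symm hAw hmk, hPw⟩
  · rintro (hP | ⟨w, hAw, hPw⟩)
    · exact hP.mono (by rw [unionUpTo_succ]; exact le_sup_left)
    · have hle1 : U ≤ unionUpTo E (i+1) := by rw [unionUpTo_succ]; exact le_sup_left
      have hle2 : A ≤ unionUpTo E (i+1) := by rw [unionUpTo_succ]; exact le_sup_right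
      exact ((hle2 hAw).reachable).trans (hPw.mono hle1)

end Struct
section Card
open SimpleGraph
variable {V : Type} [Fintype V] {p : ℕ}

lemma mk_eq_iff' (U : SimpleGraph V) (v w : V) :
    U.connectedComponentMk v = U.connectedComponentMk w ↔ U.Reachable w v :=
  ⟨fun h => ((mk_eq_iff U v w).mp h).symm, fun h => (mk_eq_iff U v w).mpr h.symm⟩

lemma card_reach {E : List (SimpleGraph V)} (h : IsIteratedPMatchingSeq p E) (hp : 1 ≤ p) :
    ∀ i, i ≤ E.length → ∀ u : V, Nat.card {v // (unionUpTo E i).Reachable u v} = p ^ i := by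
  intro i
  induction i with
  | zero =>
    intro _ u
    haveI : Unique {v // (unionUpTo E 0).Reachable u v} :=
      { default := ⟨u, Reachable.refl u⟩,
        uniq := by
          rintro ⟨v, hv⟩
          rw [unionUpTo_zero] at hv
          exact Subtype.ext (SimpleGraph.reachable_bot.mp hv).symm }
    simp [Nat.card_unique]
  | succ i ih =>
    intro hlen u
    have hi : i < E.length := hlen
    obtain ⟨h1, h2, h3, h4⟩ := h i hi
    classical
    set U := unionUpTo E i with hU
    set A := E.getD i ⊥ with hA
    set Q : U.ConnectedComponent → Prop :=
      fun c => c = U.connectedComponentMk u ∨ ∃ w, A.Adj u w ∧ U.connectedComponentMk w = c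
      with hQdef
    have e1 : {v // (unionUpTo E (i+1)).Reachable u v} ≃
        {v // U.Reachable u v ∨ ∃ w, A.Adj u w ∧ U.Reachable w v} :=
      Equiv.subtypeEquivRight (fun v => reach_succ_iff h i u v)
    have e2 : {v // U.Reachable u v ∨ ∃ w, A.Adj u w ∧ U.Reachable w v} ≃
        (Σ c : {c // Q c}, {v // U.connectedComponentMk v = c.1}) :=
      { toFun := fun x => ⟨⟨U.connectedComponentMk x.1, by
          rcases x.2 with hP | ⟨w, hw, hr⟩
          · exact Or.inl ((mk_eq_iff' U x.1 u).mpr hP)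
          · exact Or.inr ⟨w, hw, (mk_eq_iff U w x.1).mpr hr⟩⟩, ⟨x.1, rfl⟩⟩
        invFun := fun x => ⟨x.2.1, by
          rcases x.1.2 with hceq | ⟨w, hw, hwc⟩
          · exact Or.inl ((mk_eq_iff' U x.2.1 u).mp (x.2.2.trans hceq))
          · exact Or.inr ⟨w, hw, (mk_eq_iff' U x.2.1 w).mp (x.2.2.trans hwc.symm)⟩⟩
        left_inv := fun x => Subtype.ext rfl
        right_inv := by
          rintro ⟨⟨c, hc⟩, ⟨v, hv⟩⟩
          have hv' : c = U.connectedComponentMk v := hv.symm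
          subst hv'
          rfl }
    have hfib : ∀ (c : U.ConnectedComponent),
        Nat.card {v // U.connectedComponentMk v = c} = p ^ i := by
      intro c
      induction c using SimpleGraph.ConnectedComponent.ind with
      | _ w =>
        rw [Nat.card_congr (Equiv.subtypeEquivRight (fun v => mk_eq_iff' U v w))]
        exact ih (le_of_lt hi) w
    have hnot : ¬ (∃ w, A.Adj u w ∧ U.connectedComponentMk w = U.connectedComponentMk u) := by
      rintro ⟨w, hw, hmk⟩
      exact h1 u w hw hmk.symm
    have hQ : Nat.card {c // Q c} = p := by
      have hins : {c | Q c} =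
          insert (U.connectedComponentMk u) {c | ∃ w, A.Adj u w ∧ U.connectedComponentMk w = c} := by
        ext c; simp [hQdef, Set.mem_insert_iff]
      calc Nat.card {c // Q c} = ({c | Q c} : Set U.ConnectedComponent).ncard :=
            Nat.card_coe_set_eq _
        _ = ({c | ∃ w, A.Adj u w ∧ U.connectedComponentMk w = c} :
              Set U.ConnectedComponent).ncard + 1 := by
            rw [hins, Set.ncard_insert_of_notMem (by simpa [Set.mem_setOf_eq] using hnot)]
        _ = (p - 1) + 1 := by
            rw [← Nat.card_coe_set_eq]
            congr 1
            exact h4 u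
        _ = p := Nat.sub_add_cancel hp
    haveI : Finite U.ConnectedComponent := Quot.finite _
    haveI := Fintype.ofFinite {c // Q c}
    haveI : ∀ c : {c // Q c}, Fintype {v // U.connectedComponentMk v = c.1} :=
      fun c => Fintype.ofFinite _
    calc Nat.card {v // (unionUpTo E (i+1)).Reachable u v}
        = Nat.card (Σ c : {c // Q c}, {v // U.connectedComponentMk v = c.1}) :=
          Nat.card_congr (e1.trans e2)
      _ = ∑ c : {c // Q c}, Fintype.card {v // U.connectedComponentMk v = c.1} := by
          rw [Nat.card_eq_fintype_card, Fintype.card_sigma]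
      _ = ∑ _c : {c // Q c}, p ^ i := by
          apply Finset.sum_congr rfl
          intro c _
          rw [← Nat.card_eq_fintype_card]
          exact hfib c.1
      _ = Fintype.card {c // Q c} * p ^ i := by
          rw [Finset.sum_const, smul_eq_mul, Finset.card_univ]
      _ = p ^ (i + 1) := by
          rw [← Nat.card_eq_fintype_card, hQ, pow_succ']

end Card
section Full
open SimpleGraph

lemma full_length {p n : ℕ} (hp : 1 ≤ p) (hn : 0 < n) {E : List (SimpleGraph (Fin n))}
    (h : IsIteratedPMatchingSeq p E) (hf : IsFullSeq E) : n = p ^ E.length := by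
  have u0 : Fin n := ⟨0, hn⟩
  have hall : ∀ v, (unionUpTo E E.length).Reachable u0 v := by
    intro v
    by_cases hv : u0 = v
    · exact hv ▸ Reachable.refl u0
    · obtain ⟨i, hi, hadj⟩ := hf u0 v hv
      exact ((getD_le_unionUpTo E hi) hadj).reachable
  have := card_reach h hp E.length le_rfl u0
  rw [Nat.card_congr (Equiv.subtypeUnivEquiv hall)] at this
  simp at this
  omega

lemma replicate_seq (p k : ℕ) : IsIteratedPMatchingSeq p (List.replicate k (⊥ : SimpleGraph (Fin 0))) := by
  intro i _
  refine ⟨fun u => u.elim0, fun u => u.elim0, fun u => u.elim0, fun u => u.elim0⟩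

lemma fMp_eq_zero {p : ℕ} (hp : 1 ≤ p) (n : ℕ) (hn : ¬ ∃ m : ℕ, n = p ^ m) : fMp p n = 0 := by
  rcases Nat.eq_zero_or_pos n with rfl | hpos
  · have hinj : Function.Injective
        (fun k => (⟨List.replicate k ⊥, replicate_seq p k, fun u => u.elim0⟩ :
          { E : List (SimpleGraph (Fin 0)) // IsIteratedPMatchingSeq p E ∧ IsFullSeq E })) := by
      intro a b hab
      have := congrArg (fun x => x.1.length) hab
      simpa using this
    haveI := Infinite.of_injective _ hinj
    exact Nat.card_eq_zero_of_infinite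
  · have : IsEmpty { E : List (SimpleGraph (Fin n)) // IsIteratedPMatchingSeq p E ∧ IsFullSeq E } := by
      constructor
      rintro ⟨E, hE, hEf⟩
      exact hn ⟨E.length, full_length hp hpos hE hEf⟩
    exact Nat.card_of_isEmpty
end Full
section Canonical
open SimpleGraph

/-- At level `j`, two elements of `Fin (p^m)` are in the same block iff their
values are congruent mod `p^(m-j)`. -/
def blockRel (p m j : ℕ) (u v : Fin (p ^ m)) : Prop :=
  ((p : ℤ)) ^ (m - j) ∣ (u.val : ℤ) - v.val

lemma dvd_iff_of_modeq {d n x y : ℤ} (hdn : d ∣ n) (h : x ≡ y [ZMOD n]) :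
    d ∣ x ↔ d ∣ y := by
  have h' : x ≡ y [ZMOD d] := h.of_dvd hdn
  constructor
  · intro hd
    exact Int.modEq_zero_iff_dvd.mp (h'.symm.trans (Int.modEq_zero_iff_dvd.mpr hd))
  · intro hd
    exact Int.modEq_zero_iff_dvd.mp (h'.trans (Int.modEq_zero_iff_dvd.mpr hd))

namespace blockRel

variable {p m : ℕ}

lemma refl (j : ℕ) (u : Fin (p ^ m)) : blockRel p m j u u := by simp [blockRel]

lemma symm {j : ℕ} {u v : Fin (p ^ m)} (h : blockRel p m j u v) : blockRel p m j v u := by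
  unfold blockRel at *
  have := dvd_neg.mpr h
  rwa [neg_sub] at this

lemma trans {j : ℕ} {u v w : Fin (p ^ m)} (h1 : blockRel p m j u v)
    (h2 : blockRel p m j v w) : blockRel p m j u w := by
  have := dvd_add h1 h2
  simpa [blockRel] using this

lemma mono {j j' : ℕ} (hj : j ≤ j') {u v : Fin (p ^ m)} (h : blockRel p m j u v) :
    blockRel p m j' u v :=
  dvd_trans (pow_dvd_pow _ (Nat.sub_le_sub_left hj m)) h

lemma zero_iff (hp : 2 ≤ p) {u v : Fin (p ^ m)} : blockRel p m 0 u v ↔ u = v := by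
  constructor
  · intro h
    have habs : |(u.val : ℤ) - v.val| < (p : ℤ) ^ m := by
      have hu : (u.val : ℤ) < (p : ℤ) ^ m := by exact_mod_cast u.2
      have hv : (v.val : ℤ) < (p : ℤ) ^ m := by exact_mod_cast v.2
      have hu0 : (0 : ℤ) ≤ (u.val : ℤ) := by positivity
      have hv0 : (0 : ℤ) ≤ (v.val : ℤ) := by positivity
      rw [abs_lt]
      omega
    have h0 : (u.val : ℤ) - v.val = 0 := by
      refine Int.eq_zero_of_abs_lt_dvd ?_ habs
      simpa [blockRel] using h
    have : u.val = v.val := by omega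
    exact Fin.ext this
  · rintro rfl; exact refl 0 u

lemma top (j : ℕ) (hj : m ≤ j) (u v : Fin (p ^ m)) : blockRel p m j u v := by
  simp [blockRel, Nat.sub_eq_zero_of_le hj]

lemma pow_sub_dvd (j : ℕ) : ((p:ℤ)) ^ (m - j) ∣ ((p:ℤ)) ^ m := pow_dvd_pow _ (Nat.sub_le m j)

lemma val_add_modeq (u a : Fin (p ^ m)) :
    (((u + a).val : ℤ)) ≡ (u.val : ℤ) + a.val [ZMOD ((p : ℤ) ^ m)] := by
  have : (u + a).val = (u.val + a.val) % (p ^ m) := Fin.val_add u a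
  rw [this]
  push_cast
  exact Int.emod_emod_of_dvd _ dvd_rfl

lemma add_right (j : ℕ) (u v c : Fin (p ^ m)) :
    blockRel p m j (u + c) (v + c) ↔ blockRel p m j u v := by
  unfold blockRel
  refine dvd_iff_of_modeq (pow_sub_dvd j) ?_
  have h1 := val_add_modeq u c
  have h2 := val_add_modeq v c
  have := h1.sub h2
  calc ((u + c).val : ℤ) - ((v + c).val : ℤ)
      ≡ ((u.val : ℤ) + c.val) - ((v.val : ℤ) + c.val) [ZMOD ((p:ℤ) ^ m)] := this
    _ = (u.val : ℤ) - v.val := by ring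

lemma add_left (j : ℕ) (u a b : Fin (p ^ m)) [NeZero (p ^ m)] :
    blockRel p m j (u + a) (u + b) ↔ blockRel p m j a b := by
  rw [add_comm u a, add_comm u b]
  exact add_right j a b u

end blockRel

/-- The `i`-th canonical graph: joins distinct level-`i` blocks inside the same
level-`i+1` block. -/
def canG (p m i : ℕ) : SimpleGraph (Fin (p ^ m)) where
  Adj u v := blockRel p m (i + 1) u v ∧ ¬ blockRel p m i u v
  symm := by
    refine ⟨?_⟩; rintro u v ⟨h1, h2⟩
    exact ⟨h1.symm, fun hc => h2 hc.symm⟩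
  loopless := by
    refine ⟨?_⟩; rintro u ⟨h1, h2⟩
    exact h2 (blockRel.refl i u)

def canList (p m : ℕ) : List (SimpleGraph (Fin (p ^ m))) :=
  List.ofFn (fun i : Fin m => canG p m i.val)

lemma canList_length (p m : ℕ) : (canList p m).length = m := by simp [canList]

lemma canList_getD (p m : ℕ) {i : ℕ} (hi : i < m) :
    (canList p m).getD i ⊥ = canG p m i := by
  rw [List.getD_eq_getElem _ _ (by simp [canList_length, hi])]
  simp [canList]

lemma can_union_adj (p m : ℕ) (hp : 2 ≤ p) :
    ∀ i, i ≤ m → ∀ u v, (unionUpTo (canList p m) i).Adj u v ↔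
      u ≠ v ∧ blockRel p m i u v := by
  intro i
  induction i with
  | zero =>
    intro _ u v
    rw [unionUpTo_zero]
    simp only [SimpleGraph.bot_adj, false_iff]
    rintro ⟨hne, hb⟩
    exact hne (blockRel.zero_iff hp |>.mp hb)
  | succ i ih =>
    intro hi u v
    rw [unionUpTo_succ, SimpleGraph.sup_adj, ih (by omega), canList_getD p m (by omega)]
    constructor
    · rintro (⟨hne, hb⟩ | ⟨hb, hnb⟩)
      · exact ⟨hne, hb.mono (by omega)⟩
      · refine ⟨?_, hb⟩
        rintro rfl
        exact hnb (blockRel.refl i u)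
    · rintro ⟨hne, hb⟩
      by_cases hbi : blockRel p m i u v
      · exact Or.inl ⟨hne, hbi⟩
      · exact Or.inr ⟨hb, hbi⟩

lemma can_union_reach (p m : ℕ) (hp : 2 ≤ p) {i : ℕ} (hi : i ≤ m) (u v : Fin (p ^ m)) :
    (unionUpTo (canList p m) i).Reachable u v ↔ blockRel p m i u v := by
  constructor
  · intro h
    rw [SimpleGraph.reachable_iff_reflTransGen] at h
    induction h with
    | refl => exact blockRel.refl i u
    | tail _ hadj ih =>
      exact ih.trans ((can_union_adj p m hp i hi _ _).mp hadj).2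
  · intro h
    by_cases hne : u = v
    · exact hne ▸ SimpleGraph.Reachable.refl u
    · exact ((can_union_adj p m hp i hi u v).mpr ⟨hne, h⟩).reachable

end Canonical
section CanPred
open SimpleGraph

lemma keydvd' (p k t : ℕ) (hp : 0 < p) : p ^ (k + 1) ∣ t * p ^ k ↔ p ∣ t := by
  rw [pow_succ, mul_comm (p ^ k) p, Nat.mul_dvd_mul_iff_right (pow_pos hp k)]

lemma keydvdZ' (p k : ℕ) (t : ℤ) (hp : 0 < p) :
    (p : ℤ) ^ (k + 1) ∣ t * (p : ℤ) ^ k ↔ (p : ℤ) ∣ t := by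
  rw [pow_succ, mul_comm ((p:ℤ) ^ k) (p:ℤ),
    mul_dvd_mul_iff_right (pow_ne_zero _ (by exact_mod_cast hp.ne' : (p:ℤ) ≠ 0))]

lemma keydvd (p m i : ℕ) (hp : 2 ≤ p) (hi : i < m) (t : ℕ) :
    p ^ (m - i) ∣ t * p ^ (m - i - 1) ↔ p ∣ t := by
  have h : m - i = (m - i - 1) + 1 := by omega
  conv_lhs => rw [h]
  exact keydvd' p (m - i - 1) t (by omega)

lemma keydvdZ (p m i : ℕ) (hp : 2 ≤ p) (hi : i < m) (t : ℤ) :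
    (p : ℤ) ^ (m - i) ∣ t * (p : ℤ) ^ (m - i - 1) ↔ (p : ℤ) ∣ t := by
  have h : m - i = (m - i - 1) + 1 := by omega
  conv_lhs => rw [h]
  exact keydvdZ' p (m - i - 1) t (by omega)

lemma blockRel_add_self (p m j : ℕ) (u a : Fin (p ^ m)) :
    blockRel p m j u (u + a) ↔ (p : ℤ) ^ (m - j) ∣ (a.val : ℤ) := by
  unfold blockRel
  rw [dvd_iff_of_modeq (blockRel.pow_sub_dvd j)
    (((Int.ModEq.refl _).sub (blockRel.val_add_modeq u a)) :
      (u.val : ℤ) - ((u + a).val : ℤ) ≡ (u.val : ℤ) - ((u.val : ℤ) + a.val) [ZMOD _])]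
  rw [show (u.val : ℤ) - ((u.val : ℤ) + a.val) = -(a.val : ℤ) by ring, dvd_neg]

lemma can_iterated (p m : ℕ) (hp : 2 ≤ p) : IsIteratedPMatchingSeq p (canList p m) := by
  haveI : NeZero (p ^ m) := ⟨(pow_pos (by omega : 0 < p) m).ne'⟩
  intro i hi
  rw [canList_length] at hi
  rw [canList_getD p m hi]
  have hmk : ∀ u v : Fin (p ^ m),
      (unionUpTo (canList p m) i).connectedComponentMk u =
        (unionUpTo (canList p m) i).connectedComponentMk v ↔ blockRel p m i u v :=
    fun u v => (mk_eq_iff _ u v).trans (can_union_reach p m hp (le_of_lt hi) u v)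
  refine ⟨?_, ?_, ?_, ?_⟩
  · rintro u v ⟨h1, h2⟩
    rw [ne_eq, hmk]
    exact h2
  · rintro u v u' v' ⟨hb, hnb⟩ hu hv
    rw [hmk] at hu hv
    refine ⟨((hu.mono (by omega)).trans hb).trans ((hv.mono (by omega)).symm), ?_⟩
    intro hc
    exact hnb ((hu.symm.trans hc).trans hv)
  · rintro u v w ⟨hbv, _⟩ ⟨hbw, _⟩ hne
    rw [ne_eq, hmk] at hne
    exact ⟨hbv.symm.trans hbw, hne⟩
  · intro u
    have hppos : 0 < p ^ (m - i - 1) := pow_pos (by omega) _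
    have hlt : ∀ j : Fin (p - 1), (j.val + 1) * p ^ (m - i - 1) < p ^ m := by
      intro j
      have hj := j.2
      calc (j.val + 1) * p ^ (m - i - 1) < p * p ^ (m - i - 1) :=
            (Nat.mul_lt_mul_right hppos).mpr (by omega)
        _ = p ^ (m - i) := by rw [← pow_succ']; congr 1; omega
        _ ≤ p ^ m := Nat.pow_le_pow_right (by omega) (by omega)
    set cf : Fin (p - 1) → Fin (p ^ m) :=
      fun j => ⟨(j.val + 1) * p ^ (m - i - 1), hlt j⟩ with hcf
    have hsub : m - (i + 1) = m - i - 1 := by omega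
    have hadj : ∀ j : Fin (p - 1), (canG p m i).Adj u (u + cf j) := by
      intro j
      constructor
      · rw [blockRel_add_self, hsub]
        push_cast
        simp only [hcf]; push_cast; exact dvd_mul_left _ _
      · rw [blockRel_add_self]
        intro hdvd
        have hN : p ^ (m - i) ∣ (j.val + 1) * p ^ (m - i - 1) := by
          have : ((p : ℤ)) ^ (m - i) = (((p ^ (m - i) : ℕ)) : ℤ) := by push_cast; ring
          rw [this] at hdvd
          exact_mod_cast hdvd
        have := Nat.le_of_dvd (by omega) ((keydvd p m i hp hi _).mp hN)
        have hj := j.2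
        omega
    set f : Fin (p - 1) → { c : (unionUpTo (canList p m) i).ConnectedComponent //
        ∃ v, (canG p m i).Adj u v ∧ (unionUpTo (canList p m) i).connectedComponentMk v = c } :=
      fun j => ⟨(unionUpTo (canList p m) i).connectedComponentMk (u + cf j),
        ⟨u + cf j, hadj j, rfl⟩⟩ with hf
    have hinj : Function.Injective f := by
      intro j j' hjj
      have h1 : blockRel p m i (u + cf j) (u + cf j') := by
        rw [← hmk]
        exact congrArg Subtype.val hjj
      rw [blockRel.add_left] at h1
      have h2 : (p : ℤ) ^ (m - i) ∣ ((j.val : ℤ) - j'.val) * (p : ℤ) ^ (m - i - 1) := by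
        have : ((cf j).val : ℤ) - ((cf j').val : ℤ) =
            ((j.val : ℤ) - j'.val) * (p : ℤ) ^ (m - i - 1) := by
          simp only [hcf]
          push_cast
          ring
        unfold blockRel at h1
        rwa [this] at h1
      have h3 := (keydvdZ p m i hp hi _).mp h2
      have h4 : (j.val : ℤ) - j'.val = 0 := by
        refine Int.eq_zero_of_abs_lt_dvd h3 ?_
        have hj := j.2; have hj' := j'.2
        rw [abs_lt]
        constructor <;> [skip; skip] <;> push_cast <;> omega
      exact Fin.ext (by omega)
    have hsurj : Function.Surjective f := by
      rintro ⟨c, v, hadjv, rfl⟩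
      have hva : v = u + (v - u) := by abel
      obtain ⟨hb1, hb2⟩ := hadjv
      rw [hva, blockRel_add_self, hsub] at hb1
      rw [hva, blockRel_add_self] at hb2
      set a := v - u with ha
      have hdvd : p ^ (m - i - 1) ∣ a.val := by
        have : ((p : ℤ)) ^ (m - i - 1) = (((p ^ (m - i - 1) : ℕ)) : ℤ) := by push_cast; ring
        rw [this] at hb1
        exact_mod_cast hb1
      set b := a.val / p ^ (m - i - 1) with hbdef
      have hab : a.val = b * p ^ (m - i - 1) := (Nat.div_mul_cancel hdvd).symm
      set r := b % p with hrdef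
      have hr0 : r ≠ 0 := by
        intro h0
        apply hb2
        have hpb : p ∣ b := Nat.dvd_of_mod_eq_zero h0
        have : p ^ (m - i) ∣ a.val := by
          rw [hab]
          exact (keydvd p m i hp hi b).mpr hpb
        have hcast : ((p : ℤ)) ^ (m - i) = (((p ^ (m - i) : ℕ)) : ℤ) := by push_cast; ring
        rw [hcast]
        exact_mod_cast this
      have hrlt : r < p := Nat.mod_lt _ (by omega)
      refine ⟨⟨r - 1, by omega⟩, ?_⟩
      apply Subtype.ext
      show (unionUpTo (canList p m) i).connectedComponentMk (u + cf ⟨r - 1, by omega⟩) = _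
      rw [hmk]; suffices hs : blockRel p m i (u + cf ⟨r - 1, by omega⟩) (u + a) by rwa [← hva] at hs
      rw [blockRel.add_left]
      show blockRel p m i (cf ⟨r - 1, by omega⟩) a
      unfold blockRel
      have hcfval : ((cf ⟨r - 1, by omega⟩).val : ℤ) = (r : ℤ) * (p : ℤ) ^ (m - i - 1) := by
        simp only [hcf]
        push_cast [Nat.cast_sub (by omega : 1 ≤ r)]
        ring
      have haval : ((a.val : ℤ)) = (b : ℤ) * (p : ℤ) ^ (m - i - 1) := by
        rw [hab]; push_cast; ring
      rw [hcfval, haval, show (r : ℤ) * (p:ℤ) ^ (m - i - 1) - (b : ℤ) * (p:ℤ) ^ (m - i - 1)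
        = ((r : ℤ) - b) * (p:ℤ) ^ (m - i - 1) by ring]
      rw [keydvdZ p m i hp hi]
      have hmod : ((b % p : ℕ) : ℤ) = (b : ℤ) % (p : ℤ) := by push_cast; ring
      rw [hrdef, hmod]
      have : (p : ℤ) ∣ (b : ℤ) - (b : ℤ) % (p : ℤ) := Int.dvd_self_sub_of_emod_eq rfl
      have := dvd_neg.mpr this
      rwa [neg_sub] at this
    rw [Nat.card_congr (Equiv.ofBijective f ⟨hinj, hsurj⟩).symm]
    simp

lemma can_full (p m : ℕ) (hp : 2 ≤ p) : IsFullSeq (canList p m) := by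
  intro u v hne
  have hm : blockRel p m m u v := blockRel.top m le_rfl u v
  have key : ∀ k, blockRel p m k u v →
      ∃ i, i < m ∧ ¬ blockRel p m i u v ∧ blockRel p m (i + 1) u v := by
    intro k
    induction k with
    | zero => intro h0; exact absurd ((blockRel.zero_iff hp).mp h0) hne
    | succ k ih =>
      intro hbk
      by_cases h : blockRel p m k u v
      · exact ih h
      · by_cases hk : k < m
        · exact ⟨k, hk, h, hbk⟩
        · exact absurd (blockRel.top k (by omega) u v) h
  obtain ⟨i, hi, h1, h2⟩ := key m hm
  exact ⟨i, by rw [canList_length]; exact hi,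
    by rw [canList_getD p m hi]; exact ⟨h2, h1⟩⟩

end CanPred
section Action
open SimpleGraph
variable {V : Type}

instance permGraphMulAction : MulAction (Equiv.Perm V) (SimpleGraph V) where
  smul g G := { Adj := fun a b => G.Adj (g⁻¹ a) (g⁻¹ b)
                symm := ⟨fun a b h => h.symm⟩
                loopless := ⟨fun a h => G.irrefl h⟩ }
  one_smul G := by ext a b; simp [HSMul.hSMul, SMul.smul]
  mul_smul g h G := by ext a b; simp [HSMul.hSMul, SMul.smul, Equiv.Perm.mul_apply]

lemma smul_adj (g : Equiv.Perm V) (G : SimpleGraph V) (a b : V) :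
    (g • G).Adj a b ↔ G.Adj (g⁻¹ a) (g⁻¹ b) := Iff.rfl

lemma smul_bot (g : Equiv.Perm V) : g • (⊥ : SimpleGraph V) = ⊥ := by
  ext a b; simp [smul_adj]

lemma smul_sup (g : Equiv.Perm V) (G H : SimpleGraph V) :
    g • (G ⊔ H) = g • G ⊔ g • H := by
  ext a b; simp [smul_adj]

instance permListMulAction : MulAction (Equiv.Perm V) (List (SimpleGraph V)) where
  smul g E := E.map (g • ·)
  one_smul E := by
    show E.map _ = E
    simp
  mul_smul g h E := by
    show E.map _ = (E.map _).map _
    rw [List.map_map]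
    apply List.map_congr_left
    intro G _
    simp [mul_smul]

lemma smul_list_def (g : Equiv.Perm V) (E : List (SimpleGraph V)) :
    g • E = E.map (g • ·) := rfl

lemma smul_length (g : Equiv.Perm V) (E : List (SimpleGraph V)) :
    (g • E).length = E.length := by simp [smul_list_def]

lemma smul_getD (g : Equiv.Perm V) (E : List (SimpleGraph V)) (i : ℕ) :
    (g • E).getD i ⊥ = g • (E.getD i ⊥) := by
  by_cases hi : i < E.length
  · rw [List.getD_eq_getElem _ _ (by simpa [smul_length] using hi),
      List.getD_eq_getElem _ _ hi]
    simp [smul_list_def]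
  · push_neg at hi
    rw [List.getD_eq_default _ _ (by simpa [smul_length] using hi),
      List.getD_eq_default _ _ hi, smul_bot]

lemma smul_unionUpTo (g : Equiv.Perm V) (E : List (SimpleGraph V)) (i : ℕ) :
    unionUpTo (g • E) i = g • unionUpTo E i := by
  unfold unionUpTo
  rw [smul_list_def, ← List.map_take]
  induction E.take i with
  | nil => simp [smul_bot]
  | cons G l ih => simp [ih, smul_sup]

/-- The isomorphism from `G` to `g • G` given by `g`. -/
def smulIso (g : Equiv.Perm V) (G : SimpleGraph V) : G ≃g (g • G) :=
  ⟨g, by intro a b; simp [smul_adj]⟩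

lemma smul_reachable (g : Equiv.Perm V) (G : SimpleGraph V) (a b : V) :
    (g • G).Reachable a b ↔ G.Reachable (g⁻¹ a) (g⁻¹ b) := by
  constructor
  · intro h
    have := h.map (smulIso g G).symm.toHom
    simpa [smulIso] using this
  · intro h
    have := h.map (smulIso g G).toHom
    simpa [smulIso] using this

lemma smul_mk_eq (g : Equiv.Perm V) (G : SimpleGraph V) (a b : V) :
    (g • G).connectedComponentMk a = (g • G).connectedComponentMk b ↔
      G.connectedComponentMk (g⁻¹ a) = G.connectedComponentMk (g⁻¹ b) := by
  rw [mk_eq_iff, mk_eq_iff, smul_reachable]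

/-- Components of `g • G` biject with components of `G`. -/
noncomputable def smulCCEquiv (g : Equiv.Perm V) (G : SimpleGraph V) :
    (g • G).ConnectedComponent ≃ G.ConnectedComponent where
  toFun := SimpleGraph.ConnectedComponent.map (smulIso g G).symm.toHom
  invFun := SimpleGraph.ConnectedComponent.map (smulIso g G).toHom
  left_inv := by
    intro c
    induction c using SimpleGraph.ConnectedComponent.ind with
    | _ v => simp [smulIso]
  right_inv := by
    intro c
    induction c using SimpleGraph.ConnectedComponent.ind with
    | _ v => simp [smulIso]

lemma smulCCEquiv_mk (g : Equiv.Perm V) (G : SimpleGraph V) (v : V) :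
    smulCCEquiv g G ((g • G).connectedComponentMk v) = G.connectedComponentMk (g⁻¹ v) := by
  simp [smulCCEquiv, smulIso, Equiv.Perm.inv_def]

lemma smul_iterated {p : ℕ} {E : List (SimpleGraph V)} (g : Equiv.Perm V)
    (h : IsIteratedPMatchingSeq p E) : IsIteratedPMatchingSeq p (g • E) := by
  intro i hi
  rw [smul_length] at hi
  obtain ⟨h1, h2, h3, h4⟩ := h i hi
  rw [smul_getD, smul_unionUpTo]
  refine ⟨?_, ?_, ?_, ?_⟩
  · intro u v hadj
    rw [smul_adj] at hadj
    rw [ne_eq, smul_mk_eq]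
    exact h1 _ _ hadj
  · intro u v u' v' hadj hu hv
    rw [smul_adj] at hadj ⊢
    rw [smul_mk_eq] at hu hv
    exact h2 _ _ _ _ hadj hu hv
  · intro u v w hadj1 hadj2 hne
    rw [smul_adj] at hadj1 hadj2 ⊢
    rw [ne_eq, smul_mk_eq] at hne
    exact h3 _ _ _ hadj1 hadj2 hne
  · intro u
    rw [← h4 (g⁻¹ u)]
    apply Nat.card_congr
    refine Equiv.subtypeEquiv (smulCCEquiv g (unionUpTo E i)) ?_
    intro c
    induction c using SimpleGraph.ConnectedComponent.ind with
    | _ w =>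
      rw [smulCCEquiv_mk]
      constructor
      · rintro ⟨v, hadj, hmk⟩
        refine ⟨g⁻¹ v, hadj, ?_⟩
        rw [mk_eq_iff, ← smul_reachable g, ← mk_eq_iff]
        exact hmk
      · rintro ⟨v, hadj, hmk⟩
        refine ⟨g v, by simpa [smul_adj] using hadj, ?_⟩
        rw [smul_mk_eq]
        simpa using hmk

lemma smul_full {E : List (SimpleGraph V)} (g : Equiv.Perm V)
    (h : IsFullSeq E) : IsFullSeq (g • E) := by
  intro u v huv
  obtain ⟨i, hi, hadj⟩ := h (g⁻¹ u) (g⁻¹ v) (fun hc => huv (by simpa using congrArg g hc))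
  exact ⟨i, by simpa [smul_length] using hi, by rw [smul_getD, smul_adj]; exact hadj⟩

end Action
section Subgroup

lemma val_nsmul {N : ℕ} [NeZero N] (k : ℕ) (x : Fin N) :
    (k • x).val = (k * x.val) % N := by
  induction k with
  | zero => simp [Nat.pos_of_ne_zero (NeZero.ne N)]
  | succ k ih =>
    rw [succ_nsmul, Fin.val_add, ih, Nat.mod_add_mod, Nat.succ_mul]

lemma addClosed_eq (p m i : ℕ) [NeZero (p ^ m)] (hp : 2 ≤ p) (hi : i ≤ m) (S : Set (Fin (p ^ m)))
    (h0 : (0 : Fin (p ^ m)) ∈ S) (hadd : ∀ a b, a ∈ S → b ∈ S → a + b ∈ S)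
    (hcard : Nat.card S = p ^ i) :
    S = {x : Fin (p ^ m) | p ^ (m - i) ∣ x.val} := by
  have hnsmul : ∀ (k : ℕ) (a : Fin (p ^ m)), a ∈ S → k • a ∈ S := by
    intro k a ha
    induction k with
    | zero => simpa using h0
    | succ k ih => rw [succ_nsmul]; exact hadd _ _ ih ha
  have hneg : ∀ a ∈ S, -a ∈ S := by
    intro a ha
    have h1 : (p ^ m) • a = 0 := by
      apply Fin.ext
      rw [val_nsmul]
      simp
    have h2 : (p ^ m - 1) • a ∈ S := hnsmul _ a ha
    have h3 : (p ^ m - 1) • a = -a := by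
      have : (p ^ m - 1) • a + a = 0 := by
        rw [← succ_nsmul, Nat.sub_add_cancel (Nat.one_le_iff_ne_zero.mpr (NeZero.ne _))]
        exact h1
      exact eq_neg_of_add_eq_zero_left this
    rwa [h3] at h2
  set S' : AddSubgroup (Fin (p ^ m)) :=
    { carrier := S
      zero_mem' := h0
      add_mem' := fun ha hb => hadd _ _ ha hb
      neg_mem' := fun ha => hneg _ ha } with hS'
  have hsub : S ⊆ {x : Fin (p ^ m) | p ^ (m - i) ∣ x.val} := by
    intro x hx
    have hx' : (x : Fin (p ^ m)) ∈ S' := hx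
    have hz : (Nat.card S') • (⟨x, hx'⟩ : S') = 0 := card_nsmul_eq_zero'
    have hzz : (Nat.card S') • x = 0 := by
      have h := congrArg (AddSubgroup.subtype S') hz
      rw [map_nsmul, map_zero] at h
      exact h
    have hcard' : Nat.card S' = p ^ i := hcard
    rw [hcard'] at hzz
    have hval : (p ^ i * x.val) % (p ^ m) = 0 := by
      have := congrArg Fin.val hzz
      rwa [val_nsmul] at this
    have hdvd : p ^ m ∣ p ^ i * x.val := Nat.dvd_of_mod_eq_zero hval
    have hsplit : p ^ m = p ^ i * p ^ (m - i) := by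
      rw [← pow_add]; congr 1; omega
    have hdvd2 : p ^ i * p ^ (m - i) ∣ p ^ i * x.val := by
      rw [← hsplit]; exact hdvd
    exact (Nat.mul_dvd_mul_iff_left (pow_pos (by omega : 0 < p) i)).mp hdvd2
  have hMcard : Nat.card {x : Fin (p ^ m) | p ^ (m - i) ∣ x.val} = p ^ i := by
    have hd : 0 < p ^ (m - i) := pow_pos (by omega) _
    have e : Fin (p ^ i) ≃ {x : Fin (p ^ m) | p ^ (m - i) ∣ x.val} :=
      { toFun := fun j => ⟨⟨j.val * p ^ (m - i), by
          calc j.val * p ^ (m - i) < p ^ i * p ^ (m - i) :=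
                (Nat.mul_lt_mul_right hd).mpr j.2
            _ = p ^ m := by rw [← pow_add]; congr 1; omega⟩,
          Dvd.intro _ (mul_comm _ _)⟩
        invFun := fun x => ⟨x.1.val / p ^ (m - i), by
          have hx := x.1.2
          rw [Nat.div_lt_iff_lt_mul hd]
          calc x.1.val < p ^ m := hx
            _ = p ^ i * p ^ (m - i) := by rw [← pow_add]; congr 1; omega⟩
        left_inv := by
          intro j
          apply Fin.ext
          simp [Nat.mul_div_cancel _ hd]
        right_inv := by
          rintro ⟨x, hx⟩
          apply Subtype.ext
          apply Fin.ext
          exact Nat.div_mul_cancel hx }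
    rw [← Nat.card_congr e]
    simp
  have hfin : ({x : Fin (p ^ m) | p ^ (m - i) ∣ x.val} : Set (Fin (p ^ m))).Finite :=
    Set.toFinite _
  apply Set.eq_of_subset_of_ncard_le hsub
  rw [← Nat.card_coe_set_eq, ← Nat.card_coe_set_eq, hMcard, hcard]

end Subgroup
section Unique
open SimpleGraph
open Fin.NatCast

variable {p m : ℕ} [NeZero (p ^ m)]

/-- The cyclic shift on `Fin (p^m)`. -/
def sigmaPerm (p m : ℕ) [NeZero (p ^ m)] : Equiv.Perm (Fin (p ^ m)) :=
  Equiv.addLeft 1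

lemma sigmaPerm_apply (a : Fin (p ^ m)) : sigmaPerm p m a = 1 + a := rfl

lemma sigmaPerm_pow_apply (k : ℕ) (a : Fin (p ^ m)) :
    (sigmaPerm p m ^ k) a = (k : Fin (p ^ m)) + a := by
  induction k with
  | zero => simp
  | succ k ih =>
    rw [pow_succ', Equiv.Perm.mul_apply, ih, sigmaPerm_apply]
    push_cast
    abel

lemma sigmaPerm_pow_card : sigmaPerm p m ^ (p ^ m) = 1 := by
  apply Equiv.ext
  intro a
  rw [sigmaPerm_pow_apply]
  simp

lemma blockRel_iff_sub (hp : 2 ≤ p) (i : ℕ) (u v : Fin (p ^ m)) :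
    blockRel p m i u v ↔ p ^ (m - i) ∣ (v - u).val := by
  conv_lhs => rw [show v = u + (v - u) by abel]
  rw [blockRel_add_self]
  constructor
  · intro h
    exact_mod_cast (by push_cast at h ⊢; exact h :
      (((p ^ (m - i) : ℕ)) : ℤ) ∣ (((v - u).val : ℕ) : ℤ))
  · intro h
    have : (((p ^ (m - i) : ℕ)) : ℤ) ∣ (((v - u).val : ℕ) : ℤ) := Int.natCast_dvd_natCast.mpr h
    push_cast at this
    exact this

lemma fixed_unique (hp : 2 ≤ p) {E : List (SimpleGraph (Fin (p ^ m)))}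
    (hE : IsIteratedPMatchingSeq p E) (hEf : IsFullSeq E)
    (hfix : sigmaPerm p m • E = E) : E = canList p m := by
  have hppos : 0 < p := by omega
  have hnpos : 0 < p ^ m := pow_pos hppos m
  have hlen : E.length = m := by
    have h := full_length (p := p) (by omega) hnpos hE hEf
    exact Nat.pow_right_injective hp h.symm
  -- shift invariance of the partial unions
  have hU : ∀ i, sigmaPerm p m • unionUpTo E i = unionUpTo E i := by
    intro i
    rw [← smul_unionUpTo, hfix]
  have hshift1 : ∀ i (a b : Fin (p ^ m)),
      (unionUpTo E i).Reachable (sigmaPerm p m a) (sigmaPerm p m b) ↔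
        (unionUpTo E i).Reachable a b := by
    intro i a b
    conv_lhs => rw [← hU i]
    rw [smul_reachable]
    simp
  have hshiftk : ∀ (k : ℕ) i (a b : Fin (p ^ m)),
      (unionUpTo E i).Reachable ((sigmaPerm p m ^ k) a) ((sigmaPerm p m ^ k) b) ↔
        (unionUpTo E i).Reachable a b := by
    intro k
    induction k with
    | zero => simp
    | succ k ih =>
      intro i a b
      rw [pow_succ', Equiv.Perm.mul_apply, Equiv.Perm.mul_apply, hshift1, ih]
  have hshiftc : ∀ (c : Fin (p ^ m)) i (a b : Fin (p ^ m)),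
      (unionUpTo E i).Reachable (c + a) (c + b) ↔ (unionUpTo E i).Reachable a b := by
    intro c i a b
    have := hshiftk c.val i a b
    rwa [sigmaPerm_pow_apply, sigmaPerm_pow_apply, Fin.cast_val_eq_self] at this
  -- characterisation of components
  have hchar : ∀ i, i ≤ m → ∀ u v : Fin (p ^ m),
      (unionUpTo E i).Reachable u v ↔ blockRel p m i u v := by
    intro i hi
    set S : Set (Fin (p ^ m)) := {x | (unionUpTo E i).Reachable 0 x} with hSdef
    have h0 : (0 : Fin (p ^ m)) ∈ S := SimpleGraph.Reachable.refl 0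
    have hadd : ∀ a b : Fin (p ^ m), a ∈ S → b ∈ S → a + b ∈ S := by
      intro a b ha hb
      have h1 : (unionUpTo E i).Reachable b (b + a) := by
        have := (hshiftc b i 0 a).mpr ha
        simpa using this
      have h2 : (unionUpTo E i).Reachable 0 (a + b) :=
        hb.trans (by rwa [add_comm a b])
      exact h2
    have hcard : Nat.card S = p ^ i :=
      card_reach hE (by omega) i (by omega) 0
    have hSM := addClosed_eq p m i hp hi S h0 hadd hcard
    intro u v
    have h1 : (unionUpTo E i).Reachable u v ↔ (unionUpTo E i).Reachable 0 (v - u) := by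
      have := hshiftc (-u) i u v
      rw [neg_add_cancel] at this
      rw [← this]
      rw [show -u + v = v - u by abel]
    rw [h1, blockRel_iff_sub hp]
    exact Set.ext_iff.mp hSM (v - u)
  -- each graph is determined
  have hdet : ∀ i, i < m → ∀ u v : Fin (p ^ m),
      (E.getD i ⊥).Adj u v ↔ (canG p m i).Adj u v := by
    intro i hi u v
    have hiE : i < E.length := by omega
    obtain ⟨h1, h2, h3, h4⟩ := hE i hiE
    constructor
    · intro hadj
      constructor
      · rw [← hchar (i + 1) (by omega)]
        exact ((getD_le_unionUpTo E (Nat.lt_succ_self i)) hadj).reachable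
      · rw [← hchar i (by omega)]
        intro hr
        exact h1 u v hadj ((mk_eq_iff _ u v).mpr hr)
    · rintro ⟨hb1, hb2⟩
      have hr : (unionUpTo E (i + 1)).Reachable u v := (hchar (i + 1) (by omega) u v).mpr hb1
      rcases (reach_succ_iff hE i u v).mp hr with hP | ⟨w, hw, hPw⟩
      · exact absurd ((hchar i (by omega) u v).mp hP) hb2
      · exact h2 u w u v hw rfl ((mk_eq_iff _ v w).mpr (hPw.symm))
  -- conclude
  apply List.ext_getElem (by rw [hlen, canList_length])
  intro i h1 h2
  have hi : i < m := by rwa [canList_length] at h2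
  have e1 : E[i] = E.getD i ⊥ := (List.getD_eq_getElem _ _ h1).symm
  have e2 : (canList p m)[i] = canG p m i := by
    rw [← canList_getD p m hi]
    exact (List.getD_eq_getElem _ _ h2).symm
  rw [e1, e2]
  ext u v
  exact hdet i hi u v

lemma can_fixed (hp : 2 ≤ p) : sigmaPerm p m • canList p m = canList p m := by
  rw [smul_list_def]
  unfold canList
  rw [List.map_ofFn]
  congr 1
  funext j
  show sigmaPerm p m • canG p m j.val = canG p m j.val
  ext a b
  rw [smul_adj]
  have hsym : ∀ x : Fin (p ^ m), (sigmaPerm p m)⁻¹ x = -1 + x := by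
    intro x
    simp [sigmaPerm]
  rw [hsym a, hsym b]
  show (blockRel p m (j.val + 1) (-1 + a) (-1 + b) ∧ ¬ blockRel p m j.val (-1 + a) (-1 + b)) ↔ _
  rw [blockRel.add_left, blockRel.add_left]
  rfl

end Unique
section Final
open SimpleGraph

instance XMulAction (p n : ℕ) : MulAction (Equiv.Perm (Fin n))
    { E : List (SimpleGraph (Fin n)) // IsIteratedPMatchingSeq p E ∧ IsFullSeq E } where
  smul g x := ⟨g • x.1, smul_iterated g x.2.1, smul_full g x.2.2⟩
  one_smul x := Subtype.ext (one_smul _ x.1)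
  mul_smul g h x := Subtype.ext (mul_smul g h x.1)

lemma X_smul_val (p n : ℕ) (g : Equiv.Perm (Fin n))
    (x : { E : List (SimpleGraph (Fin n)) // IsIteratedPMatchingSeq p E ∧ IsFullSeq E }) :
    (g • x).1 = g • x.1 := rfl

theorem fMp_modeq_one (p : ℕ) (hp : p.Prime) (m : ℕ) : fMp p (p ^ m) ≡ 1 [MOD p] := by
  haveI : Fact p.Prime := ⟨hp⟩
  have hp2 : 2 ≤ p := hp.two_le
  haveI : NeZero (p ^ m) := ⟨(pow_pos hp.pos m).ne'⟩
  set σ := sigmaPerm p m with hσdef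
  set H := Subgroup.zpowers σ with hHdef
  have hσpow : σ ^ (p ^ m) = 1 := sigmaPerm_pow_card
  have hH : IsPGroup p H := by
    rintro ⟨g, hg⟩
    obtain ⟨z, rfl⟩ := Subgroup.mem_zpowers_iff.mp hg
    refine ⟨m, ?_⟩
    apply Subtype.ext
    rw [SubmonoidClass.coe_pow]
    show (σ ^ z) ^ (p ^ m) = 1
    rw [← zpow_natCast (σ ^ z), ← zpow_mul, mul_comm, zpow_mul, zpow_natCast, hσpow, one_zpow]
  -- finiteness
  haveI hfinX : Finite { E : List (SimpleGraph (Fin (p ^ m))) //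
      IsIteratedPMatchingSeq p E ∧ IsFullSeq E } := by
    have hfin : {l : List (SimpleGraph (Fin (p ^ m))) | l.length = m}.Finite :=
      List.finite_length_eq _ m
    haveI := hfin.to_subtype
    refine Finite.of_injective (fun x => (⟨x.1, ?_⟩ :
      {l : List (SimpleGraph (Fin (p ^ m))) | l.length = m})) ?_
    · have h := full_length (p := p) (by omega) (pow_pos hp.pos m) x.2.1 x.2.2
      exact Nat.pow_right_injective hp2 h.symm
    · intro x y hxy
      apply Subtype.ext
      dsimp only at hxy
      simp only [Subtype.mk.injEq] at hxy
      exact hxy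
  -- the canonical fixed point
  set canX : { E : List (SimpleGraph (Fin (p ^ m))) //
      IsIteratedPMatchingSeq p E ∧ IsFullSeq E } :=
    ⟨canList p m, can_iterated p m hp2, can_full p m hp2⟩ with hcanX
  have hstab : σ ∈ MulAction.stabilizer (Equiv.Perm (Fin (p ^ m))) canX := by
    show σ • canX = canX
    exact Subtype.ext (can_fixed hp2)
  have hmem : canX ∈ MulAction.fixedPoints H _ := by
    intro h
    have hle : H ≤ MulAction.stabilizer (Equiv.Perm (Fin (p ^ m))) canX :=
      Subgroup.zpowers_le.mpr hstab
    exact hle h.2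
  have huniq : ∀ x, x ∈ MulAction.fixedPoints H
      { E : List (SimpleGraph (Fin (p ^ m))) // IsIteratedPMatchingSeq p E ∧ IsFullSeq E } →
      x = canX := by
    intro x hx
    have hσx : σ • x = x := hx ⟨σ, Subgroup.mem_zpowers _⟩
    apply Subtype.ext
    exact fixed_unique hp2 x.2.1 x.2.2 (congrArg Subtype.val hσx)
  haveI : Unique (MulAction.fixedPoints H
      { E : List (SimpleGraph (Fin (p ^ m))) // IsIteratedPMatchingSeq p E ∧ IsFullSeq E }) :=
    { default := ⟨canX, hmem⟩
      uniq := fun y => Subtype.ext (huniq y.1 y.2) }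
  have hmod := hH.card_modEq_card_fixedPoints
    { E : List (SimpleGraph (Fin (p ^ m))) // IsIteratedPMatchingSeq p E ∧ IsFullSeq E }
  have h1 : Nat.card (MulAction.fixedPoints H
      { E : List (SimpleGraph (Fin (p ^ m))) // IsIteratedPMatchingSeq p E ∧ IsFullSeq E }) = 1 :=
    Nat.card_unique
  rw [h1] at hmod
  exact hmod

end Final

/-- **Counting full iterated p-matching sequences.**
For a prime p, f_{M_p}(n) = 0 whenever n is not a power of p, and
f_{M_p}(n) ≡ 1 (mod p) whenever n = p^m. -/
theorem fMp_eq_zero_or_one_mod_p (p : ℕ) (hp : p.Prime) :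
    (∀ n : ℕ, (¬ ∃ m : ℕ, n = p ^ m) → fMp p n = 0) ∧
    (∀ m : ℕ, fMp p (p ^ m) ≡ 1 [MOD p]) := by
  constructor
  · intro n hn
    exact fMp_eq_zero hp.one_lt.le n hn
  · intro m
    exact fMp_modeq_one p hp m
end

section
/- Let p be a prime. The number of partitions of [n] = {1,…,n} into blocks each of size exactly p (perfect p-matchings over [n]) is 0 unless p divides n, and when p divides n this number is congruent to 1 modulo p. -/
set_option linter.unusedSectionVars false
set_option linter.unusedVariables false

/-- The number of perfect p-matchings over [n], i.e. partitions of [n] into blocks of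
size exactly p. -/
noncomputable def perfectPMatchings (p n : ℕ) : ℕ :=
  Nat.card { P : Finpartition (Finset.univ : Finset (Fin n)) //
    ∀ b ∈ P.parts, b.card = p }

open Finset Function

namespace PerfectPMAux

variable {α β : Type*} [DecidableEq α] [DecidableEq β]

lemma sup_image_finsets (f : α → β) (u : Finset (Finset α)) :
    u.sup (fun b => b.image f) = (u.sup id).image f := by
  classical
  induction u using Finset.induction_on with
  | empty => simp
  | insert _ _ _ ih => simp [Finset.sup_insert, ih, Finset.image_union]

/-- Push a finpartition forward along an injective map. -/
def mapP (f : α → β) (hf : Injective f) {s : Finset α} {t : Finset β}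
    (h : s.image f = t) (P : Finpartition s) : Finpartition t where
  parts := P.parts.image (fun b => b.image f)
  supIndep := by
    rw [Finset.supIndep_iff_pairwiseDisjoint]
    rintro x hx y hy hxy
    simp only [Finset.coe_image, Set.mem_image, Finset.mem_coe] at hx hy
    obtain ⟨b, hb, rfl⟩ := hx
    obtain ⟨c, hc, rfl⟩ := hy
    have hbc : b ≠ c := by rintro rfl; exact hxy rfl
    exact (Finset.disjoint_image hf).mpr (P.disjoint hb hc hbc)
  sup_parts := by
    rw [Finset.sup_image]
    have : (id ∘ fun b : Finset α => b.image f) = fun b => b.image f := rfl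
    rw [this, sup_image_finsets, P.sup_parts, h]
  bot_notMem := by
    simp only [bot_eq_empty, Finset.mem_image]
    rintro ⟨b, hb, hbe⟩
    rw [Finset.image_eq_empty, ← Finset.bot_eq_empty] at hbe
    exact P.bot_notMem (hbe ▸ hb)

@[simp] lemma parts_mapP (f : α → β) (hf : Injective f) {s : Finset α} {t : Finset β}
    (h : s.image f = t) (P : Finpartition s) :
    (mapP f hf h P).parts = P.parts.image (fun b => b.image f) := rfl

/-- Pull a finpartition back along an injective map whose image is the whole set. -/
def mapPinv (f : α → β) (hf : Injective f) {s : Finset α} {t : Finset β}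
    (h : s.image f = t) (R : Finpartition t) : Finpartition s where
  parts := R.parts.image (fun b => s.filter (fun x => f x ∈ b))
  supIndep := by
    rw [Finset.supIndep_iff_pairwiseDisjoint]
    rintro x hx y hy hxy
    simp only [Finset.coe_image, Set.mem_image, Finset.mem_coe] at hx hy
    obtain ⟨b, hb, rfl⟩ := hx
    obtain ⟨c, hc, rfl⟩ := hy
    have hbc : b ≠ c := by rintro rfl; exact hxy rfl
    have this : Disjoint b c := R.disjoint hb hc hbc
    show Disjoint (s.filter (fun x => f x ∈ b)) (s.filter (fun x => f x ∈ c))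
    rw [Finset.disjoint_left] at this ⊢
    intro a ha ha'
    rw [Finset.mem_filter] at ha ha'
    exact this ha.2 ha'.2
  sup_parts := by
    apply Finset.ext
    intro x
    rw [Finset.mem_sup]
    constructor
    · rintro ⟨b, hb, hx⟩
      simp only [Finset.mem_image] at hb
      obtain ⟨c, hc, rfl⟩ := hb
      exact (Finset.mem_filter.mp hx).1
    · intro hx
      have hfx : f x ∈ t := h ▸ Finset.mem_image_of_mem f hx
      obtain ⟨b, hb, hfb⟩ := R.exists_mem hfx
      exact ⟨s.filter (fun y => f y ∈ b), Finset.mem_image_of_mem _ hb,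
        Finset.mem_filter.mpr ⟨hx, hfb⟩⟩
  bot_notMem := by
    simp only [bot_eq_empty, Finset.mem_image]
    rintro ⟨b, hb, hbe⟩
    obtain ⟨y, hy⟩ := R.nonempty_of_mem_parts hb
    have hyt : y ∈ t := R.le hb hy
    rw [← h, Finset.mem_image] at hyt
    obtain ⟨x, hx, rfl⟩ := hyt
    have : x ∈ s.filter (fun x => f x ∈ b) := Finset.mem_filter.mpr ⟨hx, hy⟩
    rw [hbe] at this
    exact absurd this (Finset.notMem_empty x)

lemma filter_image_eq (f : α → β) {s : Finset α} {t : Finset β}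
    (h : s.image f = t) {c : Finset β} (hc : c ⊆ t) :
    (s.filter (fun x => f x ∈ c)).image f = c := by
  apply Finset.ext
  intro y
  simp only [Finset.mem_image, Finset.mem_filter]
  constructor
  · rintro ⟨x, ⟨_, hfc⟩, rfl⟩; exact hfc
  · intro hy
    have : y ∈ t := hc hy
    rw [← h, Finset.mem_image] at this
    obtain ⟨x, hx, rfl⟩ := this
    exact ⟨x, ⟨hx, hy⟩, rfl⟩

lemma filter_preimage_eq (f : α → β) (hf : Injective f) {s : Finset α} {b : Finset α}
    (hb : b ⊆ s) : s.filter (fun x => f x ∈ b.image f) = b := by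
  apply Finset.ext
  intro x
  simp only [Finset.mem_filter, Finset.mem_image]
  constructor
  · rintro ⟨_, y, hy, hxy⟩
    rwa [hf hxy] at hy
  · intro hx
    exact ⟨hb hx, x, hx, rfl⟩

/-- Transfer of size-conditioned finpartitions along an injection with prescribed image. -/
def transfer (p : ℕ) (f : α → β) (hf : Injective f) {s : Finset α} {t : Finset β}
    (h : s.image f = t) :
    {P : Finpartition s // ∀ b ∈ P.parts, b.card = p} ≃
      {P : Finpartition t // ∀ b ∈ P.parts, b.card = p} where
  toFun P := ⟨mapP f hf h P.1, by
    intro b hb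
    simp only [parts_mapP, Finset.mem_image] at hb
    obtain ⟨c, hc, rfl⟩ := hb
    rw [Finset.card_image_of_injective _ hf]
    exact P.2 c hc⟩
  invFun R := ⟨mapPinv f hf h R.1, by
    intro b hb
    simp only [mapPinv, Finset.mem_image] at hb
    obtain ⟨c, hc, rfl⟩ := hb
    have hcs : c ⊆ t := R.1.le hc
    have himg := filter_image_eq f h hcs
    calc #(s.filter (fun x => f x ∈ c))
        = #((s.filter (fun x => f x ∈ c)).image f) :=
          (Finset.card_image_of_injective _ hf).symm
      _ = #c := by rw [himg]
      _ = p := R.2 c hc⟩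
  left_inv P := by
    apply Subtype.ext
    apply Finpartition.ext
    simp only [mapPinv, parts_mapP, Finset.image_image]
    nth_rewrite 2 [← Finset.image_id (s := P.1.parts)]
    apply Finset.image_congr
    intro b hb
    exact filter_preimage_eq f hf (P.1.le hb)
  right_inv R := by
    apply Subtype.ext
    apply Finpartition.ext
    simp only [mapPinv, parts_mapP, Finset.image_image]
    nth_rewrite 2 [← Finset.image_id (s := R.1.parts)]
    apply Finset.image_congr
    intro b hb
    exact filter_image_eq f h (R.1.le hb)


section Model

open MulAction

/-- The type of perfect `p`-matchings on a finite type. -/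
abbrev Xt (p : ℕ) (γ : Type*) [DecidableEq γ] [Fintype γ] :=
  {P : Finpartition (Finset.univ : Finset γ) // ∀ b ∈ P.parts, b.card = p}

lemma card_congr_of_equiv (p : ℕ) {γ δ : Type*} [DecidableEq γ] [Fintype γ]
    [DecidableEq δ] [Fintype δ] (e : γ ≃ δ) :
    Nat.card (Xt p γ) = Nat.card (Xt p δ) :=
  Nat.card_congr (transfer p e e.injective (Finset.image_univ_equiv e))

variable (p k : ℕ) [NeZero p]

/-- The translation action on the model type. -/
def fg (g : Multiplicative (ZMod p)) : ZMod p ⊕ Fin k → ZMod p ⊕ Fin k :=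
  Sum.map (fun x => g.toAdd + x) id

lemma fg_injective (g : Multiplicative (ZMod p)) : Injective (fg p k g) := by
  rintro (a | a) (b | b) h <;> simp [fg] at h <;> simp [h]

lemma fg_image_univ (g : Multiplicative (ZMod p)) :
    (Finset.univ : Finset (ZMod p ⊕ Fin k)).image (fg p k g) = Finset.univ := by
  apply Finset.image_univ_of_surjective
  rintro (a | a)
  · exact ⟨Sum.inl (a - g.toAdd), by simp [fg]⟩
  · exact ⟨Sum.inr a, rfl⟩

lemma fg_one : fg p k 1 = id := by
  funext x
  rcases x with a | a <;> simp [fg]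

lemma fg_mul (g h : Multiplicative (ZMod p)) : fg p k (g * h) = fg p k g ∘ fg p k h := by
  funext x
  rcases x with a | a <;> simp [fg, add_assoc]

noncomputable instance modelAction :
    MulAction (Multiplicative (ZMod p)) (Xt p (ZMod p ⊕ Fin k)) where
  smul g P := transfer p (fg p k g) (fg_injective p k g) (fg_image_univ p k g) P
  one_smul P := by
    apply Subtype.ext
    apply Finpartition.ext
    show P.1.parts.image (fun b => b.image (fg p k 1)) = P.1.parts
    rw [fg_one]
    simp
  mul_smul g h P := by
    apply Subtype.ext
    apply Finpartition.ext
    show P.1.parts.image (fun b => b.image (fg p k (g * h)))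
      = (P.1.parts.image (fun b => b.image (fg p k h))).image (fun b => b.image (fg p k g))
    rw [Finset.image_image]
    apply Finset.image_congr
    intro b _
    show b.image (fg p k (g * h)) = (b.image (fg p k h)).image (fg p k g)
    rw [fg_mul, Finset.image_image]

lemma smul_parts (g : Multiplicative (ZMod p)) (P : Xt p (ZMod p ⊕ Fin k)) :
    (g • P : Xt p (ZMod p ⊕ Fin k)).1.parts
      = P.1.parts.image (fun b => b.image (fg p k g)) := rfl

/-- The distinguished block: the left summand. -/
def B0 : Finset (ZMod p ⊕ Fin k) := Finset.univ.image Sum.inl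

lemma mem_B0 (x : ZMod p ⊕ Fin k) : x ∈ B0 p k ↔ ∃ a, x = Sum.inl a := by
  simp [B0, eq_comm]

lemma card_B0 [NeZero p] : (B0 p k).card = p := by
  rw [B0, Finset.card_image_of_injective _ Sum.inl_injective, Finset.card_univ, ZMod.card]

lemma B0_nonempty [NeZero p] : (B0 p k).Nonempty := by
  rw [← Finset.card_pos, card_B0]
  exact Nat.pos_of_ne_zero (NeZero.ne p)

lemma image_fg_B0 (g : Multiplicative (ZMod p)) : (B0 p k).image (fg p k g) = B0 p k := by
  apply Finset.ext
  intro x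
  simp only [Finset.mem_image, mem_B0]
  constructor
  · rintro ⟨y, hy, rfl⟩
    obtain ⟨a, rfl⟩ := hy
    exact ⟨_, rfl⟩
  · rintro ⟨a, rfl⟩
    exact ⟨Sum.inl (a - g.toAdd), ⟨_, rfl⟩, by simp [fg]⟩

lemma fixed_iff [NeZero p] (P : Xt p (ZMod p ⊕ Fin k)) :
    (∀ g : Multiplicative (ZMod p), g • P = P) ↔ B0 p k ∈ P.1.parts := by
  constructor
  · intro hfix
    have stab : ∀ (g : Multiplicative (ZMod p)) (b : Finset (ZMod p ⊕ Fin k)),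
        b ∈ P.1.parts → b.image (fg p k g) ∈ P.1.parts := by
      intro g b hb
      have this : (g • P : Xt p (ZMod p ⊕ Fin k)).1.parts = P.1.parts :=
        congrArg (fun Q : Xt p (ZMod p ⊕ Fin k) => Q.1.parts) (hfix g)
      rw [smul_parts] at this
      rw [← this]
      exact Finset.mem_image_of_mem _ hb
    have h0 : (Sum.inl 0 : ZMod p ⊕ Fin k) ∈ Finset.univ := Finset.mem_univ _
    set B := P.1.part (Sum.inl 0) with hBdef
    have hB : B ∈ P.1.parts := P.1.part_mem.mpr h0
    have h0B : (Sum.inl 0 : ZMod p ⊕ Fin k) ∈ B := P.1.mem_part_self.mpr h0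
    have hcard : B.card = p := P.2 B hB
    suffices hBB : B = B0 p k by rwa [← hBB]
    by_cases hsub : B ⊆ B0 p k
    · exact Finset.eq_of_subset_of_card_le hsub (by rw [card_B0, hcard])
    · obtain ⟨x, hxB, hxnB⟩ := Finset.not_subset.mp hsub
      obtain (a | y) := x
      · exact absurd ((mem_B0 p k _).mpr ⟨a, rfl⟩) hxnB
      · -- every translate of B meets B at `inr y`, hence equals B
        have hBfix : ∀ g : Multiplicative (ZMod p), B.image (fg p k g) = B := by
          intro g
          refine P.1.eq_of_mem_parts (stab g B hB) hB ?_ hxB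
          have : fg p k g (Sum.inr y) = Sum.inr y := rfl
          rw [← this]
          exact Finset.mem_image_of_mem _ hxB
        have hsub' : B0 p k ⊆ B := by
          intro z hz
          rw [mem_B0] at hz
          obtain ⟨a, rfl⟩ := hz
          have : fg p k (Multiplicative.ofAdd a) (Sum.inl 0) = Sum.inl a := by simp [fg]
          rw [← this, ← hBfix (Multiplicative.ofAdd a)]
          exact Finset.mem_image_of_mem _ h0B
        exact (Finset.eq_of_subset_of_card_le hsub' (by rw [hcard, card_B0])).symm
  · intro hB0 g
    apply Subtype.ext
    apply Finpartition.ext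
    rw [smul_parts]
    nth_rewrite 2 [← Finset.image_id (s := P.1.parts)]
    apply Finset.image_congr
    intro b hb
    show b.image (fg p k g) = b
    by_cases hbB : b = B0 p k
    · rw [hbB]; exact image_fg_B0 p k g
    · have hdisj : Disjoint b (B0 p k) := P.1.disjoint hb hB0 hbB
      have hfix : ∀ x ∈ b, fg p k g x = x := by
        intro x hx
        obtain (a | y) := x
        · exact absurd ((mem_B0 p k _).mpr ⟨a, rfl⟩)
            (Finset.disjoint_left.mp hdisj hx)
        · rfl
      rw [Finset.image_congr hfix, Finset.image_id']

end Model

section Fixed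

/-- Remove a block from a finpartition. -/
def eraseP {γ : Type*} [DecidableEq γ] {s : Finset γ} (P : Finpartition s) {B : Finset γ}
    (hB : B ∈ P.parts) : Finpartition (s \ B) :=
  P.ofSubset (parts := P.parts.erase B) (Finset.erase_subset _ _) (by
    apply Finset.ext
    intro x
    rw [Finset.mem_sup, Finset.mem_sdiff]
    constructor
    · rintro ⟨b, hb, hx⟩
      rw [Finset.mem_erase] at hb
      exact ⟨P.le hb.2 hx, fun hxB => hb.1 (P.eq_of_mem_parts hb.2 hB hx hxB)⟩
    · rintro ⟨hxs, hxB⟩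
      obtain ⟨b, hb, hx⟩ := P.exists_mem hxs
      refine ⟨b, Finset.mem_erase.mpr ⟨?_, hb⟩, hx⟩
      rintro rfl
      exact hxB hx)

lemma parts_eraseP {γ : Type*} [DecidableEq γ] {s : Finset γ} (P : Finpartition s)
    {B : Finset γ} (hB : B ∈ P.parts) : (eraseP P hB).parts = P.parts.erase B := rfl

variable (p k : ℕ) [NeZero p]

lemma image_inr : (Finset.univ : Finset (Fin k)).image Sum.inr
    = (Finset.univ : Finset (ZMod p ⊕ Fin k)) \ B0 p k := by
  apply Finset.ext
  rintro (a | y) <;> simp [B0]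

lemma B0_ne_bot : B0 p k ≠ ⊥ := by
  rw [Finset.bot_eq_empty]
  exact (B0_nonempty p k).ne_empty

noncomputable def fixedEquiv :
    MulAction.fixedPoints (Multiplicative (ZMod p)) (Xt p (ZMod p ⊕ Fin k)) ≃ Xt p (Fin k) := by
  refine (Equiv.subtypeEquivRight (fun P => fixed_iff p k P)).trans
    (Equiv.trans ?_ (transfer p Sum.inr Sum.inr_injective (image_inr p k)).symm)
  exact
  { toFun := fun P => ⟨eraseP P.1.1 P.2, fun b hb => P.1.2 b (Finset.mem_of_mem_erase hb)⟩
    invFun := fun Q =>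
      ⟨⟨Q.1.extend (B0_ne_bot p k) Finset.sdiff_disjoint
          (by rw [sdiff_sup_cancel (Finset.le_iff_subset.mpr (Finset.subset_univ _))]), by
        intro b hb
        rw [Finpartition.extend_parts, Finset.mem_insert] at hb
        rcases hb with rfl | hb
        · exact card_B0 p k
        · exact Q.2 b hb⟩, by
        rw [Finpartition.extend_parts]
        exact Finset.mem_insert_self _ _⟩
    left_inv := fun P => by
      apply Subtype.ext
      apply Subtype.ext
      apply Finpartition.ext
      rw [Finpartition.extend_parts, parts_eraseP]
      exact Finset.insert_erase P.2
    right_inv := fun Q => by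
      apply Subtype.ext
      apply Finpartition.ext
      rw [parts_eraseP, Finpartition.extend_parts]
      apply Finset.erase_insert
      intro h
      have hle := Q.1.le h
      obtain ⟨x, hx⟩ := B0_nonempty p k
      exact (Finset.mem_sdiff.mp (hle hx)).2 hx }

end Fixed

lemma step (p : ℕ) (hp : p.Prime) (k : ℕ) :
    Nat.card (Xt p (Fin (p + k))) ≡ Nat.card (Xt p (Fin k)) [MOD p] := by
  haveI := Fact.mk hp
  haveI : NeZero p := ⟨hp.pos.ne'⟩
  have e : Fin (p + k) ≃ ZMod p ⊕ Fin k :=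
    Fintype.equivOfCardEq (by simp [ZMod.card])
  rw [card_congr_of_equiv p e]
  have hG : IsPGroup p (Multiplicative (ZMod p)) :=
    IsPGroup.of_card (p := p) (n := 1) (by
      rw [Nat.card_eq_fintype_card]
      simp [ZMod.card])
  have hmod := hG.card_modEq_card_fixedPoints (Xt p (ZMod p ⊕ Fin k))
  rw [Nat.card_congr (fixedEquiv p k)] at hmod
  exact hmod

lemma pm_eq (p n : ℕ) : perfectPMatchings p n = Nat.card (Xt p (Fin n)) := rfl

lemma pm_not_dvd (p n : ℕ) (hp : 0 < p) (h : ¬ p ∣ n) : perfectPMatchings p n = 0 := by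
  haveI : IsEmpty (Xt p (Fin n)) := by
    refine ⟨fun P => h ⟨P.1.parts.card, ?_⟩⟩
    have h1 : ∑ b ∈ P.1.parts, b.card = n := by
      rw [P.1.sum_card_parts, Finset.card_univ, Fintype.card_fin]
    have h2 : ∑ b ∈ P.1.parts, b.card = P.1.parts.card * p := by
      rw [Finset.sum_congr rfl P.2, Finset.sum_const, smul_eq_mul]
    exact (h1.symm.trans h2).trans (mul_comm _ _)
  rw [pm_eq]
  exact Nat.card_of_isEmpty

lemma pm_zero (p : ℕ) : perfectPMatchings p 0 = 1 := by
  rw [pm_eq]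
  have huniv : (Finset.univ : Finset (Fin 0)) = ⊥ := by
    rw [Finset.bot_eq_empty, Finset.univ_eq_empty]
  rw [Nat.card_eq_one_iff_unique]
  constructor
  · refine ⟨fun P Q => Subtype.ext (Finpartition.ext ?_)⟩
    rw [Finpartition.parts_eq_empty_iff.mpr huniv, Finpartition.parts_eq_empty_iff.mpr huniv]
  · refine ⟨⟨⟨∅, Finset.supIndep_empty _, ?_, Finset.notMem_empty _⟩,
      fun b hb => absurd hb (Finset.notMem_empty b)⟩⟩
    rw [Finset.sup_empty]
    exact huniv.symm

end PerfectPMAux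

/-- **Counting perfect p-matchings.**
For a prime p, the number of partitions of [n] into blocks of size exactly p is 0
unless p divides n, and is congruent to 1 modulo p when p divides n. -/
theorem perfectPMatchings_count (p : ℕ) (hp : p.Prime) (n : ℕ) :
    (¬ p ∣ n → perfectPMatchings p n = 0) ∧
    (p ∣ n → perfectPMatchings p n ≡ 1 [MOD p]) := by
  constructor
  · exact PerfectPMAux.pm_not_dvd p n hp.pos
  · rintro ⟨m, rfl⟩
    induction m with
    | zero => rw [Nat.mul_zero, PerfectPMAux.pm_zero]
    | succ m ih =>
      have h : p * (m + 1) = p + p * m := by ring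
      rw [h, PerfectPMAux.pm_eq]
      exact (PerfectPMAux.step p hp (p * m)).trans ih
end

section
/- Let p be a prime and let f_{M_p}(n) denote the number of partitions of [n] = {1,…,n} into blocks each of size exactly p. Then for every n > p one has f_{M_p}(n) ≡ f_{M_p}(n − p) (mod p). -/
set_option linter.unusedSectionVars false

open Finset Function

namespace PMatch

variable {α β : Type*} [DecidableEq α] [DecidableEq β]

lemma sup_map_finset (f : α ↪ β) (s : Finset (Finset α)) :
    s.sup (fun b => b.map f) = (s.sup id).map f := by
  induction s using Finset.induction_on with
  | empty => simp
  | insert a s h ih => rw [Finset.sup_insert, Finset.sup_insert, ih]; simp [Finset.map_union]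

/-- `Finset.map` as an embedding on finsets. -/
def fmapEmb (f : α ↪ β) : Finset α ↪ Finset β := ⟨Finset.map f, Finset.map_injective f⟩

@[simp] lemma fmapEmb_apply (f : α ↪ β) (b : Finset α) : fmapEmb f b = b.map f := rfl

/-- Pushforward of a finpartition along an embedding. -/
def mapEmb {s : Finset α} (f : α ↪ β) (P : Finpartition s) : Finpartition (s.map f) where
  parts := P.parts.map (fmapEmb f)
  supIndep := by
    rw [Finset.supIndep_iff_pairwiseDisjoint]
    rintro u hu v hv huv
    simp only [Finset.coe_map, Set.mem_image, Finset.mem_coe, fmapEmb_apply] at hu hv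
    obtain ⟨b, hb, rfl⟩ := hu
    obtain ⟨c, hc, rfl⟩ := hv
    have hbc : b ≠ c := by rintro rfl; simp at huv
    have h : Disjoint b c := P.disjoint hb hc hbc
    simp only [Function.onFun, id]
    exact (Finset.disjoint_map f).mpr h
  sup_parts := by
    rw [Finset.sup_map]
    have : (id ∘ (fmapEmb f)) = (fun b : Finset α => b.map f) := by
      funext b; rfl
    rw [this, sup_map_finset, P.sup_parts]
  bot_notMem := by
    simp only [Finset.bot_eq_empty, Finset.mem_map, fmapEmb_apply]
    rintro ⟨b, hb, hbe⟩
    rw [Finset.map_eq_empty] at hbe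
    subst hbe
    exact P.bot_notMem (by simpa using hb)

@[simp] lemma mapEmb_parts {s : Finset α} (f : α ↪ β) (P : Finpartition s) :
    (mapEmb f P).parts = P.parts.map (fmapEmb f) := rfl

lemma mem_mapEmb_parts {s : Finset α} {f : α ↪ β} {P : Finpartition s} {c : Finset β} :
    c ∈ (mapEmb f P).parts ↔ ∃ b ∈ P.parts, b.map f = c := by
  simp [Finset.mem_map]

instance finpartitionFinite [Finite α] {s : Finset α} : Finite (Finpartition s) := by
  have := Fintype.ofFinite α
  exact Finite.of_injective (fun P => P.parts) (fun P Q h => Finpartition.ext h)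

end PMatch

namespace PMatch

variable (p : ℕ)

/-- The type of perfect `p`-matchings of a fintype `α`. -/
abbrev Matchings (α : Type*) [Fintype α] [DecidableEq α] : Type _ :=
  { P : Finpartition (Finset.univ : Finset α) // ∀ b ∈ P.parts, b.card = p }

variable {α β : Type*} [Fintype α] [DecidableEq α] [Fintype β] [DecidableEq β]

lemma map_map_symm (e : α ≃ β) (b : Finset α) :
    (b.map e.toEmbedding).map e.symm.toEmbedding = b := by
  ext x; simp

lemma map_map_symm' (e : α ≃ β) (b : Finset β) :
    (b.map e.symm.toEmbedding).map e.toEmbedding = b := by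
  ext x; simp

/-- Transfer matchings along a type equivalence. -/
def matchMap (e : α ≃ β) (P : Matchings p α) : Matchings p β :=
  ⟨(mapEmb e.toEmbedding P.1).copy (Finset.map_univ_equiv e), by
    intro b hb
    rw [Finpartition.copy_parts, mem_mapEmb_parts] at hb
    obtain ⟨c, hc, rfl⟩ := hb
    rw [Finset.card_map]
    exact P.2 c hc⟩

@[simp] lemma matchMap_parts (e : α ≃ β) (P : Matchings p α) :
    (matchMap p e P).1.parts = P.1.parts.map (fmapEmb e.toEmbedding) := rfl

/-- Matchings are preserved by type equivalences. -/
def matchEquiv (e : α ≃ β) : Matchings p α ≃ Matchings p β where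
  toFun := matchMap p e
  invFun := matchMap p e.symm
  left_inv P := by
    apply Subtype.ext
    apply Finpartition.ext
    rw [matchMap_parts, matchMap_parts]
    rw [Finset.map_map]
    ext b
    simp only [Finset.mem_map, Function.Embedding.trans_apply, fmapEmb_apply]
    constructor
    · rintro ⟨c, hc, rfl⟩
      rwa [map_map_symm]
    · intro hb
      exact ⟨b, hb, map_map_symm e b⟩
  right_inv P := by
    apply Subtype.ext
    apply Finpartition.ext
    rw [matchMap_parts, matchMap_parts]
    rw [Finset.map_map]
    ext b
    simp only [Finset.mem_map, Function.Embedding.trans_apply, fmapEmb_apply]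
    constructor
    · rintro ⟨c, hc, rfl⟩
      rwa [map_map_symm' e]
    · intro hb
      exact ⟨b, hb, map_map_symm' e b⟩

end PMatch

namespace PMatch

variable {p : ℕ} {β : Type*} [Fintype β] [DecidableEq β]

instance permAction : MulAction (Equiv.Perm β) (Matchings p β) where
  smul g P := matchMap p g P
  one_smul P := by
    show matchMap p 1 P = P
    apply Subtype.ext; apply Finpartition.ext
    rw [matchMap_parts]
    ext b
    simp only [Finset.mem_map, fmapEmb_apply]
    constructor
    · rintro ⟨c, hc, rfl⟩
      have : Finset.map (1 : Equiv.Perm β).toEmbedding c = c := by ext x; simp [Equiv.Perm.one_symm]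
      rwa [this]
    · intro hb
      exact ⟨b, hb, by ext x; simp [Equiv.Perm.one_symm]⟩
  mul_smul g h P := by
    show matchMap p (g * h) P = matchMap p g (matchMap p h P)
    apply Subtype.ext; apply Finpartition.ext
    rw [matchMap_parts, matchMap_parts, matchMap_parts, Finset.map_map]
    ext b
    simp only [Finset.mem_map, fmapEmb_apply, Function.Embedding.trans_apply]
    constructor
    · rintro ⟨c, hc, rfl⟩
      refine ⟨c, hc, ?_⟩
      ext x
      simp only [Finset.mem_map, Equiv.toEmbedding_apply, Equiv.Perm.mul_apply]
      aesop
    · rintro ⟨c, hc, rfl⟩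
      refine ⟨c, hc, ?_⟩
      ext x
      simp only [Finset.mem_map, Equiv.toEmbedding_apply, Equiv.Perm.mul_apply]
      aesop

lemma smul_def (g : Equiv.Perm β) (P : Matchings p β) : g • P = matchMap p g P := rfl

lemma smul_parts (g : Equiv.Perm β) (P : Matchings p β) :
    (g • P).1.parts = P.1.parts.map (fmapEmb g.toEmbedding) := rfl

lemma mem_fixedPoints_zpowers_iff {g : Equiv.Perm β} {P : Matchings p β} :
    P ∈ MulAction.fixedPoints (Subgroup.zpowers g) (Matchings p β) ↔ g • P = P := by
  constructor
  · intro h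
    exact h ⟨g, Subgroup.mem_zpowers g⟩
  · intro h x
    have hg : g ∈ MulAction.stabilizer (Equiv.Perm β) P := h
    have hle : Subgroup.zpowers g ≤ MulAction.stabilizer (Equiv.Perm β) P :=
      Subgroup.zpowers_le.mpr hg
    exact hle x.2

end PMatch

namespace PMatch

variable (m p : ℕ)

/-- The block of all right-hand elements. -/
def B0 : Finset (Fin m ⊕ Fin p) := (Finset.univ : Finset (Fin p)).map ⟨Sum.inr, Sum.inr_injective⟩

lemma mem_B0 {x : Fin m ⊕ Fin p} : x ∈ B0 m p ↔ ∃ j : Fin p, x = Sum.inr j := by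
  simp [B0, eq_comm]

lemma card_B0 : (B0 m p).card = p := by simp [B0]

/-- The rotation on the right summand. -/
def σ : Equiv.Perm (Fin m ⊕ Fin p) := Equiv.sumCongr (Equiv.refl _) (finRotate p)

@[simp] lemma σ_inl (y : Fin m) : σ m p (Sum.inl y) = Sum.inl y := rfl
@[simp] lemma σ_inr (j : Fin p) : σ m p (Sum.inr j) = Sum.inr (finRotate p j) := rfl

lemma σ_pow_inl (k : ℕ) (y : Fin m) : ((σ m p) ^ k) (Sum.inl y) = Sum.inl y := by
  induction k with
  | zero => simp
  | succ k ih => rw [pow_succ', Equiv.Perm.mul_apply, ih, σ_inl]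

lemma σ_pow_inr (k : ℕ) (j : Fin p) :
    ((σ m p) ^ k) (Sum.inr j) = Sum.inr (((finRotate p) ^ k) j) := by
  induction k with
  | zero => simp
  | succ k ih => rw [pow_succ', pow_succ', Equiv.Perm.mul_apply, Equiv.Perm.mul_apply, ih, σ_inr]

lemma orderOf_finRotate (hp2 : 2 ≤ p) : orderOf (finRotate p) = p := by
  rw [(isCycle_finRotate_of_le hp2).orderOf, support_finRotate_of_le hp2, Finset.card_univ,
    Fintype.card_fin]

lemma σ_pow_p (hp2 : 2 ≤ p) : (σ m p) ^ p = 1 := by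
  ext x
  cases x with
  | inl y => rw [σ_pow_inl]; rfl
  | inr j =>
      have h1 : (finRotate p) ^ p = 1 := by
        have h2 := pow_orderOf_eq_one (finRotate p)
        rwa [orderOf_finRotate p hp2] at h2
      rw [σ_pow_inr, h1]; rfl

lemma σ_ne_one (hp2 : 2 ≤ p) : σ m p ≠ 1 := by
  intro h
  have : finRotate p = 1 := Equiv.ext fun j => by
    have := congrArg (fun e : Equiv.Perm (Fin m ⊕ Fin p) => e (Sum.inr j)) h
    simpa using this
  have h2 := orderOf_finRotate p hp2
  rw [this, orderOf_one] at h2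
  omega

lemma orderOf_σ (hp : p.Prime) : orderOf (σ m p) = p := by
  haveI : Fact p.Prime := ⟨hp⟩
  exact orderOf_eq_prime (σ_pow_p m p hp.two_le) (σ_ne_one m p hp.two_le)

open Fin.NatCast in
lemma finRotate_pow_zero (p' k : ℕ) :
    ((finRotate (p' + 1)) ^ k) (0 : Fin (p' + 1)) = (k : Fin (p' + 1)) := by
  induction k with
  | zero => simp
  | succ k ih =>
      rw [pow_succ', Equiv.Perm.mul_apply, ih, finRotate_succ_apply]
      push_cast
      ring

/-- The key fixed-point characterization. -/
lemma fixed_iff (hp2 : 2 ≤ p) (P : Matchings p (Fin m ⊕ Fin p)) :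
    σ m p • P = P ↔ B0 m p ∈ P.1.parts := by
  constructor
  · intro hfix
    have hparts : P.1.parts.map (fmapEmb (σ m p).toEmbedding) = P.1.parts :=
      congrArg (fun Q : Matchings p (Fin m ⊕ Fin p) => Q.1.parts) hfix
    obtain ⟨p', rfl⟩ : ∃ p', p = p' + 1 := ⟨p - 1, by omega⟩
    have hz : (Sum.inr (0 : Fin (p' + 1)) : Fin m ⊕ Fin (p' + 1)) ∈ Finset.univ :=
      Finset.mem_univ _
    obtain ⟨b, hb, hzb⟩ := P.1.exists_mem hz
    by_cases hy : ∃ y : Fin m, Sum.inl y ∈ b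
    · exfalso
      obtain ⟨y, hyb⟩ := hy
      -- b is σ-invariant
      have hmap := Finset.mem_map_of_mem (fmapEmb (σ m (p' + 1)).toEmbedding) hb
      rw [hparts] at hmap
      have hmape : b.map (σ m (p' + 1)).toEmbedding ∈ P.1.parts := hmap
      have hinly : Sum.inl y ∈ b.map (σ m (p' + 1)).toEmbedding := by
        rw [Finset.mem_map]
        exact ⟨Sum.inl y, hyb, rfl⟩
      have hbeq : b.map (σ m (p' + 1)).toEmbedding = b :=
        P.1.eq_of_mem_parts hmape hb hinly hyb
      have hstep : ∀ x ∈ b, σ m (p' + 1) x ∈ b := by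
        intro x hx
        rw [← hbeq]
        exact Finset.mem_map_of_mem _ hx
      have hiter : ∀ k : ℕ, ((σ m (p' + 1)) ^ k) (Sum.inr 0) ∈ b := by
        intro k
        induction k with
        | zero => simpa using hzb
        | succ k ih =>
            rw [pow_succ', Equiv.Perm.mul_apply]
            exact hstep _ ih
      have hall : ∀ j : Fin (p' + 1), Sum.inr j ∈ b := by
        intro j
        have := hiter j.val
        rw [σ_pow_inr, finRotate_pow_zero, Fin.cast_val_eq_self] at this
        exact this
      have hsubset : insert (Sum.inl y) (B0 m (p' + 1)) ⊆ b := by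
        intro x hx
        rcases Finset.mem_insert.mp hx with h | h
        · exact h ▸ hyb
        · obtain ⟨j, rfl⟩ := (mem_B0 m (p' + 1)).mp h
          exact hall j
      have hcard : p' + 1 + 1 ≤ b.card := by
        have h1 : (insert (Sum.inl y) (B0 m (p' + 1))).card = p' + 1 + 1 := by
          rw [Finset.card_insert_of_notMem, card_B0]
          rw [mem_B0]
          rintro ⟨j, hj⟩
          exact Sum.inl_ne_inr hj
        rw [← h1]
        exact Finset.card_le_card hsubset
      have hbp : b.card = p' + 1 := P.2 b hb
      omega
    · push_neg at hy
      have hsub : b ⊆ B0 m (p' + 1) := by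
        intro x hx
        cases x with
        | inl y => exact absurd hx (hy y)
        | inr j => exact (mem_B0 _ _).mpr ⟨j, rfl⟩
      have : b = B0 m (p' + 1) := by
        apply Finset.eq_of_subset_of_card_le hsub
        rw [card_B0, P.2 b hb]
      exact this ▸ hb
  · intro hB
    apply Subtype.ext
    apply Finpartition.ext
    rw [smul_parts]
    apply Finset.eq_of_subset_of_card_le
    · intro c hc
      rw [Finset.mem_map] at hc
      obtain ⟨b, hb, rfl⟩ := hc
      rw [fmapEmb_apply]
      by_cases hbB : b = B0 m p
      · subst hbB
        have : (B0 m p).map (σ m p).toEmbedding = B0 m p := by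
          apply Finset.eq_of_subset_of_card_le
          · intro x hx
            rw [Finset.mem_map] at hx
            obtain ⟨z, hz, rfl⟩ := hx
            obtain ⟨j, rfl⟩ := (mem_B0 m p).mp hz
            exact (mem_B0 m p).mpr ⟨finRotate p j, rfl⟩
          · rw [Finset.card_map]
        rw [this]; exact hB
      · have hdisj : Disjoint b (B0 m p) := P.1.disjoint hb hB hbB
        have hfixpt : ∀ x ∈ b, σ m p x = x := by
          intro x hx
          cases x with
          | inl y => rfl
          | inr j =>
              exfalso
              exact Finset.disjoint_left.mp hdisj hx ((mem_B0 m p).mpr ⟨j, rfl⟩)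
        have : b.map (σ m p).toEmbedding = b := by
          apply Finset.eq_of_subset_of_card_le
          · intro x hx
            rw [Finset.mem_map] at hx
            obtain ⟨z, hz, rfl⟩ := hx
            simp only [Equiv.toEmbedding_apply, hfixpt z hz]
            exact hz
          · rw [Finset.card_map]
        rw [this]; exact hb
    · rw [Finset.card_map]

end PMatch

namespace PMatch

variable (m p : ℕ)

/-- Left inclusion as an embedding. -/
def ι : Fin m ↪ Fin m ⊕ Fin p := ⟨Sum.inl, Sum.inl_injective⟩

@[simp] lemma ι_apply (x : Fin m) : ι m p x = Sum.inl x := rfl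

lemma disjU : Disjoint ((Finset.univ : Finset (Fin m)).map (ι m p)) (B0 m p) := by
  rw [Finset.disjoint_left]
  intro x hx hxB
  rw [Finset.mem_map] at hx
  obtain ⟨y, _, rfl⟩ := hx
  obtain ⟨j, hj⟩ := (mem_B0 m p).mp hxB
  exact Sum.inl_ne_inr hj

lemma supU : ((Finset.univ : Finset (Fin m)).map (ι m p)) ⊔ B0 m p = Finset.univ := by
  rw [Finset.sup_eq_union]
  ext x
  cases x with
  | inl y => simp [mem_B0]
  | inr j => simp [mem_B0]

lemma B0_ne_bot (hp0 : 0 < p) : B0 m p ≠ ⊥ := by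
  rw [Finset.bot_eq_empty, ← Finset.nonempty_iff_ne_empty]
  exact ⟨Sum.inr ⟨0, hp0⟩, (mem_B0 m p).mpr ⟨⟨0, hp0⟩, rfl⟩⟩

/-- Extend a matching of `Fin m` by the block `B0`. -/
def toSum (hp0 : 0 < p) (Q : Matchings p (Fin m)) :
    { P : Matchings p (Fin m ⊕ Fin p) // B0 m p ∈ P.1.parts } := by
  refine ⟨⟨(mapEmb (ι m p) Q.1).extend (B0_ne_bot m p hp0) (disjU m p) (supU m p), ?_⟩, ?_⟩
  · intro b hb
    rw [Finpartition.extend_parts, Finset.mem_insert] at hb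
    rcases hb with rfl | hb
    · exact card_B0 m p
    · rw [mem_mapEmb_parts] at hb
      obtain ⟨c, hc, rfl⟩ := hb
      rw [Finset.card_map]
      exact Q.2 c hc
  · rw [Finpartition.extend_parts]
    exact Finset.mem_insert_self _ _

lemma toSum_parts (hp0 : 0 < p) (Q : Matchings p (Fin m)) :
    (toSum m p hp0 Q).1.1.parts = insert (B0 m p) (Q.1.parts.map (fmapEmb (ι m p))) := rfl

/-- Preimage of a block under the left inclusion. -/
noncomputable def pre (b : Finset (Fin m ⊕ Fin p)) : Finset (Fin m) :=
  b.preimage Sum.inl Sum.inl_injective.injOn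

lemma mem_pre {b : Finset (Fin m ⊕ Fin p)} {x : Fin m} : x ∈ pre m p b ↔ Sum.inl x ∈ b :=
  Finset.mem_preimage

lemma all_inl {P : Finpartition (Finset.univ : Finset (Fin m ⊕ Fin p))}
    (hB : B0 m p ∈ P.parts) {b : Finset (Fin m ⊕ Fin p)}
    (hb : b ∈ P.parts.erase (B0 m p)) : ∀ x ∈ b, ∃ y, x = Sum.inl y := by
  intro x hx
  have hdisj : Disjoint b (B0 m p) :=
    P.disjoint (Finset.mem_of_mem_erase hb) hB (Finset.ne_of_mem_erase hb)
  cases x with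
  | inl y => exact ⟨y, rfl⟩
  | inr j =>
      exact absurd ((mem_B0 m p).mpr ⟨j, rfl⟩) (Finset.disjoint_left.mp hdisj hx)

lemma pre_map {P : Finpartition (Finset.univ : Finset (Fin m ⊕ Fin p))}
    (hB : B0 m p ∈ P.parts) {b : Finset (Fin m ⊕ Fin p)}
    (hb : b ∈ P.parts.erase (B0 m p)) : (pre m p b).map (ι m p) = b := by
  ext x
  rw [Finset.mem_map]
  constructor
  · rintro ⟨y, hy, rfl⟩
    exact (mem_pre m p).mp hy
  · intro hx
    obtain ⟨y, rfl⟩ := all_inl m p hB hb x hx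
    exact ⟨y, (mem_pre m p).mpr hx, rfl⟩

/-- Restrict a matching containing the block `B0` to `Fin m`. -/
noncomputable def ofSum (P : { P : Matchings p (Fin m ⊕ Fin p) // B0 m p ∈ P.1.parts }) :
    Matchings p (Fin m) := by
  refine ⟨⟨(P.1.1.parts.erase (B0 m p)).image (pre m p), ?_, ?_, ?_⟩, ?_⟩
  · rw [Finset.supIndep_iff_pairwiseDisjoint]
    rintro u hu v hv huv
    simp only [Finset.coe_image, Set.mem_image, Finset.mem_coe] at hu hv
    obtain ⟨b, hb, rfl⟩ := hu
    obtain ⟨c, hc, rfl⟩ := hv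
    simp only [Function.onFun, id]
    rw [Finset.disjoint_left]
    intro x hxb hxc
    rw [mem_pre] at hxb hxc
    have : b = c := P.1.1.eq_of_mem_parts (Finset.mem_of_mem_erase hb)
      (Finset.mem_of_mem_erase hc) hxb hxc
    exact huv (by rw [this])
  · apply Finset.eq_univ_of_forall
    intro x
    rw [Finset.mem_sup]
    obtain ⟨b, hb, hxb⟩ := P.1.1.exists_mem (Finset.mem_univ (Sum.inl x))
    have hbB : b ≠ B0 m p := by
      rintro rfl
      obtain ⟨j, hj⟩ := (mem_B0 m p).mp hxb
      exact Sum.inl_ne_inr hj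
    exact ⟨pre m p b, Finset.mem_image_of_mem _ (Finset.mem_erase.mpr ⟨hbB, hb⟩),
      (mem_pre m p).mpr hxb⟩
  · rw [Finset.bot_eq_empty]
    intro h
    rw [Finset.mem_image] at h
    obtain ⟨b, hb, hbe⟩ := h
    obtain ⟨x, hx⟩ := P.1.1.nonempty_of_mem_parts (Finset.mem_of_mem_erase hb)
    obtain ⟨y, rfl⟩ := all_inl m p P.2 hb x hx
    have : y ∈ pre m p b := (mem_pre m p).mpr hx
    rw [hbe] at this
    exact Finset.notMem_empty y this
  · intro u hu
    rw [Finset.mem_image] at hu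
    obtain ⟨b, hb, rfl⟩ := hu
    have h1 := pre_map m p P.2 hb
    have h2 : b.card = p := P.1.2 b (Finset.mem_of_mem_erase hb)
    rw [← h1, Finset.card_map] at h2
    exact h2

/-- The equivalence between matchings of `Fin m` and matchings of the sum containing `B0`. -/
noncomputable def sumMatchEquiv (hp0 : 0 < p) :
    Matchings p (Fin m) ≃ { P : Matchings p (Fin m ⊕ Fin p) // B0 m p ∈ P.1.parts } where
  toFun := toSum m p hp0
  invFun := ofSum m p
  left_inv Q := by
    apply Subtype.ext
    apply Finpartition.ext
    show ((toSum m p hp0 Q).1.1.parts.erase (B0 m p)).image (pre m p) = Q.1.parts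
    rw [toSum_parts]
    have hnotmem : B0 m p ∉ Q.1.parts.map (fmapEmb (ι m p)) := by
      rw [Finset.mem_map]
      rintro ⟨b, hb, hbe⟩
      have h0 : (Sum.inr (⟨0, hp0⟩ : Fin p) : Fin m ⊕ Fin p) ∈ B0 m p :=
        (mem_B0 m p).mpr ⟨⟨0, hp0⟩, rfl⟩
      rw [← hbe, fmapEmb_apply, Finset.mem_map] at h0
      obtain ⟨y, _, hy⟩ := h0
      exact Sum.inl_ne_inr hy
    rw [Finset.erase_insert hnotmem]
    ext c
    rw [Finset.mem_image]
    constructor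
    · rintro ⟨b, hb, rfl⟩
      rw [Finset.mem_map] at hb
      obtain ⟨a, ha, rfl⟩ := hb
      have : pre m p (a.map (ι m p)) = a := by
        ext x
        rw [mem_pre, Finset.mem_map]
        constructor
        · rintro ⟨y, hy, hxy⟩
          have : y = x := Sum.inl_injective hxy
          exact this ▸ hy
        · intro hx
          exact ⟨x, hx, rfl⟩
      rw [fmapEmb_apply, this]
      exact ha
    · intro hc
      refine ⟨c.map (ι m p), Finset.mem_map_of_mem _ hc, ?_⟩
      ext x
      rw [mem_pre, Finset.mem_map]
      constructor
      · rintro ⟨y, hy, hxy⟩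
        have : y = x := Sum.inl_injective hxy
        exact this ▸ hy
      · intro hx
        exact ⟨x, hx, rfl⟩
  right_inv P := by
    apply Subtype.ext
    apply Subtype.ext
    apply Finpartition.ext
    rw [toSum_parts]
    show insert (B0 m p) (((P.1.1.parts.erase (B0 m p)).image (pre m p)).map (fmapEmb (ι m p)))
      = P.1.1.parts
    have : ((P.1.1.parts.erase (B0 m p)).image (pre m p)).map (fmapEmb (ι m p))
        = P.1.1.parts.erase (B0 m p) := by
      ext c
      rw [Finset.mem_map]
      constructor
      · rintro ⟨u, hu, rfl⟩
        rw [Finset.mem_image] at hu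
        obtain ⟨b, hb, rfl⟩ := hu
        rw [fmapEmb_apply, pre_map m p P.2 hb]
        exact hb
      · intro hc
        exact ⟨pre m p c, Finset.mem_image_of_mem _ hc, by
          rw [fmapEmb_apply, pre_map m p P.2 hc]⟩
    rw [this, Finset.insert_erase P.2]

end PMatch

/-- **Modular recurrence for perfect p-matchings.**
For a prime p and every n > p, f_{M_p}(n) ≡ f_{M_p}(n − p) (mod p). -/
theorem perfectPMatchings_modular_recurrence (p : ℕ) (hp : p.Prime) :
    ∀ n : ℕ, p < n → perfectPMatchings p n ≡ perfectPMatchings p (n - p) [MOD p] := by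
  intro n hn
  haveI : Fact p.Prime := ⟨hp⟩
  have hp0 : 0 < p := hp.pos
  obtain ⟨m, rfl⟩ : ∃ m, n = m + p := ⟨n - p, by omega⟩
  have hsub : m + p - p = m := by omega
  rw [hsub]
  have heq1 : perfectPMatchings p (m + p) =
      Nat.card (PMatch.Matchings p (Fin m ⊕ Fin p)) := by
    exact Nat.card_congr (PMatch.matchEquiv p finSumFinEquiv.symm)
  have heq2 : perfectPMatchings p m = Nat.card (PMatch.Matchings p (Fin m)) := rfl
  rw [heq1, heq2]
  have hPG : IsPGroup p (Subgroup.zpowers (PMatch.σ m p)) := by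
    apply IsPGroup.of_card (n := 1)
    rw [Nat.card_zpowers, PMatch.orderOf_σ m p hp, pow_one]
  have h1 := hPG.card_modEq_card_fixedPoints (PMatch.Matchings p (Fin m ⊕ Fin p))
  have h2 : Nat.card (MulAction.fixedPoints (Subgroup.zpowers (PMatch.σ m p))
      (PMatch.Matchings p (Fin m ⊕ Fin p))) = Nat.card (PMatch.Matchings p (Fin m)) := by
    apply Nat.card_congr
    exact (Equiv.subtypeEquivRight (fun P =>
      (PMatch.mem_fixedPoints_zpowers_iff).trans
        (PMatch.fixed_iff m p hp.two_le P))).trans (PMatch.sumMatchEquiv m p hp0).symm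
  rw [h2] at h1
  exact h1
end
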